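/- arXiv:2201.05704 — 10 statements merged into one kernel-verified Lean document; each statement's English description precedes it below -/
import Mathlib

section
/- The variance of M is at most 2/3: ∫_{-2}^{2} (x - E(M))² M(x) dx ≤ 2/3, where E(M) = ∫_{-2}^{2} x M(x) dx. -/
open Real MeasureTheory Set

-- bounded measurable functions are interval integrable
lemma bdd_ii {h : ℝ → ℝ} (hm : Measurable h) {C : ℝ} (hb : ∀ x, |h x| ≤ C)
    (a b : ℝ) : IntervalIntegrable h volume a b := by
  apply IntegrableOn.intervalIntegrable
  refine ⟨hm.aestronglyMeasurable, ?_⟩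
  have : IsFiniteMeasure (volume.restrict (uIcc a b)) :=
    ⟨by rw [Measure.restrict_apply_univ]; exact measure_Icc_lt_top⟩
  exact HasFiniteIntegral.of_bounded (C := C) (ae_of_all _ hb)

lemma integral_comb {h1 h2 h3 : ℝ → ℝ} (a b c lo hi : ℝ)
    (i1 : IntervalIntegrable h1 volume lo hi) (i2 : IntervalIntegrable h2 volume lo hi)
    (i3 : IntervalIntegrable h3 volume lo hi) :
    ∫ x in lo..hi, (a * h1 x + b * h2 x + c * h3 x) =
      a * (∫ x in lo..hi, h1 x) + b * (∫ x in lo..hi, h2 x) + c * (∫ x in lo..hi, h3 x) := by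
  rw [intervalIntegral.integral_add ((i1.const_mul a).add (i2.const_mul b)) (i3.const_mul c),
    intervalIntegral.integral_add (i1.const_mul a) (i2.const_mul b),
    intervalIntegral.integral_const_mul, intervalIntegral.integral_const_mul,
    intervalIntegral.integral_const_mul]

lemma key_swap (f g : ℝ → ℝ) (hf_meas : Measurable f)
    (hf01 : ∀ x, 0 ≤ f x ∧ f x ≤ 1)
    (hg : ∀ x, g x = if x ∈ Icc (-1:ℝ) 1 then 1 - f x else 0)
    (p : ℝ → ℝ) (hp : Measurable p) (C : ℝ) (hC : ∀ x ∈ Icc (-2:ℝ) 2, |p x| ≤ C) :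
    ∫ x in (-2:ℝ)..2, p x * (∫ t in (-1:ℝ)..1, f t * g (x + t)) =
      ∫ t in (-1:ℝ)..1, f t * ∫ v in (-1:ℝ)..1, p (v - t) * g v := by
  have hgfun : g = fun x => if x ∈ Icc (-1:ℝ) 1 then 1 - f x else 0 := funext hg
  have hg_meas : Measurable g := by
    rw [hgfun]; exact Measurable.ite measurableSet_Icc (measurable_const.sub hf_meas) measurable_const
  have hfb : ∀ x, |f x| ≤ 1 := fun x => abs_le.2 ⟨by linarith [(hf01 x).1], (hf01 x).2⟩
  have hgb : ∀ x, |g x| ≤ 1 := by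
    intro x; rw [hg x]; split
    · exact abs_le.2 ⟨by linarith [(hf01 x).2], by linarith [(hf01 x).1]⟩
    · simp
  have h21 : ((-2):ℝ) ≤ 2 := by norm_num
  have h11 : ((-1):ℝ) ≤ 1 := by norm_num
  rw [intervalIntegral.integral_of_le h21]
  simp only [intervalIntegral.integral_of_le h11]
  simp_rw [← MeasureTheory.integral_const_mul]
  rw [MeasureTheory.integral_integral_swap (f := fun x t => p x * (f t * g (x + t)))]
  · apply setIntegral_congr_fun measurableSet_Ioc
    intro t ht
    have ht' : t ∈ Icc (-1:ℝ) 1 := ⟨le_of_lt ht.1, ht.2⟩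
    beta_reduce
    rw [← intervalIntegral.integral_of_le h21, ← intervalIntegral.integral_of_le h11]
    have heq : ∀ x, p x * (f t * g (x + t)) = f t * ((fun v => p (v - t) * g v) (x + t)) := by
      intro x; simp; ring
    simp only [heq]
    rw [intervalIntegral.integral_const_mul, intervalIntegral.integral_const_mul,
      intervalIntegral.integral_comp_add_right (fun v => p (v - t) * g v) t]
    congr 1
    rw [intervalIntegral.integral_of_le (by linarith [ht'.1, ht'.2] : (-2:ℝ) + t ≤ 2 + t),
      intervalIntegral.integral_of_le h11]
    refine setIntegral_eq_of_subset_of_ae_diff_eq_zero measurableSet_Ioc.nullMeasurableSet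
      (Ioc_subset_Ioc (by linarith [ht'.2]) (by linarith [ht'.1])) ?_
    have hne : ∀ᵐ v : ℝ, v ≠ (-1:ℝ) := by
      rw [ae_iff]
      simp only [not_ne_iff, Set.setOf_eq_eq_singleton]
      exact Real.volume_singleton
    filter_upwards [hne] with v hv hmem
    have hnot : v ∉ Icc (-1:ℝ) 1 := by
      rcases hmem with ⟨hin, hout⟩
      simp only [mem_Ioc, not_and_or, not_le, not_lt] at hout
      intro hvv
      rcases hout with h | h
      · rcases (lt_or_eq_of_le h : v < -1 ∨ v = -1) with h' | h'
        · exact absurd hvv.1 (by linarith)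
        · exact hv h'
      · exact absurd hvv.2 (by linarith)
    rw [hg v, if_neg hnot, mul_zero]
  · -- integrability for Fubini
    have : IsFiniteMeasure ((volume.restrict (Ioc (-2:ℝ) 2)).prod (volume.restrict (Ioc (-1:ℝ) 1))) := by
      constructor
      rw [Measure.prod_apply MeasurableSet.univ]
      simp [Real.volume_Ioc]
      exact ENNReal.mul_lt_top (by simp) (by simp)
    refine ⟨?_, ?_⟩
    · exact ((hp.comp measurable_fst).mul ((hf_meas.comp measurable_snd).mul
        (hg_meas.comp (measurable_fst.add measurable_snd)))).aestronglyMeasurable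
    · apply HasFiniteIntegral.of_bounded (C := |C|)
      rw [Measure.prod_restrict]
      refine (ae_restrict_iff' (measurableSet_Ioc.prod measurableSet_Ioc)).2 (ae_of_all _ ?_)
      rintro ⟨x, t⟩ ⟨hx, _⟩
      have h1 : |p x| ≤ C := hC x ⟨le_of_lt hx.1, hx.2⟩
      calc ‖p x * (f t * g (x + t))‖ = |p x| * (|f t| * |g (x + t)|) := by
            simp [Function.uncurry, abs_mul]
        _ ≤ |C| * (1 * 1) := by
            apply mul_le_mul (h1.trans (le_abs_self C)) ?_ (by positivity) (abs_nonneg _)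
            exact mul_le_mul (hfb t) (hgb _) (abs_nonneg _) zero_le_one
        _ = |C| := by ring

theorem variance_of_M_le (f g M : ℝ → ℝ)
    (hf_meas : Measurable f)
    (hf01 : ∀ x ∈ Icc (-1:ℝ) 1, 0 ≤ f x ∧ f x ≤ 1)
    (hf_supp : ∀ x, x ∉ Icc (-1:ℝ) 1 → f x = 0)
    (hf_int : ∫ x in (-1:ℝ)..1, f x = 1)
    (hg : ∀ x, g x = if x ∈ Icc (-1:ℝ) 1 then 1 - f x else 0)
    (hM : ∀ x, M x = ∫ t in (-1:ℝ)..1, f t * g (x + t))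
    (EM : ℝ) (hEM : EM = ∫ x in (-2:ℝ)..2, x * M x) :
    ∫ x in (-2:ℝ)..2, (x - EM)^2 * M x ≤ 2/3 := by
  -- global bounds
  have hf01' : ∀ x, 0 ≤ f x ∧ f x ≤ 1 := by
    intro x
    by_cases hx : x ∈ Icc (-1:ℝ) 1
    · exact hf01 x hx
    · rw [hf_supp x hx]; norm_num
  have hgfun : g = fun x => if x ∈ Icc (-1:ℝ) 1 then 1 - f x else 0 := funext hg
  have hg_meas : Measurable g := by
    rw [hgfun]; exact Measurable.ite measurableSet_Icc (measurable_const.sub hf_meas) measurable_const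
  have hfb : ∀ x, |f x| ≤ 1 := fun x => abs_le.2 ⟨by linarith [(hf01' x).1], (hf01' x).2⟩
  have hgb : ∀ x, |g x| ≤ 1 := by
    intro x; rw [hg x]; split
    · rename_i h
      exact abs_le.2 ⟨by linarith [(hf01' x).2], by linarith [(hf01' x).1]⟩
    · simp
  have hg_supp : ∀ v, v ∉ Icc (-1:ℝ) 1 → g v = 0 := by
    intro v hv; rw [hg v, if_neg hv]
  -- interval integrability
  have iif : IntervalIntegrable f volume (-1) 1 := bdd_ii hf_meas hfb _ _
  have iif1 : IntervalIntegrable (fun t => t * f t) volume (-1) 1 := by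
    apply bdd_ii (measurable_id.mul hf_meas) (C := 1) _ _
    intro x
    show |x * f x| ≤ 1
    by_cases hx : x ∈ Icc (-1:ℝ) 1
    · rw [abs_mul]
      calc |x| * |f x| ≤ 1 * 1 := mul_le_mul (abs_le.2 ⟨hx.1, hx.2⟩) (hfb x) (abs_nonneg _) zero_le_one
        _ = 1 := by ring
    · rw [hf_supp x hx]; simp
  have iif2 : IntervalIntegrable (fun t => t^2 * f t) volume (-1) 1 := by
    apply bdd_ii ((measurable_id.pow_const 2).mul hf_meas) (C := 1) _ _
    intro x
    show |x^2 * f x| ≤ 1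
    by_cases hx : x ∈ Icc (-1:ℝ) 1
    · rw [abs_mul]
      have : |x^2| ≤ 1 := by
        rw [abs_of_nonneg (sq_nonneg _)]
        nlinarith [hx.1, hx.2]
      calc |x^2| * |f x| ≤ 1 * 1 := mul_le_mul this (hfb x) (abs_nonneg _) zero_le_one
        _ = 1 := by ring
    · rw [hf_supp x hx]; simp
  have iig : IntervalIntegrable g volume (-1) 1 := bdd_ii hg_meas hgb _ _
  have iig1 : IntervalIntegrable (fun v => v * g v) volume (-1) 1 := by
    apply bdd_ii (measurable_id.mul hg_meas) (C := 1) _ _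
    intro x
    show |x * g x| ≤ 1
    by_cases hx : x ∈ Icc (-1:ℝ) 1
    · rw [abs_mul]
      calc |x| * |g x| ≤ 1 * 1 := mul_le_mul (abs_le.2 ⟨hx.1, hx.2⟩) (hgb x) (abs_nonneg _) zero_le_one
        _ = 1 := by ring
    · rw [hg_supp x hx]; simp
  have iig2 : IntervalIntegrable (fun v => v^2 * g v) volume (-1) 1 := by
    apply bdd_ii ((measurable_id.pow_const 2).mul hg_meas) (C := 1) _ _
    intro x
    show |x^2 * g x| ≤ 1
    by_cases hx : x ∈ Icc (-1:ℝ) 1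
    · rw [abs_mul]
      have : |x^2| ≤ 1 := by
        rw [abs_of_nonneg (sq_nonneg _)]
        nlinarith [hx.1, hx.2]
      calc |x^2| * |g x| ≤ 1 * 1 := mul_le_mul this (hgb x) (abs_nonneg _) zero_le_one
        _ = 1 := by ring
    · rw [hg_supp x hx]; simp
  -- moments
  set μf := ∫ t in (-1:ℝ)..1, t * f t with hμf
  set sf := ∫ t in (-1:ℝ)..1, t^2 * f t with hsf
  -- g relations
  have hm : ∫ v in (-1:ℝ)..1, g v = 1 := by
    have : ∫ v in (-1:ℝ)..1, g v = ∫ v in (-1:ℝ)..1, (1 - f v) := by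
      apply intervalIntegral.integral_congr
      intro v hv
      rw [uIcc_of_le (by norm_num : ((-1):ℝ) ≤ 1)] at hv
      rw [hg v, if_pos hv]
    rw [this, intervalIntegral.integral_sub intervalIntegrable_const iif, hf_int]
    simp
  have hμg : ∫ v in (-1:ℝ)..1, v * g v = -μf := by
    have : ∫ v in (-1:ℝ)..1, v * g v = ∫ v in (-1:ℝ)..1, (v - v * f v) := by
      apply intervalIntegral.integral_congr
      intro v hv
      rw [uIcc_of_le (by norm_num : ((-1):ℝ) ≤ 1)] at hv
      beta_reduce
      rw [hg v, if_pos hv]; ring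
    rw [this, intervalIntegral.integral_sub (intervalIntegral.intervalIntegrable_id) iif1,
      integral_id, hμf]
    norm_num
  have hsg : ∫ v in (-1:ℝ)..1, v^2 * g v = 2/3 - sf := by
    have : ∫ v in (-1:ℝ)..1, v^2 * g v = ∫ v in (-1:ℝ)..1, (v^2 - v^2 * f v) := by
      apply intervalIntegral.integral_congr
      intro v hv
      rw [uIcc_of_le (by norm_num : ((-1):ℝ) ≤ 1)] at hv
      beta_reduce
      rw [hg v, if_pos hv]; ring
    rw [this, intervalIntegral.integral_sub (intervalIntegral.intervalIntegrable_pow 2) iif2]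
    rw [integral_pow, hsf]
    norm_num
  -- compute EM
  have hid_inner : ∀ t : ℝ, (∫ v in (-1:ℝ)..1, (v - t) * g v) = -μf - t := by
    intro t
    rw [intervalIntegral.integral_congr
        (g := fun v => 1 * (v * g v) + (-t) * (g v) + 0 * (v ^ 2 * g v))
        (fun v _ => by beta_reduce; ring),
      integral_comb 1 (-t) 0 (-1) 1 iig1 iig iig2, hμg, hm, hsg]
    ring
  have hEM' : EM = -2 * μf := by
    rw [hEM]
    have h1 : ∫ x in (-2:ℝ)..2, x * M x
        = ∫ t in (-1:ℝ)..1, f t * ∫ v in (-1:ℝ)..1, (v - t) * g v := by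
      simp only [hM]
      exact key_swap f g hf_meas hf01' hg (fun x => x) measurable_id 2
        (fun x hx => abs_le.2 ⟨hx.1, hx.2⟩)
    rw [h1]
    simp only [hid_inner]
    rw [intervalIntegral.integral_congr
        (g := fun t => (-μf) * (f t) + (-1) * (t * f t) + 0 * (t ^ 2 * f t))
        (fun t _ => by beta_reduce; ring),
      integral_comb (-μf) (-1) 0 (-1) 1 iif iif1 iif2, hf_int, ← hμf, ← hsf]
    ring
  -- compute variance
  have hsq_inner : ∀ t : ℝ, (∫ v in (-1:ℝ)..1, (v - t - EM) ^ 2 * g v)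
      = (-(2 * (t + EM))) * (-μf) + ((t + EM) ^ 2) * 1 + 1 * (2 / 3 - sf) := by
    intro t
    rw [intervalIntegral.integral_congr
        (g := fun v => (-(2 * (t + EM))) * (v * g v) + ((t + EM) ^ 2) * (g v)
          + 1 * (v ^ 2 * g v))
        (fun v _ => by beta_reduce; ring),
      integral_comb _ _ _ _ _ iig1 iig iig2, hμg, hm, hsg]
  have hvar : ∫ x in (-2:ℝ)..2, (x - EM) ^ 2 * M x
      = ∫ t in (-1:ℝ)..1, f t * ∫ v in (-1:ℝ)..1, (v - t - EM) ^ 2 * g v := by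
    simp only [hM]
    exact key_swap f g hf_meas hf01' hg (fun x => (x - EM) ^ 2)
      ((measurable_id.sub measurable_const).pow_const 2) ((2 + |EM|) ^ 2)
      (fun x hx => by
        beta_reduce
        rw [abs_of_nonneg (sq_nonneg _)]
        have h1 : |x - EM| ≤ 2 + |EM| := by
          have h2 := le_abs_self EM
          have h3 := neg_abs_le EM
          rw [abs_le]; constructor <;> [linarith [hx.1]; linarith [hx.2]]
        calc (x - EM) ^ 2 = |x - EM| ^ 2 := (sq_abs _).symm
          _ ≤ (2 + |EM|) ^ 2 := pow_le_pow_left₀ (abs_nonneg _) h1 2)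
  rw [hvar]
  simp only [hsq_inner]
  rw [intervalIntegral.integral_congr
      (g := fun t => (2 * EM * μf + EM ^ 2 + 2 / 3 - sf) * (f t)
        + (2 * μf + 2 * EM) * (t * f t) + 1 * (t ^ 2 * f t))
      (fun t _ => by beta_reduce; ring),
    integral_comb _ _ _ _ _ iif iif1 iif2, hf_int, ← hμf, ← hsf, hEM']
  nlinarith [sq_nonneg μf]
end

section
/- (Moser's bound) The supremum of M over [-2,2] is at least 1/√8, i.e. sup_{x ∈ [-2,2]} M(x) ≥ 1/√8. -/
open Real MeasureTheory Set

lemma tent_integrable (c e : ℝ) (hc : 0 ≤ c) :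
    Integrable (fun x : ℝ => max (c - |x - e|) 0) := by
  apply Continuous.integrable_of_hasCompactSupport
  · exact (continuous_const.sub (continuous_id.sub continuous_const).abs).max continuous_const
  · apply HasCompactSupport.intro (isCompact_Icc (a := e - c) (b := e + c))
    intro x hx
    simp only [mem_Icc, not_and_or, not_le] at hx
    have : c - |x - e| ≤ 0 := by
      rcases hx with h | h
      · rw [abs_of_neg (by linarith)]; linarith
      · rw [abs_of_pos (by linarith)]; linarith
    simp [max_eq_right this]

lemma tent_integral (c e : ℝ) (hc : 0 ≤ c) :
    ∫ x : ℝ, max (c - |x - e|) 0 = c ^ 2 := by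
  have h1 : (∫ x : ℝ, max (c - |x - e|) 0) = ∫ x : ℝ, max (c - |x|) 0 :=
    integral_sub_right_eq_self (fun y => max (c - |y|) 0) e
  rw [h1]
  have hind : (fun x : ℝ => max (c - |x|) 0)
      = (Icc (-c) c).indicator (fun x => max (c - |x|) 0) := by
    funext x
    by_cases hx : x ∈ Icc (-c) c
    · rw [Set.indicator_of_mem hx]
    · rw [Set.indicator_of_notMem hx]
      simp only [mem_Icc, not_and_or, not_le] at hx
      have : c - |x| ≤ 0 := by
        rcases hx with h | h
        · rw [abs_of_neg (by linarith)]; linarith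
        · rw [abs_of_pos (by linarith)]; linarith
      simp [max_eq_right this]
  rw [hind, integral_indicator measurableSet_Icc, integral_Icc_eq_integral_Ioc,
    ← intervalIntegral.integral_of_le (by linarith : -c ≤ c)]
  have hi1 : IntervalIntegrable (fun x : ℝ => max (c - |x|) 0) volume (-c) 0 :=
    ((continuous_const.sub continuous_abs).max continuous_const).intervalIntegrable _ _
  have hi2 : IntervalIntegrable (fun x : ℝ => max (c - |x|) 0) volume 0 c :=
    ((continuous_const.sub continuous_abs).max continuous_const).intervalIntegrable _ _
  rw [← intervalIntegral.integral_add_adjacent_intervals hi1 hi2]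
  have e1 : (∫ x in (-c)..(0:ℝ), max (c - |x|) 0) = ∫ x in (-c)..(0:ℝ), (c + x) := by
    apply intervalIntegral.integral_congr
    intro x hx
    rw [Set.uIcc_of_le (by linarith : -c ≤ (0:ℝ)), mem_Icc] at hx
    show max (c - |x|) 0 = c + x
    rw [abs_of_nonpos (by linarith [hx.1, hx.2]), max_eq_left (by linarith [hx.1, hx.2])]
    ring
  have e2 : (∫ x in (0:ℝ)..c, max (c - |x|) 0) = ∫ x in (0:ℝ)..c, (c - x) := by
    apply intervalIntegral.integral_congr
    intro x hx
    rw [Set.uIcc_of_le (by linarith : (0:ℝ) ≤ c), mem_Icc] at hx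
    show max (c - |x|) 0 = c - x
    rw [abs_of_nonneg (by linarith [hx.1, hx.2]), max_eq_left (by linarith [hx.1, hx.2])]
  rw [e1, e2]
  have v1 : (∫ x in (-c)..(0:ℝ), (c + x)) = c ^ 2 / 2 := by
    rw [intervalIntegral.integral_add intervalIntegrable_const
      (intervalIntegral.intervalIntegrable_id)]
    rw [intervalIntegral.integral_const, integral_id]
    simp; ring
  have v2 : (∫ x in (0:ℝ)..c, (c - x)) = c ^ 2 / 2 := by
    rw [intervalIntegral.integral_sub intervalIntegrable_const
      (intervalIntegral.intervalIntegrable_id)]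
    rw [intervalIntegral.integral_const, integral_id]
    simp; ring
  rw [v1, v2]; ring

lemma parab_integrable (d e : ℝ) (hd : 0 ≤ d) :
    Integrable (fun x : ℝ => max (d ^ 2 - (x - e) ^ 2) 0) := by
  apply Continuous.integrable_of_hasCompactSupport
  · exact (continuous_const.sub ((continuous_id.sub continuous_const).pow 2)).max continuous_const
  · apply HasCompactSupport.intro (isCompact_Icc (a := e - d) (b := e + d))
    intro x hx
    simp only [mem_Icc, not_and_or, not_le] at hx
    have : d ^ 2 - (x - e) ^ 2 ≤ 0 := by
      rcases hx with h | h <;> nlinarith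
    simp [max_eq_right this]

lemma parab_integral (d e : ℝ) (hd : 0 ≤ d) :
    ∫ x : ℝ, max (d ^ 2 - (x - e) ^ 2) 0 = 4 / 3 * d ^ 3 := by
  have h1 : (∫ x : ℝ, max (d ^ 2 - (x - e) ^ 2) 0) = ∫ x : ℝ, max (d ^ 2 - x ^ 2) 0 :=
    integral_sub_right_eq_self (fun y => max (d ^ 2 - y ^ 2) 0) e
  rw [h1]
  have hind : (fun x : ℝ => max (d ^ 2 - x ^ 2) 0)
      = (Icc (-d) d).indicator (fun x => max (d ^ 2 - x ^ 2) 0) := by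
    funext x
    by_cases hx : x ∈ Icc (-d) d
    · rw [Set.indicator_of_mem hx]
    · rw [Set.indicator_of_notMem hx]
      simp only [mem_Icc, not_and_or, not_le] at hx
      have : d ^ 2 - x ^ 2 ≤ 0 := by rcases hx with h | h <;> nlinarith
      simp [max_eq_right this]
  rw [hind, integral_indicator measurableSet_Icc, integral_Icc_eq_integral_Ioc,
    ← intervalIntegral.integral_of_le (by linarith : -d ≤ d)]
  have e1 : (∫ x in (-d)..d, max (d ^ 2 - x ^ 2) 0) = ∫ x in (-d)..d, (d ^ 2 - x ^ 2) := by
    apply intervalIntegral.integral_congr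
    intro x hx
    rw [Set.uIcc_of_le (by linarith : -d ≤ d), mem_Icc] at hx
    show max (d ^ 2 - x ^ 2) 0 = d ^ 2 - x ^ 2
    have : 0 ≤ d ^ 2 - x ^ 2 := by nlinarith [hx.1, hx.2]
    rw [max_eq_left this]
  rw [e1]
  rw [intervalIntegral.integral_sub intervalIntegrable_const
    ((continuous_pow 2).intervalIntegrable _ _)]
  rw [intervalIntegral.integral_const, integral_pow]
  push_cast
  ring_nf

lemma sqrt8_aux (u : ℝ) (hu : 0 < u) (h1 : 1 ≤ 8 * u ^ 2) : 1 / Real.sqrt 8 ≤ u := by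
  have h8pos : (0:ℝ) < Real.sqrt 8 := Real.sqrt_pos.mpr (by norm_num)
  have hsq8 : Real.sqrt 8 ^ 2 = 8 := Real.sq_sqrt (by norm_num)
  rw [div_le_iff₀ h8pos]
  have husq : (u * Real.sqrt 8) ^ 2 = 8 * u ^ 2 := by rw [mul_pow, hsq8]; ring
  nlinarith [husq, h1, mul_pos hu h8pos]

set_option maxHeartbeats 2000000 in
theorem moser_bound (f g M : ℝ → ℝ)
    (hf_meas : Measurable f)
    (hf01 : ∀ x ∈ Icc (-1:ℝ) 1, 0 ≤ f x ∧ f x ≤ 1)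
    (hf_supp : ∀ x, x ∉ Icc (-1:ℝ) 1 → f x = 0)
    (hf_int : ∫ x in (-1:ℝ)..1, f x = 1)
    (hg : ∀ x, g x = if x ∈ Icc (-1:ℝ) 1 then 1 - f x else 0)
    (hM : ∀ x, M x = ∫ t in (-1:ℝ)..1, f t * g (x + t)) :
    sSup (M '' Icc (-2:ℝ) 2) ≥ 1 / Real.sqrt 8 := by
  -- ## basic pointwise facts
  have hf0 : ∀ t, 0 ≤ f t := by
    intro t
    by_cases ht : t ∈ Icc (-1:ℝ) 1
    · exact (hf01 t ht).1
    · rw [hf_supp t ht]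
  have hf1 : ∀ t, f t ≤ 1 := by
    intro t
    by_cases ht : t ∈ Icc (-1:ℝ) 1
    · exact (hf01 t ht).2
    · rw [hf_supp t ht]; norm_num
  have hg0 : ∀ u, 0 ≤ g u := by
    intro u; rw [hg]
    by_cases hu : u ∈ Icc (-1:ℝ) 1
    · rw [if_pos hu]; linarith [hf1 u]
    · rw [if_neg hu]
  have hg1 : ∀ u, g u ≤ 1 := by
    intro u; rw [hg]
    by_cases hu : u ∈ Icc (-1:ℝ) 1
    · rw [if_pos hu]; linarith [hf0 u]
    · rw [if_neg hu]; norm_num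
  have hg_supp : ∀ u, u ∉ Icc (-1:ℝ) 1 → g u = 0 := by
    intro u hu; rw [hg, if_neg hu]
  have hg_meas : Measurable g := by
    have : g = fun u => if u ∈ Icc (-1:ℝ) 1 then 1 - f u else 0 := funext hg
    rw [this]
    exact Measurable.ite measurableSet_Icc (measurable_const.sub hf_meas) measurable_const
  -- ## integrability over ℝ of functions supported in [-1,1] and bounded by 1
  have ind1_int : Integrable ((Icc (-1:ℝ) 1).indicator fun _ => (1:ℝ)) := by
    rw [integrable_indicator_iff measurableSet_Icc]
    exact integrableOn_const (by rw [Real.volume_Icc]; exact ENNReal.ofReal_ne_top) (by simp)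
  have ind2_int : Integrable ((Icc (-2:ℝ) 2).indicator fun _ => (1:ℝ)) := by
    rw [integrable_indicator_iff measurableSet_Icc]
    exact integrableOn_const (by rw [Real.volume_Icc]; exact ENNReal.ofReal_ne_top) (by simp)
  have int1 : ∀ h : ℝ → ℝ, Measurable h → (∀ t, t ∉ Icc (-1:ℝ) 1 → h t = 0) →
      (∀ t ∈ Icc (-1:ℝ) 1, |h t| ≤ 1) → Integrable h := by
    intro h hm hs hb
    apply Integrable.mono' ind1_int hm.aestronglyMeasurable
    apply ae_of_all
    intro t
    by_cases ht : t ∈ Icc (-1:ℝ) 1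
    · rw [Set.indicator_of_mem ht, Real.norm_eq_abs]; exact hb t ht
    · rw [Set.indicator_of_notMem ht, Real.norm_eq_abs, hs t ht]; simp
  have hfint : Integrable f := by
    apply int1 f hf_meas hf_supp
    intro t ht; rw [abs_of_nonneg (hf0 t)]; exact hf1 t
  have hgint : Integrable g := by
    apply int1 g hg_meas hg_supp
    intro t _; rw [abs_of_nonneg (hg0 t)]; exact hg1 t
  have htfint : Integrable (fun t => t * f t) := by
    apply int1 _ (show Measurable (fun t => id t * f t) from measurable_id.mul hf_meas)
    · intro t ht; rw [hf_supp t ht]; ring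
    · intro t ht
      simp only [id_eq]
      rw [abs_mul]
      rw [mem_Icc] at ht
      have h1 : |t| ≤ 1 := abs_le.2 ⟨ht.1, ht.2⟩
      have h2 : |f t| ≤ 1 := by rw [abs_of_nonneg (hf0 t)]; exact hf1 t
      nlinarith [abs_nonneg t, abs_nonneg (f t)]
  have ht2fint : Integrable (fun t => t ^ 2 * f t) := by
    apply int1 _ (show Measurable (fun t => id t ^ 2 * f t) from (measurable_id.pow_const 2).mul hf_meas)
    · intro t ht; rw [hf_supp t ht]; ring
    · intro t ht
      simp only [id_eq]
      rw [abs_mul]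
      rw [mem_Icc] at ht
      have h1 : |t ^ 2| ≤ 1 := by rw [abs_pow]; nlinarith [abs_le.2 ⟨ht.1, ht.2⟩, abs_nonneg t]
      have h2 : |f t| ≤ 1 := by rw [abs_of_nonneg (hf0 t)]; exact hf1 t
      nlinarith [abs_nonneg (t ^ 2), abs_nonneg (f t)]
  have htgint : Integrable (fun u => u * g u) := by
    apply int1 _ (show Measurable (fun u => id u * g u) from measurable_id.mul hg_meas)
    · intro u hu; rw [hg_supp u hu]; ring
    · intro u hu
      simp only [id_eq]
      rw [abs_mul, mem_Icc] at *
      have h1 : |u| ≤ 1 := abs_le.2 ⟨hu.1, hu.2⟩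
      have h2 : |g u| ≤ 1 := by rw [abs_of_nonneg (hg0 u)]; exact hg1 u
      nlinarith [abs_nonneg u, abs_nonneg (g u)]
  have ht2gint : Integrable (fun u => u ^ 2 * g u) := by
    apply int1 _ (show Measurable (fun u => id u ^ 2 * g u) from (measurable_id.pow_const 2).mul hg_meas)
    · intro u hu; rw [hg_supp u hu]; ring
    · intro u hu
      simp only [id_eq]
      rw [abs_mul, mem_Icc] at *
      have h1 : |u ^ 2| ≤ 1 := by rw [abs_pow]; nlinarith [abs_le.2 ⟨hu.1, hu.2⟩, abs_nonneg u]
      have h2 : |g u| ≤ 1 := by rw [abs_of_nonneg (hg0 u)]; exact hg1 u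
      nlinarith [abs_nonneg (u ^ 2), abs_nonneg (g u)]
  -- ## converting interval integrals
  have conv : ∀ h : ℝ → ℝ, (∀ t, t ∉ Icc (-1:ℝ) 1 → h t = 0) →
      (∫ t in (-1:ℝ)..1, h t) = ∫ t, h t := by
    intro h hs
    rw [intervalIntegral.integral_of_le (by norm_num : (-1:ℝ) ≤ 1)]
    rw [← integral_Icc_eq_integral_Ioc]
    have : h = (Icc (-1:ℝ) 1).indicator h := by
      funext t
      by_cases ht : t ∈ Icc (-1:ℝ) 1
      · rw [Set.indicator_of_mem ht]
      · rw [Set.indicator_of_notMem ht, hs t ht]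
    conv_rhs => rw [this]
    rw [integral_indicator measurableSet_Icc]
  -- ## values of 1D integrals
  have hIf : (∫ t, f t) = 1 := by rw [← conv f hf_supp]; exact hf_int
  have hIg : (∫ u, g u) = 1 := by
    rw [← conv g hg_supp]
    have : (∫ u in (-1:ℝ)..1, g u) = ∫ u in (-1:ℝ)..1, (1 - f u) := by
      apply intervalIntegral.integral_congr
      intro u hu
      rw [Set.uIcc_of_le (by norm_num : (-1:ℝ) ≤ 1)] at hu
      show g u = 1 - f u
      rw [hg, if_pos hu]
    rw [this, intervalIntegral.integral_sub intervalIntegrable_const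
      (hfint.intervalIntegrable), intervalIntegral.integral_const, hf_int]
    norm_num
  set a : ℝ := ∫ t, t * f t with ha
  set b : ℝ := ∫ t, t ^ 2 * f t with hb
  have hIug : (∫ u, u * g u) = -a := by
    rw [← conv _ (fun u hu => by rw [hg_supp u hu]; ring)]
    have h1 : (∫ u in (-1:ℝ)..1, u * g u) = ∫ u in (-1:ℝ)..1, (u - u * f u) := by
      apply intervalIntegral.integral_congr
      intro u hu
      rw [Set.uIcc_of_le (by norm_num : (-1:ℝ) ≤ 1)] at hu
      show u * g u = u - u * f u
      rw [hg, if_pos hu]; ring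
    rw [h1, intervalIntegral.integral_sub (intervalIntegral.intervalIntegrable_id)
      (htfint.intervalIntegrable), integral_id]
    have : (∫ u in (-1:ℝ)..1, u * f u) = a := by
      rw [ha, ← conv _ (fun u hu => by rw [hf_supp u hu]; ring)]
    rw [this]; norm_num
  have hIu2g : (∫ u, u ^ 2 * g u) = 2 / 3 - b := by
    rw [← conv _ (fun u hu => by rw [hg_supp u hu]; ring)]
    have h1 : (∫ u in (-1:ℝ)..1, u ^ 2 * g u) = ∫ u in (-1:ℝ)..1, (u ^ 2 - u ^ 2 * f u) := by
      apply intervalIntegral.integral_congr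
      intro u hu
      rw [Set.uIcc_of_le (by norm_num : (-1:ℝ) ≤ 1)] at hu
      show u ^ 2 * g u = u ^ 2 - u ^ 2 * f u
      rw [hg, if_pos hu]; ring
    rw [h1, intervalIntegral.integral_sub ((continuous_pow 2).intervalIntegrable _ _)
      (ht2fint.intervalIntegrable), integral_pow]
    have : (∫ u in (-1:ℝ)..1, u ^ 2 * f u) = b := by
      rw [hb, ← conv _ (fun u hu => by rw [hf_supp u hu]; ring)]
    rw [this]; norm_num
  -- ## M facts
  have hM' : ∀ x, M x = ∫ t, f t * g (x + t) := by
    intro x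
    rw [hM x, conv _ (fun t ht => by rw [hf_supp t ht]; ring)]
  have hintx : ∀ x, Integrable (fun t => f t * g (x + t)) := by
    intro x
    refine int1 _ ?_ ?_ ?_
    · exact hf_meas.mul (hg_meas.comp (measurable_const.add measurable_id))
    · intro t ht; rw [hf_supp t ht]; ring
    · intro t _
      rw [abs_mul]
      have h2 : |g (x + t)| ≤ 1 := by rw [abs_of_nonneg (hg0 _)]; exact hg1 _
      have h1 : |f t| ≤ 1 := by rw [abs_of_nonneg (hf0 t)]; exact hf1 t
      nlinarith [abs_nonneg (f t), abs_nonneg (g (x + t))]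
  have hM_nonneg : ∀ x, 0 ≤ M x := by
    intro x; rw [hM' x]
    exact integral_nonneg (fun t => mul_nonneg (hf0 t) (hg0 _))
  have hM_le_one : ∀ x, M x ≤ 1 := by
    intro x; rw [hM' x, ← hIf]
    apply integral_mono (hintx x) hfint
    intro t
    calc f t * g (x + t) ≤ f t * 1 := mul_le_mul_of_nonneg_left (hg1 _) (hf0 t)
    _ = f t := by ring
  have hM_zero : ∀ x, x ∉ Icc (-2:ℝ) 2 → M x = 0 := by
    intro x hx
    rw [hM' x]
    have : (fun t => f t * g (x + t)) = fun _ => (0:ℝ) := by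
      funext t
      by_cases ht : t ∈ Icc (-1:ℝ) 1
      · have : g (x + t) = 0 := by
          apply hg_supp
          rw [mem_Icc] at *
          simp only [mem_Icc, not_and_or, not_le] at hx
          intro hmem
          rcases hx with h | h
          · linarith [ht.1, hmem.1]
          · linarith [ht.2, hmem.2]
        rw [this]; ring
      · rw [hf_supp t ht]; ring
    rw [this, integral_zero]
  set s : ℝ := sSup (M '' Icc (-2:ℝ) 2) with hsdef
  have hbdd : BddAbove (M '' Icc (-2:ℝ) 2) := by
    refine ⟨1, ?_⟩
    rintro y ⟨x, _, rfl⟩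
    exact hM_le_one x
  have hs_ub : ∀ x ∈ Icc (-2:ℝ) 2, M x ≤ s := fun x hx => le_csSup hbdd ⟨x, hx, rfl⟩
  have hs0 : 0 ≤ s := le_trans (hM_nonneg 0) (hs_ub 0 (by norm_num))
  have hMle : ∀ x, M x ≤ s := by
    intro x
    by_cases hx : x ∈ Icc (-2:ℝ) 2
    · exact hs_ub x hx
    · rw [hM_zero x hx]; exact hs0
  -- ## the master Fubini lemma
  have key : ∀ w : ℝ → ℝ, Measurable w → ∀ K : ℝ, 0 ≤ K →
      (∀ x ∈ Icc (-2:ℝ) 2, |w x| ≤ K) →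
      Integrable (fun x => w x * M x) ∧
        (∫ x, w x * M x) = ∫ t, f t * ∫ u, w (u - t) * g u := by
    intro w hw K hK0 hKb
    have hFmeas : Measurable (fun p : ℝ × ℝ => w p.1 * (f p.2 * g (p.1 + p.2))) :=
      (hw.comp measurable_fst).mul ((hf_meas.comp measurable_snd).mul
        (hg_meas.comp (measurable_fst.add measurable_snd)))
    have hBint : Integrable (fun p : ℝ × ℝ =>
        K * (((Icc (-2:ℝ) 2).indicator (fun _ => (1:ℝ)) p.1) *
             ((Icc (-1:ℝ) 1).indicator (fun _ => (1:ℝ)) p.2))) :=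
      (ind2_int.mul_prod ind1_int).const_mul K
    have hbound : ∀ p : ℝ × ℝ, ‖w p.1 * (f p.2 * g (p.1 + p.2))‖ ≤
        K * (((Icc (-2:ℝ) 2).indicator (fun _ => (1:ℝ)) p.1) *
             ((Icc (-1:ℝ) 1).indicator (fun _ => (1:ℝ)) p.2)) := by
      rintro ⟨x, t⟩
      simp only
      have hrhs0 : ∀ x' t' : ℝ, 0 ≤ K * (((Icc (-2:ℝ) 2).indicator (fun _ => (1:ℝ)) x') *
          ((Icc (-1:ℝ) 1).indicator (fun _ => (1:ℝ)) t')) := by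
        intro x' t'
        apply mul_nonneg hK0
        apply mul_nonneg <;>
          exact Set.indicator_nonneg (fun _ _ => by norm_num) _
      by_cases ht : t ∈ Icc (-1:ℝ) 1
      · by_cases hx : x ∈ Icc (-2:ℝ) 2
        · rw [Set.indicator_of_mem hx, Set.indicator_of_mem ht, Real.norm_eq_abs, abs_mul]
          have h1 : |f t * g (x + t)| ≤ 1 := by
            rw [abs_mul]
            have ha1 : |f t| ≤ 1 := by rw [abs_of_nonneg (hf0 t)]; exact hf1 t
            have ha2 : |g (x + t)| ≤ 1 := by rw [abs_of_nonneg (hg0 _)]; exact hg1 _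
            nlinarith [abs_nonneg (f t), abs_nonneg (g (x + t))]
          calc |w x| * |f t * g (x + t)| ≤ K * 1 :=
              mul_le_mul (hKb x hx) h1 (abs_nonneg _) hK0
          _ = K * ((1:ℝ) * 1) := by ring
        · have hgz : g (x + t) = 0 := by
            apply hg_supp
            rw [mem_Icc] at ht
            simp only [mem_Icc, not_and_or, not_le] at hx
            intro hmem
            rw [mem_Icc] at hmem
            rcases hx with h | h
            · linarith [ht.1, hmem.1]
            · linarith [ht.2, hmem.2]
          rw [hgz]
          simp only [mul_zero, norm_zero]
          exact hrhs0 x t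
      · rw [hf_supp t ht]
        simp only [zero_mul, mul_zero, norm_zero]
        exact hrhs0 x t
    have hFint : Integrable (fun p : ℝ × ℝ => w p.1 * (f p.2 * g (p.1 + p.2))) :=
      Integrable.mono' hBint hFmeas.aestronglyMeasurable (ae_of_all _ hbound)
    have hrep : (fun x => w x * M x) = fun x => ∫ t, w x * (f t * g (x + t)) := by
      funext x
      rw [hM' x, integral_const_mul]
    constructor
    · rw [hrep]
      exact hFint.integral_prod_left
    · rw [hrep]
      rw [MeasureTheory.integral_integral_swap (f := fun x t => w x * (f t * g (x + t))) hFint]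
      apply integral_congr_ae
      apply ae_of_all
      intro t
      show (∫ x, w x * (f t * g (x + t))) = f t * ∫ u, w (u - t) * g u
      have h1 : (fun x => w x * (f t * g (x + t))) = fun x => f t * (w x * g (x + t)) := by
        funext x; ring
      rw [h1, integral_const_mul]
      congr 1
      have h2 : (fun x => w x * g (x + t)) = fun x => (fun u => w (u - t) * g u) (x + t) := by
        funext x
        simp only [add_sub_cancel_right]
      rw [h2]
      exact integral_add_right_eq_self (fun u => w (u - t) * g u) t
  -- ## moments
  have key0 := key (fun _ => 1) measurable_const 1 (by norm_num) (by intro x _; norm_num)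
  have hMint : Integrable M := by
    have := key0.1; simpa using this
  have hm0 : (∫ x, M x) = 1 := by
    have h := key0.2
    simp only [one_mul] at h
    rw [h, hIg]
    simp [hIf]
  have key1 := key (fun x => x) measurable_id 2 (by norm_num)
    (by intro x hx; rw [mem_Icc] at hx; exact abs_le.2 ⟨by linarith [hx.1], by linarith [hx.2]⟩)
  have hxMint : Integrable (fun x => x * M x) := key1.1
  have hm1 : (∫ x, x * M x) = -2 * a := by
    rw [key1.2]
    have hinner : ∀ t : ℝ, (∫ u, (u - t) * g u) = -a - t := by
      intro t
      have h1 : (fun u => (u - t) * g u) = fun u => u * g u - t * g u := by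
        funext u; ring
      rw [h1, integral_sub htgint (hgint.const_mul t), integral_const_mul, hIug, hIg]
      ring
    have h2 : (fun t => f t * ∫ u, (u - t) * g u) = fun t => -a * f t - t * f t := by
      funext t; rw [hinner t]; ring
    rw [h2, integral_sub (hfint.const_mul (-a)) htfint, integral_const_mul, hIf, ← ha]
    ring
  have key2 := key (fun x => x ^ 2) (measurable_id.pow_const 2) 4 (by norm_num)
    (by intro x hx; rw [mem_Icc] at hx; rw [abs_pow]
        have : |x| ≤ 2 := abs_le.2 ⟨by linarith [hx.1], by linarith [hx.2]⟩
        nlinarith [abs_nonneg x])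
  have hx2Mint : Integrable (fun x => x ^ 2 * M x) := key2.1
  have hm2 : (∫ x, x ^ 2 * M x) = 2 / 3 + 2 * a ^ 2 := by
    rw [key2.2]
    have hinner : ∀ t : ℝ, (∫ u, (u - t) ^ 2 * g u) = (2 / 3 - b) + 2 * a * t + t ^ 2 := by
      intro t
      have h1 : (fun u => (u - t) ^ 2 * g u)
          = fun u => (u ^ 2 * g u - (2 * t) * (u * g u)) + t ^ 2 * g u := by
        funext u; ring
      have i1 : Integrable (fun u => u ^ 2 * g u - 2 * t * (u * g u)) := by
        exact ht2gint.sub (htgint.const_mul (2 * t))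
      rw [h1, integral_add i1 (hgint.const_mul (t ^ 2)),
        integral_sub ht2gint (htgint.const_mul (2 * t)), integral_const_mul, integral_const_mul,
        hIu2g, hIug, hIg]
      ring
    have h2 : (fun t => f t * ∫ u, (u - t) ^ 2 * g u)
        = fun t => ((2 / 3 - b) * f t + 2 * a * (t * f t)) + t ^ 2 * f t := by
      funext t; rw [hinner t]; ring
    have j1 : Integrable (fun t => (2 / 3 - b) * f t + 2 * a * (t * f t)) := by
      exact (hfint.const_mul (2 / 3 - b)).add (htfint.const_mul (2 * a))
    rw [h2, integral_add j1 ht2fint,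
      integral_add (hfint.const_mul _) (htfint.const_mul _),
      integral_const_mul, integral_const_mul, hIf, ← ha, ← hb]
    ring
  -- ## s > 0
  have hs_pos : 0 < s := by
    rcases lt_or_eq_of_le hs0 with h | h
    · exact h
    · exfalso
      have : ∀ x, M x = 0 := fun x => le_antisymm (h ▸ hMle x) (hM_nonneg x)
      have : (∫ x, M x) = 0 := by
        have hz : M = fun _ => (0:ℝ) := funext this
        rw [hz, integral_zero]
      rw [hm0] at this
      norm_num at this
  -- ## centered first absolute moment and variance
  set m : ℝ := ∫ x, x * M x with hmdef
  have hm_val : m = -2 * a := hm1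
  have key_abs := key (fun x => |x - m|)
    ((continuous_id.sub continuous_const).abs.measurable) (2 + |m|) (by positivity)
    (by
      intro x hx; rw [mem_Icc] at hx
      rw [abs_abs]
      have h1 : |x - m| ≤ |x| + |m| := by
        simpa [sub_eq_add_neg, abs_neg] using abs_add_le x (-m)
      have h2 : |x| ≤ 2 := abs_le.2 ⟨by linarith [hx.1], by linarith [hx.2]⟩
      linarith)
  have habsMint : Integrable (fun x => |x - m| * M x) := key_abs.1
  have hsne : s ≠ 0 := ne_of_gt hs_pos
  set c : ℝ := 1 / (2 * s) with hcdef
  have hc0 : 0 ≤ c := by positivity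
  have key_tent := key (fun x => max (c - |x - m|) 0)
    (((continuous_const.sub (continuous_id.sub continuous_const).abs).max
      continuous_const).measurable) c hc0
    (by
      intro x _
      rw [abs_of_nonneg (le_max_right _ _)]
      exact max_le (by linarith [abs_nonneg (x - m)]) hc0)
  have htentMint : Integrable (fun x => max (c - |x - m|) 0 * M x) := key_tent.1
  have htentM_le : (∫ x, max (c - |x - m|) 0 * M x) ≤ s * c ^ 2 := by
    have h1 : (∫ x, max (c - |x - m|) 0 * M x) ≤ ∫ x, s * max (c - |x - m|) 0 := by
      apply integral_mono htentMint ((tent_integrable c m hc0).const_mul s)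
      intro x
      dsimp only
      calc max (c - |x - m|) 0 * M x ≤ max (c - |x - m|) 0 * s :=
            mul_le_mul_of_nonneg_left (hMle x) (le_max_right _ _)
      _ = s * max (c - |x - m|) 0 := by ring
    rwa [integral_const_mul, tent_integral c m hc0] at h1
  set μ : ℝ := ∫ x, |x - m| * M x with hmudef
  have hmu_ge : 1 / (4 * s) ≤ μ := by
    have hsubint : Integrable (fun x => c * M x - max (c - |x - m|) 0 * M x) := by
      exact (hMint.const_mul c).sub htentMint
    have hlow : (∫ x, (c * M x - max (c - |x - m|) 0 * M x)) ≤ μ := by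
      apply integral_mono hsubint habsMint
      intro x
      dsimp only
      have hpt : c - max (c - |x - m|) 0 ≤ |x - m| := by
        by_cases h : c - |x - m| ≤ 0
        · rw [max_eq_right h]; linarith [abs_nonneg (x - m)]
        · rw [max_eq_left (le_of_lt (not_le.1 h))]; linarith
      nlinarith [mul_le_mul_of_nonneg_right hpt (hM_nonneg x)]
    rw [integral_sub (hMint.const_mul c) htentMint, integral_const_mul, hm0] at hlow
    have : c - s * c ^ 2 = 1 / (4 * s) := by
      rw [hcdef]; field_simp; ring
    linarith [htentM_le]
  have hmu0 : 0 ≤ μ := le_trans (by positivity) hmu_ge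
  -- variance
  have key_sq := key (fun x => (x - m) ^ 2)
    (((continuous_id.sub continuous_const).pow 2).measurable) ((2 + |m|) ^ 2) (by positivity)
    (by
      intro x hx; rw [mem_Icc] at hx
      rw [abs_of_nonneg (sq_nonneg _)]
      have h1 : |x - m| ≤ 2 + |m| := by
        have := abs_add_le x (-m)
        have h2 : |x| ≤ 2 := abs_le.2 ⟨by linarith [hx.1], by linarith [hx.2]⟩
        simp only [sub_eq_add_neg, abs_neg] at *
        calc |x + -m| ≤ |x| + |m| := by simpa [abs_neg] using this
        _ ≤ 2 + |m| := by linarith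
      nlinarith [abs_nonneg (x - m), abs_nonneg m, sq_abs (x - m)])
  have hsqMint : Integrable (fun x => (x - m) ^ 2 * M x) := key_sq.1
  set V : ℝ := ∫ x, (x - m) ^ 2 * M x with hVdef
  have hV_val : V = 2 / 3 - 2 * a ^ 2 := by
    have hexp : (fun x => (x - m) ^ 2 * M x)
        = fun x => (x ^ 2 * M x - (2 * m) * (x * M x)) + m ^ 2 * M x := by
      funext x; ring
    have hi1 : Integrable (fun x => x ^ 2 * M x - 2 * m * (x * M x)) := by
      exact hx2Mint.sub (hxMint.const_mul (2 * m))
    rw [hVdef, hexp, integral_add hi1 (hMint.const_mul (m ^ 2)),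
      integral_sub hx2Mint (hxMint.const_mul (2 * m)), integral_const_mul, integral_const_mul,
      hm0, hm1, hm2]
    rw [← hmdef, hm1]
    ring
  have hV23 : V ≤ 2 / 3 := by nlinarith [sq_nonneg a]
  -- folded variance
  have key_fold := key (fun x => (|x - m| - μ) ^ 2)
    ((((continuous_id.sub continuous_const).abs.sub continuous_const).pow 2).measurable)
    ((2 + |m| + |μ|) ^ 2) (by positivity)
    (by
      intro x hx; rw [mem_Icc] at hx
      rw [abs_of_nonneg (sq_nonneg _)]
      have h1 : |x - m| ≤ 2 + |m| := by
        have h2 : |x| ≤ 2 := abs_le.2 ⟨by linarith [hx.1], by linarith [hx.2]⟩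
        have : |x - m| ≤ |x| + |m| := by
          simpa [sub_eq_add_neg, abs_neg] using abs_add_le x (-m)
        linarith
      nlinarith [abs_nonneg (x - m), abs_nonneg m, abs_nonneg μ,
        neg_abs_le μ, le_abs_self μ])
  have hfoldMint : Integrable (fun x => (|x - m| - μ) ^ 2 * M x) := key_fold.1
  set W : ℝ := ∫ x, (|x - m| - μ) ^ 2 * M x with hWdef
  have hW_val : W = V - μ ^ 2 := by
    have hexp : (fun x => (|x - m| - μ) ^ 2 * M x)
        = fun x => ((x - m) ^ 2 * M x - (2 * μ) * (|x - m| * M x)) + μ ^ 2 * M x := by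
      funext x
      calc (|x - m| - μ) ^ 2 * M x
          = (|x - m| ^ 2 - 2 * μ * |x - m| + μ ^ 2) * M x := by ring
      _ = ((x - m) ^ 2 - 2 * μ * |x - m| + μ ^ 2) * M x := by rw [sq_abs]
      _ = ((x - m) ^ 2 * M x - (2 * μ) * (|x - m| * M x)) + μ ^ 2 * M x := by ring
    have hi1 : Integrable (fun x => (x - m) ^ 2 * M x - 2 * μ * (|x - m| * M x)) := by
      exact hsqMint.sub (habsMint.const_mul (2 * μ))
    rw [hWdef, hexp, integral_add hi1 (hMint.const_mul (μ ^ 2)),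
      integral_sub hsqMint (habsMint.const_mul (2 * μ)), integral_const_mul, integral_const_mul,
      hm0, ← hmudef, ← hVdef]
    ring
  -- lower bound for W via two parabolas
  set d : ℝ := 1 / (4 * s) with hddef
  have hd0 : 0 ≤ d := by positivity
  have parab_bound : ∀ e : ℝ,
      (∫ x, max (d ^ 2 - (x - e) ^ 2) 0 * M x) ≤ s * (4 / 3 * d ^ 3) := by
    intro e
    have hkey := key (fun x => max (d ^ 2 - (x - e) ^ 2) 0)
      (((continuous_const.sub ((continuous_id.sub continuous_const).pow 2)).max
        continuous_const).measurable) (d ^ 2) (by positivity)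
      (by
        intro x _
        rw [abs_of_nonneg (le_max_right _ _)]
        exact max_le (by nlinarith [sq_nonneg (x - e)]) (by positivity))
    have h1 : (∫ x, max (d ^ 2 - (x - e) ^ 2) 0 * M x)
        ≤ ∫ x, s * max (d ^ 2 - (x - e) ^ 2) 0 := by
      apply integral_mono hkey.1 ((parab_integrable d e hd0).const_mul s)
      intro x
      dsimp only
      calc max (d ^ 2 - (x - e) ^ 2) 0 * M x ≤ max (d ^ 2 - (x - e) ^ 2) 0 * s :=
            mul_le_mul_of_nonneg_left (hMle x) (le_max_right _ _)
      _ = s * max (d ^ 2 - (x - e) ^ 2) 0 := by ring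
    rwa [integral_const_mul, parab_integral d e hd0] at h1
  have hP1int : Integrable (fun x => max (d ^ 2 - (x - (m + μ)) ^ 2) 0 * M x) := by
    have hkey := key (fun x => max (d ^ 2 - (x - (m + μ)) ^ 2) 0)
      (((continuous_const.sub ((continuous_id.sub continuous_const).pow 2)).max
        continuous_const).measurable) (d ^ 2) (by positivity)
      (by
        intro x _
        rw [abs_of_nonneg (le_max_right _ _)]
        exact max_le (by nlinarith [sq_nonneg (x - (m + μ))]) (by positivity))
    exact hkey.1
  have hP2int : Integrable (fun x => max (d ^ 2 - (x - (m - μ)) ^ 2) 0 * M x) := by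
    have hkey := key (fun x => max (d ^ 2 - (x - (m - μ)) ^ 2) 0)
      (((continuous_const.sub ((continuous_id.sub continuous_const).pow 2)).max
        continuous_const).measurable) (d ^ 2) (by positivity)
      (by
        intro x _
        rw [abs_of_nonneg (le_max_right _ _)]
        exact max_le (by nlinarith [sq_nonneg (x - (m - μ))]) (by positivity))
    exact hkey.1
  have hW_ge : d ^ 2 - s * (8 / 3 * d ^ 3) ≤ W := by
    have hsubint : Integrable (fun x =>
        (d ^ 2 * M x - max (d ^ 2 - (x - (m + μ)) ^ 2) 0 * M x)
          - max (d ^ 2 - (x - (m - μ)) ^ 2) 0 * M x) := by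
      exact ((hMint.const_mul (d ^ 2)).sub hP1int).sub hP2int
    have hmono : (∫ x, ((d ^ 2 * M x - max (d ^ 2 - (x - (m + μ)) ^ 2) 0 * M x)
        - max (d ^ 2 - (x - (m - μ)) ^ 2) 0 * M x)) ≤ W := by
      apply integral_mono hsubint hfoldMint
      intro x
      dsimp only
      have hpt : d ^ 2 - (|x - m| - μ) ^ 2 ≤
          max (d ^ 2 - (x - (m + μ)) ^ 2) 0 + max (d ^ 2 - (x - (m - μ)) ^ 2) 0 := by
        rcases le_total 0 (x - m) with h | h
        · have habs : |x - m| = x - m := abs_of_nonneg h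
          have : d ^ 2 - (|x - m| - μ) ^ 2 = d ^ 2 - (x - (m + μ)) ^ 2 := by
            rw [habs]; ring
          rw [this]
          calc d ^ 2 - (x - (m + μ)) ^ 2 ≤ max (d ^ 2 - (x - (m + μ)) ^ 2) 0 :=
                le_max_left _ _
          _ ≤ _ := le_add_of_nonneg_right (le_max_right _ _)
        · have habs : |x - m| = -(x - m) := abs_of_nonpos h
          have : d ^ 2 - (|x - m| - μ) ^ 2 = d ^ 2 - (x - (m - μ)) ^ 2 := by
            rw [habs]; ring
          rw [this]
          calc d ^ 2 - (x - (m - μ)) ^ 2 ≤ max (d ^ 2 - (x - (m - μ)) ^ 2) 0 :=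
                le_max_left _ _
          _ ≤ _ := le_add_of_nonneg_left (le_max_right _ _)
      nlinarith [mul_le_mul_of_nonneg_right hpt (hM_nonneg x)]
    have hi2 : Integrable (fun x =>
        d ^ 2 * M x - max (d ^ 2 - (x - (m + μ)) ^ 2) 0 * M x) := by
      exact (hMint.const_mul (d ^ 2)).sub hP1int
    rw [integral_sub hi2 hP2int,
      integral_sub (hMint.const_mul (d ^ 2)) hP1int, integral_const_mul, hm0] at hmono
    have hp1 := parab_bound (m + μ)
    have hp2 := parab_bound (m - μ)
    nlinarith [hp1, hp2]
  -- ## conclude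
  have hchain : d ^ 2 - s * (8 / 3 * d ^ 3) + (1 / (4 * s)) ^ 2 ≤ 2 / 3 := by
    have h1 : (1 / (4 * s)) ^ 2 ≤ μ ^ 2 := pow_le_pow_left₀ (by positivity) hmu_ge 2
    nlinarith [hW_ge, hW_val, hV23]
  have hfinal : 1 ≤ 8 * s ^ 2 := by
    rw [hddef] at hchain
    have hs2 : (0:ℝ) < s ^ 2 := by positivity
    have hexp : (1 / (4 * s)) ^ 2 - s * (8 / 3 * (1 / (4 * s)) ^ 3) + (1 / (4 * s)) ^ 2
        = 1 / (12 * s ^ 2) := by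
      field_simp
      ring
    rw [hexp] at hchain
    rw [div_le_div_iff₀ (by positivity) (by norm_num)] at hchain
    nlinarith [hchain]
  exact sqrt8_aux s hs_pos hfinal
end

section
/- For every integer k ≠ 0, the exponential Fourier coefficients satisfy M̂(k) = (4/(kπ)) sin(kπ/2) · conj(f̂(k)) − 4 |f̂(k)|². -/
open Real MeasureTheory Set

lemma interval_eq_global {E : Type*} [NormedAddCommGroup E] [NormedSpace ℝ E]
    (F : ℝ → E) {a b : ℝ} (hab : a ≤ b) (h : ∀ x, x ∉ Set.Icc a b → F x = 0) :
    ∫ x in a..b, F x = ∫ x, F x := by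
  rw [intervalIntegral.integral_of_le hab, ← MeasureTheory.integral_Icc_eq_integral_Ioc,
    MeasureTheory.setIntegral_eq_integral_of_forall_compl_eq_zero h]

lemma global_eq_Icc {E : Type*} [NormedAddCommGroup E] [NormedSpace ℝ E]
    (F : ℝ → E) {a b : ℝ} (h : ∀ x, x ∉ Set.Icc a b → F x = 0) :
    ∫ x, F x = ∫ x in Set.Icc a b, F x :=
  (MeasureTheory.setIntegral_eq_integral_of_forall_compl_eq_zero h).symm

theorem exp_fourier_identity (f g M : ℝ → ℝ)
    (hf_meas : Measurable f)
    (hf01 : ∀ x ∈ Icc (-1:ℝ) 1, 0 ≤ f x ∧ f x ≤ 1)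
    (hf_supp : ∀ x, x ∉ Icc (-1:ℝ) 1 → f x = 0)
    (hf_int : ∫ x in (-1:ℝ)..1, f x = 1)
    (hg : ∀ x, g x = if x ∈ Icc (-1:ℝ) 1 then 1 - f x else 0)
    (hM : ∀ x, M x = ∫ t in (-1:ℝ)..1, f t * g (x + t))
    (fhat Mhat : ℤ → ℂ)
    (hfhat : ∀ k : ℤ, fhat k =
      (1/4 : ℂ) * ∫ x in (-2:ℝ)..2, Complex.exp (-(Real.pi * Complex.I / 2) * k * x) * (f x : ℂ))
    (hMhat : ∀ k : ℤ, Mhat k =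
      (1/4 : ℂ) * ∫ x in (-2:ℝ)..2, Complex.exp (-(Real.pi * Complex.I / 2) * k * x) * (M x : ℂ)) :
    ∀ k : ℤ, k ≠ 0 →
      Mhat k = ((4 / ((k : ℝ) * Real.pi) * Real.sin ((k : ℝ) * Real.pi / 2) : ℝ) : ℂ)
          * (starRingEnd ℂ) (fhat k) - 4 * ((‖fhat k‖)^2 : ℝ) := by
  intro k hk
  set c : ℂ := -(Real.pi * Complex.I / 2) * k with hc_def
  have hk' : (k : ℝ) ≠ 0 := Int.cast_ne_zero.mpr hk
  set θ : ℝ := (k : ℝ) * Real.pi / 2 with hθ_def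
  have hθ : θ ≠ 0 := by
    simp only [hθ_def, div_ne_zero_iff]
    exact ⟨mul_ne_zero hk' Real.pi_ne_zero, two_ne_zero⟩
  have hcθ : c = (-θ : ℝ) * Complex.I := by
    simp only [hc_def, hθ_def]
    push_cast
    ring
  have hc : c ≠ 0 := by
    rw [hcθ]
    simp [Complex.ofReal_eq_zero, hθ]
  -- basic properties of f and g
  have hf_bd : ∀ x, |f x| ≤ 1 := by
    intro x
    by_cases hx : x ∈ Icc (-1:ℝ) 1
    · rcases hf01 x hx with ⟨h0, h1⟩
      rw [abs_of_nonneg h0]; exact h1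
    · rw [hf_supp x hx]; norm_num
  have hg_eq : g = fun x => if x ∈ Icc (-1:ℝ) 1 then 1 - f x else 0 := funext hg
  have hg_meas : Measurable g := by
    rw [hg_eq]
    exact Measurable.ite measurableSet_Icc (measurable_const.sub hf_meas) measurable_const
  have hg_supp : ∀ x, x ∉ Icc (-1:ℝ) 1 → g x = 0 := by
    intro x hx; rw [hg x, if_neg hx]
  have hg_bd : ∀ x, |g x| ≤ 1 := by
    intro x
    by_cases hx : x ∈ Icc (-1:ℝ) 1
    · rw [hg x, if_pos hx]
      rcases hf01 x hx with ⟨h0, h1⟩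
      rw [abs_le]; constructor <;> linarith
    · rw [hg_supp x hx]; norm_num
  -- norm of the exponential
  have hE_norm : ∀ x : ℝ, ‖Complex.exp (c * x)‖ = 1 := by
    intro x
    rw [Complex.norm_exp]
    have : (c * x).re = 0 := by
      rw [hcθ]
      simp [Complex.mul_re]
    rw [this, Real.exp_zero]
  have hE_cont : Continuous fun x : ℝ => Complex.exp (c * x) :=
    Complex.continuous_exp.comp (continuous_const.mul Complex.continuous_ofReal)
  -- rewrite M on the whole line
  have hM' : ∀ x, M x = ∫ t, f t * g (x + t) := by
    intro x
    rw [hM x]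
    exact interval_eq_global _ (by norm_num) (fun t ht => by rw [hf_supp t ht, zero_mul])
  -- support of M
  have hM_supp : ∀ x, x ∉ Icc (-2:ℝ) 2 → M x = 0 := by
    intro x hx
    rw [hM' x]
    have : ∀ t, f t * g (x + t) = 0 := by
      intro t
      by_cases ht : t ∈ Icc (-1:ℝ) 1
      · have : x + t ∉ Icc (-1:ℝ) 1 := by
          simp only [mem_Icc, not_and_or, not_le] at hx ⊢
          rcases hx with hx | hx
          · obtain ⟨h1, h2⟩ := ht; left; linarith
          · obtain ⟨h1, h2⟩ := ht; right; linarith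
        rw [hg_supp _ this, mul_zero]
      · rw [hf_supp t ht, zero_mul]
    simp [this]
  -- the full-line Fourier integral of f
  set Ff : ℂ := ∫ x : ℝ, Complex.exp (c * x) * (f x : ℂ) with hFf_def
  have hfhat' : fhat k = (1/4 : ℂ) * Ff := by
    rw [hfhat k, hFf_def]
    congr 1
    refine interval_eq_global _ (by norm_num) (fun x hx => ?_)
    have : x ∉ Icc (-1:ℝ) 1 := by
      simp only [mem_Icc, not_and_or, not_le] at hx ⊢
      rcases hx with hx | hx
      · left; linarith
      · right; linarith
    rw [hf_supp x this, Complex.ofReal_zero, mul_zero]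
  -- the J integral
  set J : ℂ := ∫ u : ℝ, Complex.exp (c * u) * (g u : ℂ) with hJ_def
  -- A integral
  set A : ℂ := ∫ t : ℝ, (f t : ℂ) * Complex.exp (-(c * t)) with hA_def
  -- Step 1: Mhat in terms of the double integral
  have step1 : Mhat k = (1/4 : ℂ) * ∫ x : ℝ, Complex.exp (c * x) * (M x : ℂ) := by
    rw [hMhat k]
    congr 1
    refine interval_eq_global _ (by norm_num) (fun x hx => ?_)
    rw [hM_supp x hx, Complex.ofReal_zero, mul_zero]
  -- Fubini
  have hH_int : Integrable (Function.uncurry fun (x t : ℝ) =>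
      Complex.exp (c * x) * ((f t : ℂ) * (g (x + t) : ℂ))) (volume.prod volume) := by
    set H : ℝ × ℝ → ℂ := fun p => Complex.exp (c * p.1) * ((f p.2 : ℂ) * (g (p.1 + p.2) : ℂ))
      with hH_def
    have hH_meas : AEStronglyMeasurable H (volume.prod volume) := by
      apply Measurable.aestronglyMeasurable
      apply Measurable.mul
      · exact (Complex.measurable_exp.comp
          (measurable_const.mul (Complex.measurable_ofReal.comp measurable_fst)))
      · exact ((Complex.measurable_ofReal.comp (hf_meas.comp measurable_snd)).mul
          (Complex.measurable_ofReal.comp (hg_meas.comp (measurable_fst.add measurable_snd))))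
    have hs : MeasurableSet (Icc (-2:ℝ) 2 ×ˢ Icc (-1:ℝ) 1) :=
      measurableSet_Icc.prod measurableSet_Icc
    have hHind : H = (Icc (-2:ℝ) 2 ×ˢ Icc (-1:ℝ) 1).indicator H := by
      funext p
      by_cases hp : p ∈ Icc (-2:ℝ) 2 ×ˢ Icc (-1:ℝ) 1
      · rw [indicator_of_mem hp]
      · rw [indicator_of_notMem hp]
        simp only [mem_prod, not_and_or] at hp
        by_cases h2 : p.2 ∈ Icc (-1:ℝ) 1
        · rcases hp with hp | hp
          · have : p.1 + p.2 ∉ Icc (-1:ℝ) 1 := by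
              simp only [mem_Icc, not_and_or, not_le] at hp ⊢
              cases h2 with
              | intro hl hr =>
                rcases hp with hp | hp
                · left; linarith
                · right; linarith
            simp [hH_def, hg_supp _ this]
          · exact absurd h2 hp
        · simp [hH_def, hf_supp _ h2]
    rw [show (Function.uncurry fun (x t : ℝ) =>
      Complex.exp (c * x) * ((f t : ℂ) * (g (x + t) : ℂ))) = H from rfl, hHind]
    rw [integrable_indicator_iff hs]
    apply Measure.integrableOn_of_bounded
    · rw [Measure.prod_prod]
      exact (ENNReal.mul_lt_top measure_Icc_lt_top measure_Icc_lt_top).ne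
    · exact hH_meas
    · refine Filter.Eventually.of_forall (fun p => ?_)
      show ‖H p‖ ≤ 1
      rw [hH_def]
      simp only [norm_mul, Complex.norm_real, hE_norm, one_mul, Real.norm_eq_abs]
      calc |f p.2| * |g (p.1 + p.2)| ≤ 1 * 1 :=
            mul_le_mul (hf_bd _) (hg_bd _) (abs_nonneg _) zero_le_one
        _ = 1 := one_mul 1
  have step2 : (∫ x : ℝ, Complex.exp (c * x) * (M x : ℂ)) =
      ∫ t : ℝ, ∫ x : ℝ, Complex.exp (c * x) * ((f t : ℂ) * (g (x + t) : ℂ)) := by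
    have : (∫ x : ℝ, Complex.exp (c * x) * (M x : ℂ)) =
        ∫ x : ℝ, ∫ t : ℝ, Complex.exp (c * x) * ((f t : ℂ) * (g (x + t) : ℂ)) := by
      congr 1
      funext x
      rw [hM' x]
      rw [show ((↑(∫ t, f t * g (x + t)) : ℂ)) = ∫ t, ((f t * g (x + t) : ℝ) : ℂ) from
        (integral_ofReal).symm]
      rw [← integral_const_mul]
      congr 1
      funext t
      push_cast
      ring
    rw [this]
    exact integral_integral_swap hH_int
  -- inner integral computation
  have step3 : ∀ t : ℝ, (∫ x : ℝ, Complex.exp (c * x) * ((f t : ℂ) * (g (x + t) : ℂ))) =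
      (f t : ℂ) * (Complex.exp (-(c * t)) * J) := by
    intro t
    have h1 : (∫ x : ℝ, Complex.exp (c * x) * ((f t : ℂ) * (g (x + t) : ℂ))) =
        (f t : ℂ) * ∫ x : ℝ, Complex.exp (c * x) * (g (x + t) : ℂ) := by
      rw [← integral_const_mul]
      congr 1; funext x; ring
    rw [h1]
    congr 1
    have h2 : (∫ x : ℝ, Complex.exp (c * x) * (g (x + t) : ℂ)) =
        ∫ x : ℝ, (fun u : ℝ => Complex.exp (c * u - c * t) * (g u : ℂ)) (x + t) := by
      congr 1; funext x
      simp only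
      congr 2
      push_cast
      ring
    rw [h2]
    rw [MeasureTheory.integral_add_right_eq_self
      (fun u : ℝ => Complex.exp (c * ↑u - c * ↑t) * ((g u : ℝ) : ℂ)) t]
    have h3 : (∫ u : ℝ, Complex.exp (c * u - c * t) * (g u : ℂ)) =
        ∫ u : ℝ, Complex.exp (-(c * t)) * (Complex.exp (c * u) * (g u : ℂ)) := by
      congr 1; funext u
      rw [sub_eq_add_neg, add_comm, Complex.exp_add]
      ring
    rw [h3, integral_const_mul, hJ_def]
  have step4 : (∫ t : ℝ, ∫ x : ℝ, Complex.exp (c * x) * ((f t : ℂ) * (g (x + t) : ℂ))) = A * J := by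
    have : (∫ t : ℝ, ∫ x : ℝ, Complex.exp (c * x) * ((f t : ℂ) * (g (x + t) : ℂ))) =
        ∫ t : ℝ, ((f t : ℂ) * Complex.exp (-(c * t))) * J := by
      congr 1; funext t
      rw [step3 t]; ring
    rw [this, integral_mul_const, hA_def]
  -- A = conj Ff
  have hA_conj : A = (starRingEnd ℂ) Ff := by
    rw [hA_def, hFf_def, ← integral_conj]
    congr 1; funext t
    rw [map_mul, ← Complex.exp_conj, Complex.conj_ofReal]
    have : (starRingEnd ℂ) (c * t) = -(c * t) := by
      rw [map_mul]
      have h1 : (starRingEnd ℂ) c = -c := by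
        rw [hcθ, map_mul, Complex.conj_I]
        rw [Complex.conj_ofReal]
        ring
      rw [h1, Complex.conj_ofReal]
      ring
    rw [this]; ring
  -- J = S - Ff
  set S : ℂ := (Complex.exp (c * 1) - Complex.exp (c * (-1))) / c with hS_def
  have hJ_val : J = S - Ff := by
    have e1 : J = ∫ u in Icc (-1:ℝ) 1, Complex.exp (c * u) * (g u : ℂ) := by
      rw [hJ_def]
      exact global_eq_Icc _ (fun u hu => by rw [hg_supp u hu, Complex.ofReal_zero, mul_zero])
    have e2 : (∫ u in Icc (-1:ℝ) 1, Complex.exp (c * u) * (g u : ℂ)) =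
        ∫ u in Icc (-1:ℝ) 1,
          (Complex.exp (c * u) - Complex.exp (c * u) * (f u : ℂ)) := by
      refine setIntegral_congr_fun measurableSet_Icc (fun u hu => ?_)
      rw [hg u, if_pos hu]
      push_cast
      ring
    have hint1 : IntegrableOn (fun u : ℝ => Complex.exp (c * u)) (Icc (-1:ℝ) 1) :=
      hE_cont.integrableOn_Icc
    have hint2 : IntegrableOn (fun u : ℝ => Complex.exp (c * u) * (f u : ℂ))
        (Icc (-1:ℝ) 1) := by
      apply Measure.integrableOn_of_bounded (M := 1)
      · exact measure_Icc_lt_top.ne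
      · exact (Complex.measurable_exp.comp (measurable_const.mul
          Complex.measurable_ofReal)).mul
          (Complex.measurable_ofReal.comp hf_meas) |>.aestronglyMeasurable
      · refine Filter.Eventually.of_forall (fun u => ?_)
        rw [norm_mul, hE_norm, one_mul, Complex.norm_real, Real.norm_eq_abs]
        exact hf_bd u
    have e3 : (∫ u in Icc (-1:ℝ) 1,
          (Complex.exp (c * u) - Complex.exp (c * u) * (f u : ℂ))) =
        (∫ u in Icc (-1:ℝ) 1, Complex.exp (c * u)) -
          ∫ u in Icc (-1:ℝ) 1, Complex.exp (c * u) * (f u : ℂ) :=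
      integral_sub hint1 hint2
    have e4 : (∫ u in Icc (-1:ℝ) 1, Complex.exp (c * u)) = S := by
      rw [integral_Icc_eq_integral_Ioc, ← intervalIntegral.integral_of_le (by norm_num : (-1:ℝ) ≤ 1)]
      rw [integral_exp_mul_complex hc, hS_def]
      norm_num
    have e5 : (∫ u in Icc (-1:ℝ) 1, Complex.exp (c * u) * (f u : ℂ)) = Ff := by
      rw [hFf_def]
      exact (global_eq_Icc _ (fun u hu => by
        rw [hf_supp u hu, Complex.ofReal_zero, mul_zero])).symm
    rw [e1, e2, e3, e4, e5]
  -- value of S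
  have hS_val : S = ((4 / ((k : ℝ) * Real.pi) * Real.sin ((k : ℝ) * Real.pi / 2) : ℝ) : ℂ) := by
    have e1 : c * 1 = ((-θ : ℝ) : ℂ) * Complex.I := by rw [hcθ]; ring
    have e2 : c * (-1) = ((θ : ℝ) : ℂ) * Complex.I := by rw [hcθ]; push_cast; ring
    rw [hS_def, e1, e2, hcθ]
    rw [Complex.exp_mul_I, Complex.exp_mul_I]
    have hcos : Complex.cos ((-θ : ℝ) : ℂ) = ((Real.cos θ : ℝ) : ℂ) := by
      rw [Complex.ofReal_neg, Complex.cos_neg, ← Complex.ofReal_cos]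
    have hsin : Complex.sin ((-θ : ℝ) : ℂ) = -((Real.sin θ : ℝ) : ℂ) := by
      rw [Complex.ofReal_neg, Complex.sin_neg, ← Complex.ofReal_sin]
    have hcos2 : Complex.cos ((θ : ℝ) : ℂ) = ((Real.cos θ : ℝ) : ℂ) :=
      (Complex.ofReal_cos θ).symm
    have hsin2 : Complex.sin ((θ : ℝ) : ℂ) = ((Real.sin θ : ℝ) : ℂ) :=
      (Complex.ofReal_sin θ).symm
    have hden : ((-θ : ℝ) : ℂ) * Complex.I ≠ 0 := by
      simp [Complex.ofReal_eq_zero, hθ, Complex.I_ne_zero]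
    rw [hcos, hsin, hcos2, hsin2, div_eq_iff hden]
    push_cast
    rw [hθ_def]
    have hkC : (k : ℂ) ≠ 0 := Int.cast_ne_zero.mpr hk
    have hπC : ((Real.pi : ℝ) : ℂ) ≠ 0 := Complex.ofReal_ne_zero.mpr Real.pi_ne_zero
    field_simp
    push_cast
    ring
  -- put it together
  have final : Mhat k = (1/4 : ℂ) * (A * J) := by
    rw [step1, step2, step4]
  have habs : (((‖fhat k‖)^2 : ℝ) : ℂ) = fhat k * (starRingEnd ℂ) (fhat k) := by
    rw [Complex.sq_norm]
    exact (Complex.mul_conj _).symm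
  have hconj4 : (starRingEnd ℂ) (fhat k) = (1/4 : ℂ) * (starRingEnd ℂ) Ff := by
    rw [hfhat', map_mul, map_div₀, map_one, map_ofNat]
  rw [final, hA_conj, hJ_val, hS_val, habs, hconj4, hfhat']
  ring
end

section
/- For every integer m ≥ 1: if m is even then a_m = (1/2) c_{m/2}; if m is odd then a_m = (2m sin(πm/2)/π) · Σ_{k=0}^{∞} ((-1)^k/(m² − 4k²)) c_k, where c_0 = 1/2 (and the series converges). -/
open Real MeasureTheory Set

/-- sin (x + π n) = (-1)^n sin x -/
lemma aux_sin_shift (x : ℝ) (n : ℤ) : Real.sin (x + π * n) = (-1)^n * Real.sin x := by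
  have h1 : Real.sin (π * n) = 0 := by rw [mul_comm]; exact Real.sin_int_mul_pi n
  have h2 : Real.cos (π * n) = (-1)^n := by
    have := Real.cos_int_mul_pi_sub 0 n
    simpa [mul_comm] using this
  rw [Real.sin_add, h1, h2]; ring

lemma aux_negone_zpow_neg (n : ℤ) : ((-1:ℝ))^(-n) = (-1)^n := by
  rcases Int.even_or_odd n with he | ho
  · rw [he.neg_one_zpow, he.neg.neg_one_zpow]
  · rw [ho.neg_one_zpow, ho.neg.neg_one_zpow]

lemma aux_exp_int (θ : ℝ) (hθ : θ ≠ 0) :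
    ∫ x in (-1:ℝ)..1, Complex.exp ((θ:ℂ) * Complex.I * x) = ((2 * Real.sin θ / θ : ℝ) : ℂ) := by
  have hθC : (θ:ℂ) ≠ 0 := by exact_mod_cast hθ
  have hc : ((θ:ℂ) * Complex.I) ≠ 0 := mul_ne_zero hθC Complex.I_ne_zero
  rw [integral_exp_mul_complex hc]
  have e1 : (θ:ℂ) * Complex.I * ((1:ℝ):ℂ) = (θ:ℂ) * Complex.I := by push_cast; ring
  have e2 : (θ:ℂ) * Complex.I * ((-1:ℝ):ℂ) = -(θ:ℂ) * Complex.I := by push_cast; ring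
  rw [e1, e2, Complex.exp_mul_I, Complex.exp_mul_I, Complex.cos_neg, Complex.sin_neg]
  rw [div_eq_iff hc, Complex.ofReal_div, Complex.ofReal_mul, Complex.ofReal_sin]
  push_cast
  field_simp
  ring

lemma aux_fourierCoeff_congr {T : ℝ} [hT : Fact (0 < T)] {g h : AddCircle T → ℂ}
    (h' : g =ᵐ[@AddCircle.haarAddCircle T hT] h) (n : ℤ) : fourierCoeff g n = fourierCoeff h n := by
  unfold fourierCoeff
  apply integral_congr_ae
  filter_upwards [h'] with x hx
  simp only [hx]

lemma aux_Fhat (m : ℕ) (hm : Odd m) (n : ℤ) :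
    fourierCoeffOn (by norm_num : (-1:ℝ) < 1) (fun x => ((Real.cos (π * m * x / 2) : ℝ) : ℂ)) n
      = ((2 * m / π * Real.sin (π * m / 2) * (-1)^n / ((m:ℝ)^2 - 4*(n:ℝ)^2) : ℝ) : ℂ) := by
  have hπ : (π:ℝ) ≠ 0 := Real.pi_ne_zero
  have hm2n : (m:ℝ) - 2*n ≠ 0 := by
    intro h
    have : (m:ℤ) = 2*n := by exact_mod_cast sub_eq_zero.mp h
    rcases hm with ⟨j, hj⟩; omega
  have hm2n' : (m:ℝ) + 2*n ≠ 0 := by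
    intro h
    have : (m:ℤ) + 2*n = 0 := by exact_mod_cast h
    rcases hm with ⟨j, hj⟩; omega
  set α : ℝ := π * m / 2 - π * n with hα_def
  set β : ℝ := -(π * m / 2) - π * n with hβ_def
  have hαv : α = π * ((m:ℝ) - 2*n) / 2 := by rw [hα_def]; ring
  have hβv : β = -(π * ((m:ℝ) + 2*n) / 2) := by rw [hβ_def]; ring
  have hα : α ≠ 0 := by
    rw [hαv]
    exact div_ne_zero (mul_ne_zero hπ hm2n) two_ne_zero
  have hβ : β ≠ 0 := by
    rw [hβv]
    exact neg_ne_zero.mpr (div_ne_zero (mul_ne_zero hπ hm2n') two_ne_zero)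
  have hD : (m:ℝ)^2 - 4*(n:ℝ)^2 ≠ 0 := by
    have h2 : (m:ℝ)^2 - 4*(n:ℝ)^2 = ((m:ℝ) - 2*n) * ((m:ℝ) + 2*n) := by ring
    rw [h2]
    exact mul_ne_zero hm2n hm2n'
  have hsinα : Real.sin α = (-1)^n * Real.sin (π*m/2) := by
    rw [hα_def, show π*(m:ℝ)/2 - π*n = π*(m:ℝ)/2 + π*((-n:ℤ):ℝ) by push_cast; ring,
      aux_sin_shift, aux_negone_zpow_neg]
  have hsinβ : Real.sin β = -((-1)^n * Real.sin (π*m/2)) := by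
    rw [hβ_def, show -(π*(m:ℝ)/2) - π*n = -(π*(m:ℝ)/2) + π*((-n:ℤ):ℝ) by push_cast; ring,
      aux_sin_shift, aux_negone_zpow_neg, Real.sin_neg]
    ring
  rw [fourierCoeffOn_eq_integral]
  have hpt : ∀ x : ℝ, (fourier (-n) (x : AddCircle ((1:ℝ) - -1))) • ((Real.cos (π * m * x / 2) : ℝ) : ℂ)
      = (1/2 : ℂ) * (Complex.exp ((α:ℂ) * Complex.I * x) + Complex.exp ((β:ℂ) * Complex.I * x)) := by
    intro x
    rw [fourier_coe_apply, smul_eq_mul, Complex.ofReal_cos, Complex.cos]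
    have key : ∀ E A B : ℂ, E * ((A + B)/2) = E*A*(1/2) + E*B*(1/2) := fun _ _ _ => by ring
    rw [key]
    have h1 : Complex.exp (2 * ((π:ℝ):ℂ) * Complex.I * ((-n : ℤ):ℂ) * ((x:ℝ):ℂ) / ((((1:ℝ) - -1):ℝ):ℂ)) *
        Complex.exp ((((π * (m:ℝ) * x / 2 : ℝ)):ℂ) * Complex.I) = Complex.exp ((α:ℂ) * Complex.I * x) := by
      rw [← Complex.exp_add]
      congr 1
      rw [hα_def]
      push_cast
      field_simp
      ring
    have h2 : Complex.exp (2 * ((π:ℝ):ℂ) * Complex.I * ((-n : ℤ):ℂ) * ((x:ℝ):ℂ) / ((((1:ℝ) - -1):ℝ):ℂ)) *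
        Complex.exp (-(((π * (m:ℝ) * x / 2 : ℝ)):ℂ) * Complex.I) = Complex.exp ((β:ℂ) * Complex.I * x) := by
      rw [← Complex.exp_add]
      congr 1
      rw [hβ_def]
      push_cast
      field_simp
      ring
    rw [h1, h2]
    ring
  simp only [hpt]
  rw [intervalIntegral.integral_const_mul,
    intervalIntegral.integral_add
      ((by fun_prop : Continuous fun x : ℝ => Complex.exp ((α:ℂ) * Complex.I * (x:ℂ))).intervalIntegrable _ _)
      ((by fun_prop : Continuous fun x : ℝ => Complex.exp ((β:ℂ) * Complex.I * (x:ℂ))).intervalIntegrable _ _),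
    aux_exp_int α hα, aux_exp_int β hβ]
  have hreal : (1/((1:ℝ) - -1)) * ((1/2:ℝ) * (2*Real.sin α/α + 2*Real.sin β/β))
      = 2*m/π*Real.sin (π*m/2)*(-1)^n/((m:ℝ)^2 - 4*(n:ℝ)^2) := by
    rw [hsinα, hsinβ, hαv, hβv]
    field_simp
    have hD' : (m:ℝ)^2 - (n:ℝ)^2*4 ≠ 0 := by rw [mul_comm]; exact hD
    field_simp
    ring
  rw [Complex.real_smul]
  push_cast [← hreal]
  ring

theorem cosine_coeff_relation (f : ℝ → ℝ)
    (hf_meas : Measurable f)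
    (hf01 : ∀ x ∈ Icc (-1:ℝ) 1, 0 ≤ f x ∧ f x ≤ 1)
    (hf_supp : ∀ x, x ∉ Icc (-1:ℝ) 1 → f x = 0)
    (hf_int : ∫ x in (-1:ℝ)..1, f x = 1)
    (c : ℕ → ℝ) (a : ℕ → ℝ)
    (hc0 : c 0 = 1/2)
    (hc : ∀ k : ℕ, 1 ≤ k → c k = ∫ x in (-1:ℝ)..1, Real.cos (π * k * x) * f x)
    (ha : ∀ m : ℕ, 1 ≤ m → a m = (1/2) * ∫ x in (-2:ℝ)..2, Real.cos (π * m * x / 2) * f x)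
    (m : ℕ) (hm : 1 ≤ m) :
    (Even m → a m = (1/2) * c (m / 2)) ∧
    (Odd m →
      Summable (fun k : ℕ => ((-1 : ℝ)^k / ((m:ℝ)^2 - 4 * (k:ℝ)^2)) * c k) ∧
      a m = (2 * (m:ℝ) * Real.sin (π * m / 2) / π) *
        ∑' k : ℕ, ((-1 : ℝ)^k / ((m:ℝ)^2 - 4 * (k:ℝ)^2)) * c k) := by
  have hπ : (π:ℝ) ≠ 0 := Real.pi_ne_zero
  -- absolute bound on f
  have hb : ∀ x, |f x| ≤ 1 := by
    intro x
    by_cases hx : x ∈ Icc (-1:ℝ) 1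
    · rcases hf01 x hx with ⟨h0, h1⟩
      rw [abs_le]; constructor <;> linarith
    · rw [hf_supp x hx]; norm_num
  have hfi : ∀ (φ : ℝ → ℝ), Continuous φ → (∀ x, |φ x| ≤ 1) →
      ∀ u v : ℝ, IntervalIntegrable (fun x => φ x * f x) volume u v := by
    intro φ hφ hφb u v
    rw [intervalIntegrable_iff]
    apply Measure.integrableOn_of_bounded (M := 1) measure_Ioc_lt_top.ne
    · exact (hφ.measurable.mul hf_meas).aestronglyMeasurable
    · refine ae_of_all _ fun x => ?_
      rw [Real.norm_eq_abs, abs_mul]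
      calc |φ x| * |f x| ≤ 1 * 1 :=
            mul_le_mul (hφb x) (hb x) (abs_nonneg _) zero_le_one
        _ = 1 := one_mul 1
  -- the integral over [-2,2] reduces to [-1,1]
  have hred : ∫ x in (-2:ℝ)..2, Real.cos (π * m * x / 2) * f x
      = ∫ x in (-1:ℝ)..1, Real.cos (π * m * x / 2) * f x := by
    have hcont : Continuous fun x : ℝ => Real.cos (π * m * x / 2) := by fun_prop
    have hbound : ∀ x : ℝ, |Real.cos (π * m * x / 2)| ≤ 1 := fun x => Real.abs_cos_le_one _
    have h1 : IntervalIntegrable (fun x => Real.cos (π * m * x / 2) * f x) volume (-2) (-1) :=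
      hfi _ hcont hbound _ _
    have h2 : IntervalIntegrable (fun x => Real.cos (π * m * x / 2) * f x) volume (-1) 1 :=
      hfi _ hcont hbound _ _
    have h3 : IntervalIntegrable (fun x => Real.cos (π * m * x / 2) * f x) volume 1 2 :=
      hfi _ hcont hbound _ _
    have z1 : ∫ x in (-2:ℝ)..(-1), Real.cos (π * m * x / 2) * f x = 0 := by
      rw [← intervalIntegral.integral_zero (a := (-2:ℝ)) (b := (-1:ℝ)) (μ := volume)]
      apply intervalIntegral.integral_congr_ae
      have hne : ∀ᵐ x : ℝ ∂volume, x ≠ (-1:ℝ) :=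
        compl_mem_ae_iff.mpr (measure_singleton _)
      filter_upwards [hne] with x hx hmem
      rw [uIoc_of_le (by norm_num : (-2:ℝ) ≤ -1)] at hmem
      have : x ∉ Icc (-1:ℝ) 1 := by
        intro hx2
        exact hx (le_antisymm hmem.2 hx2.1)
      rw [hf_supp x this, mul_zero]
    have z3 : ∫ x in (1:ℝ)..2, Real.cos (π * m * x / 2) * f x = 0 := by
      rw [← intervalIntegral.integral_zero (a := (1:ℝ)) (b := (2:ℝ)) (μ := volume)]
      apply intervalIntegral.integral_congr_ae
      refine ae_of_all _ fun x hmem => ?_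
      rw [uIoc_of_le (by norm_num : (1:ℝ) ≤ 2)] at hmem
      have : x ∉ Icc (-1:ℝ) 1 := by
        intro hx2
        linarith [hmem.1, hx2.2]
      rw [hf_supp x this, mul_zero]
    rw [← intervalIntegral.integral_add_adjacent_intervals (h1.trans h2) h3,
      ← intervalIntegral.integral_add_adjacent_intervals h1 h2, z1, z3]
    ring
  have ham : a m = (1/2) * ∫ x in (-1:ℝ)..1, Real.cos (π * m * x / 2) * f x := by
    rw [ha m hm, hred]
  constructor
  · -- even case
    intro hEven
    obtain ⟨j, hj⟩ := hEven
    have hj1 : 1 ≤ j := by omega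
    have hmj : m / 2 = j := by omega
    rw [ham, hmj, hc j hj1]
    congr 1
    apply intervalIntegral.integral_congr
    intro x _
    have : π * (m:ℝ) * x / 2 = π * (j:ℝ) * x := by
      have : (m:ℝ) = 2 * j := by rw [hj]; push_cast; ring
      rw [this]; ring
    simp only [this]
  · -- odd case
    intro hOdd
    haveI hF2 : Fact (0 < (2:ℝ)) := ⟨by norm_num⟩
    set s : ℝ := Real.sin (π * m / 2) with hs_def
    have hs : s ≠ 0 := by
      obtain ⟨j, hj⟩ := hOdd
      have hx : π * (m:ℝ) / 2 = π/2 + π * ((j:ℤ):ℝ) := by subst hj; push_cast; ring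
      rw [hs_def, hx, aux_sin_shift (π/2) j, Real.sin_pi_div_two, mul_one]
      rcases Int.even_or_odd (j:ℤ) with he | ho
      · rw [he.neg_one_zpow]; norm_num
      · rw [ho.neg_one_zpow]; norm_num
    have hmne : (m:ℝ) ≠ 0 := Nat.cast_ne_zero.mpr (by omega)
    -- the circle functions
    set Fc : ℝ → ℂ := fun x => ((Real.cos (π * m * x / 2) : ℝ) : ℂ) with hFc_def
    set Gc : ℝ → ℂ := fun x => ((f x : ℝ) : ℂ) with hGc_def
    set F : AddCircle (2:ℝ) → ℂ := AddCircle.liftIco 2 (-1) Fc with hF_def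
    set G : AddCircle (2:ℝ) → ℂ := AddCircle.liftIco 2 (-1) Gc with hG_def
    have hFcont : Continuous F := by
      apply AddCircle.liftIco_continuous
      · show Fc (-1) = Fc (-1 + 2)
        rw [hFc_def]
        have hcc : Real.cos (π * (m:ℝ) * (-1) / 2) = Real.cos (π * (m:ℝ) * (-1+2) / 2) := by
          rw [show π*(m:ℝ)*(-1)/2 = -(π*(m:ℝ)*(-1+2)/2) from by ring, Real.cos_neg]
        exact congrArg Complex.ofReal hcc
      · exact (by fun_prop : Continuous Fc).continuousOn
    have hFz : ∀ z, F z = ((Real.cos (π * m * ((AddCircle.equivIco 2 (-1) z : ℝ)) / 2) : ℝ) : ℂ) :=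
      fun z => rfl
    have hGz : ∀ z, G z = ((f ((AddCircle.equivIco 2 (-1) z : ℝ)) : ℝ) : ℂ) := fun z => rfl
    have hGmeas : Measurable G := by
      have hGeq : G = (Gc ∘ (fun y : Ico (-1:ℝ) (-1+2) => (y:ℝ))) ∘
          (AddCircle.measurableEquivIco 2 (-1)) := rfl
      rw [hGeq]
      exact ((Complex.measurable_ofReal.comp hf_meas).comp measurable_subtype_coe).comp
        (AddCircle.measurableEquivIco 2 (-1)).measurable
    have hFmem : MemLp F 2 AddCircle.haarAddCircle :=
      MemLp.of_bound hFcont.aestronglyMeasurable 1 (ae_of_all _ fun z => by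
        rw [hFz z, Complex.norm_real, Real.norm_eq_abs]; exact Real.abs_cos_le_one _)
    have hGmem : MemLp G 2 AddCircle.haarAddCircle :=
      MemLp.of_bound hGmeas.aestronglyMeasurable 1 (ae_of_all _ fun z => by
        rw [hGz z, Complex.norm_real, Real.norm_eq_abs]; exact hb _)
    set FL := hFmem.toLp F with hFL_def
    set Glp := hGmem.toLp G with hGL_def
    -- Fourier coefficients of F
    have hFcoeff : ∀ i : ℤ, fourierCoeff F i
        = ((2 * m / π * s * (-1)^i / ((m:ℝ)^2 - 4*(i:ℝ)^2) : ℝ) : ℂ) := by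
      intro i
      rw [hF_def, fourierCoeff_liftIco_eq]
      simp only [show (-1:ℝ) + 2 = 1 from by norm_num]
      rw [hs_def, hFc_def]
      exact aux_Fhat m hOdd i
    -- Fourier coefficients of G
    have hGco : ∀ i : ℤ, fourierCoeff G i
        = fourierCoeffOn (by norm_num : (-1:ℝ) < 1) Gc i := by
      intro i
      rw [hG_def, fourierCoeff_liftIco_eq]
      simp only [show (-1:ℝ) + 2 = 1 from by norm_num]
    have hfour : ∀ n : ℤ, IntervalIntegrable
        (fun x : ℝ => (fourier (-n) (x : AddCircle ((1:ℝ) - -1))) • Gc x) volume (-1) 1 := by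
      intro n
      rw [intervalIntegrable_iff]
      apply Measure.integrableOn_of_bounded (M := 1) measure_Ioc_lt_top.ne
      · exact (((fourier (-n)).continuous.comp (AddCircle.continuous_mk' _)).aestronglyMeasurable.smul
          (Complex.measurable_ofReal.comp hf_meas).aestronglyMeasurable)
      · refine ae_of_all _ fun x => ?_
        rw [smul_eq_mul, norm_mul]
        have h1 : ‖fourier (-n) (x : AddCircle ((1:ℝ) - -1))‖ = 1 := by
          rw [show (fourier (-n) (x : AddCircle ((1:ℝ) - -1)))
              = Complex.exp ((((2*π*(-n:ℤ)*x/((1:ℝ) - -1) : ℝ)) : ℂ) * Complex.I) from by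
            rw [fourier_coe_apply]; congr 1; push_cast; ring]
          rw [Complex.norm_exp_ofReal_mul_I]
        rw [h1, one_mul, hGc_def, Complex.norm_real, Real.norm_eq_abs]
        exact hb x
    have hG0 : fourierCoeff G 0 = ((1/2 : ℝ) : ℂ) := by
      rw [hGco 0, fourierCoeffOn_eq_integral]
      simp only [neg_zero, fourier_zero, one_smul]
      rw [hGc_def]
      rw [intervalIntegral.integral_ofReal, hf_int]
      rw [Complex.real_smul]
      push_cast
      norm_num
    have hGk : ∀ k : ℕ, 1 ≤ k → fourierCoeff G k + fourierCoeff G (-(k:ℤ)) = ((c k : ℝ) : ℂ) := by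
      intro k hk
      rw [hGco, hGco, fourierCoeffOn_eq_integral, fourierCoeffOn_eq_integral]
      rw [← smul_add]
      have hI1 := hfour (k:ℤ)
      have hI2 := hfour (-(k:ℤ))
      rw [← intervalIntegral.integral_add hI1 hI2]
      have hpt : ∀ x : ℝ, (fourier (-(k:ℤ)) (x : AddCircle ((1:ℝ) - -1))) • Gc x
          + (fourier (-(-(k:ℤ))) (x : AddCircle ((1:ℝ) - -1))) • Gc x
          = ((2 * (Real.cos (π * k * x) * f x) : ℝ) : ℂ) := by
        intro x
        rw [fourier_coe_apply, fourier_coe_apply, smul_eq_mul, smul_eq_mul, hGc_def, ← add_mul]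
        have e1 : Complex.exp (2 * ((π:ℝ):ℂ) * Complex.I * ((-(k:ℤ) : ℤ):ℂ) * ((x:ℝ):ℂ) / ((((1:ℝ) - -1):ℝ):ℂ))
            = Complex.exp (-((π*(k:ℕ)*x : ℝ):ℂ) * Complex.I) := by
          congr 1; push_cast; field_simp; ring
        have e2 : Complex.exp (2 * ((π:ℝ):ℂ) * Complex.I * ((-(-(k:ℤ)) : ℤ):ℂ) * ((x:ℝ):ℂ) / ((((1:ℝ) - -1):ℝ):ℂ))
            = Complex.exp (((π*(k:ℕ)*x : ℝ):ℂ) * Complex.I) := by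
          congr 1; push_cast; field_simp; ring
        rw [e1, e2]
        rw [show ((2*(Real.cos (π*(k:ℕ)*x)*f x):ℝ):ℂ)
            = 2 * Complex.cos (((π*(k:ℕ)*x : ℝ)):ℂ) * ((f x:ℝ):ℂ) from by
          rw [← Complex.ofReal_cos]; push_cast; ring]
        rw [Complex.cos]
        ring
      simp only [hpt]
      rw [intervalIntegral.integral_ofReal]
      rw [intervalIntegral.integral_const_mul, ← hc k hk]
      rw [Complex.real_smul]
      rw [show ((1:ℝ) - -1) = 2 from by norm_num]
      push_cast
      ring
    -- Parseval
    have hPar := fourierBasis.hasSum_inner_mul_inner FL Glp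
    have hterm : ∀ i : ℤ, (inner ℂ FL (fourierBasis i) : ℂ) * (inner ℂ (fourierBasis i) Glp : ℂ)
        = ((2 * m / π * s * (-1)^i / ((m:ℝ)^2 - 4*(i:ℝ)^2) : ℝ) : ℂ) * fourierCoeff G i := by
      intro i
      have h1 : (inner ℂ (fourierBasis i) Glp : ℂ) = fourierCoeff G i := by
        rw [← fourierBasis.repr_apply_apply Glp i, fourierBasis_repr]
        exact aux_fourierCoeff_congr hGmem.coeFn_toLp i
      have h2 : (inner ℂ FL (fourierBasis i) : ℂ)
          = (starRingEnd ℂ) ((2 * m / π * s * (-1)^i / ((m:ℝ)^2 - 4*(i:ℝ)^2) : ℝ) : ℂ) := by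
        rw [← inner_conj_symm (𝕜 := ℂ) FL (fourierBasis i)]
        congr 1
        rw [← fourierBasis.repr_apply_apply FL i, fourierBasis_repr]
        rw [aux_fourierCoeff_congr hFmem.coeFn_toLp i]
        exact hFcoeff i
      rw [h1, h2, Complex.conj_ofReal]
    have hinner : (inner ℂ FL Glp : ℂ) = ((a m : ℝ) : ℂ) := by
      rw [MeasureTheory.L2.inner_def]
      have hae : ∀ᵐ z ∂(@AddCircle.haarAddCircle 2 hF2),
          (inner ℂ (FL z) (Glp z) : ℂ)
          = (AddCircle.liftIco 2 (-1) (fun x => ((Real.cos (π*m*x/2) * f x : ℝ) : ℂ))) z := by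
        filter_upwards [hFmem.coeFn_toLp, hGmem.coeFn_toLp] with z h1 h2
        rw [RCLike.inner_apply, h1, h2, hFz, hGz, Complex.conj_ofReal]
        show _ = ((Real.cos (π*m*((AddCircle.equivIco 2 (-1) z : ℝ))/2)
          * f ((AddCircle.equivIco 2 (-1) z : ℝ)) : ℝ) : ℂ)
        push_cast
        ring
      rw [integral_congr_ae hae]
      have : (∫ z, (AddCircle.liftIco 2 (-1) (fun x => ((Real.cos (π*m*x/2) * f x : ℝ) : ℂ))) z
          ∂(@AddCircle.haarAddCircle 2 hF2))
          = fourierCoeff (AddCircle.liftIco 2 (-1) (fun x => ((Real.cos (π*m*x/2) * f x : ℝ) : ℂ))) 0 := by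
        unfold fourierCoeff
        simp only [neg_zero, fourier_zero, one_smul]
      rw [this, fourierCoeff_liftIco_eq]
      simp only [show (-1:ℝ) + 2 = 1 from by norm_num]
      rw [fourierCoeffOn_eq_integral]
      simp only [neg_zero, fourier_zero, one_smul]
      rw [intervalIntegral.integral_ofReal]
      rw [Complex.real_smul, ham]
      push_cast
      ring
    rw [hinner] at hPar
    rw [show (fun i : ℤ => (inner ℂ FL (fourierBasis i) : ℂ) * (inner ℂ (fourierBasis i) Glp : ℂ))
        = (fun i : ℤ => ((2 * m / π * s * (-1)^i / ((m:ℝ)^2 - 4*(i:ℝ)^2) : ℝ) : ℂ)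
          * fourierCoeff G i) from funext hterm] at hPar
    -- fold into natural-number sum
    have hNat := hPar.nat_add_neg
    set w : ℕ → ℝ := fun k =>
      (2 * (m:ℝ) * s / π) * (((-1 : ℝ)^k / ((m:ℝ)^2 - 4 * (k:ℝ)^2)) * c k) with hw_def
    have hD0 : ((m:ℝ)^2 - 4 * ((0:ℕ):ℝ)^2) ≠ 0 := by
      push_cast
      simpa using pow_ne_zero 2 hmne
    have hT0 : ((2 * m / π * s * (-1)^(0:ℤ) / ((m:ℝ)^2 - 4*((0:ℤ):ℝ)^2) : ℝ) : ℂ)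
        * fourierCoeff G 0 = ((w 0 : ℝ) : ℂ) := by
      rw [hG0, ← Complex.ofReal_mul]
      congr 1
      rw [hw_def]
      simp only [zpow_zero, pow_zero, Nat.cast_zero, Int.cast_zero, hc0]
      ring
    have hkey : ∀ k : ℕ,
        ((2 * m / π * s * (-1)^(k:ℤ) / ((m:ℝ)^2 - 4*((k:ℤ):ℝ)^2) : ℝ) : ℂ) * fourierCoeff G (k:ℤ)
        + ((2 * m / π * s * (-1)^(-(k:ℤ)) / ((m:ℝ)^2 - 4*(Int.cast (-(k:ℤ)) : ℝ)^2) : ℝ) : ℂ) * fourierCoeff G (-(k:ℤ))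
        = ((w k : ℝ) : ℂ) + (if k = 0 then ((w 0 : ℝ) : ℂ) else 0) := by
      intro k
      rcases Nat.eq_zero_or_pos k with hk0 | hkpos
      · subst hk0
        simp only [Nat.cast_zero, Int.cast_zero, neg_zero, if_pos]
        rw [hG0]
        simp only [← Complex.ofReal_mul, ← Complex.ofReal_add]
        congr 1
        rw [hw_def]
        simp only [zpow_zero, pow_zero, Nat.cast_zero, Int.cast_zero, hc0]
        ring
      · have hk1 : 1 ≤ k := hkpos
        rw [if_neg (by omega), add_zero]
        have hΦ : ((2 * m / π * s * (-1)^(-(k:ℤ)) / ((m:ℝ)^2 - 4*(Int.cast (-(k:ℤ)) : ℝ)^2) : ℝ) : ℂ)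
            = ((2 * m / π * s * (-1)^(k:ℤ) / ((m:ℝ)^2 - 4*((k:ℤ):ℝ)^2) : ℝ) : ℂ) := by
          rw [aux_negone_zpow_neg]
          push_cast
          ring_nf
        rw [hΦ, ← mul_add, hGk k hk1]
        rw [← Complex.ofReal_mul]
        congr 1
        rw [hw_def]
        push_cast [zpow_natCast]
        ring
    rw [funext hkey] at hNat
    rw [hT0] at hNat
    have hNat3 := hNat.sub (hasSum_ite_eq 0 ((w 0 : ℝ) : ℂ))
    have hNat4 : HasSum (fun k : ℕ => ((w k : ℝ) : ℂ)) ((a m : ℝ) : ℂ) := by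
      simpa [add_sub_cancel_right] using hNat3
    have hR : HasSum w (a m) := by
      have h6 := Complex.reCLM.hasSum hNat4
      simpa using h6
    have hP : (2*(m:ℝ)*s/π) ≠ 0 :=
      div_ne_zero (mul_ne_zero (mul_ne_zero two_ne_zero hmne) hs) hπ
    have hfun : (fun k : ℕ => (2*(m:ℝ)*s/π)⁻¹ *
          ((2*(m:ℝ)*s/π) * (((-1:ℝ)^k / ((m:ℝ)^2 - 4*(k:ℝ)^2)) * c k)))
        = fun k : ℕ => ((-1:ℝ)^k / ((m:ℝ)^2 - 4*(k:ℝ)^2)) * c k :=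
      funext fun k => inv_mul_cancel_left₀ hP _
    have hu : HasSum (fun k : ℕ => ((-1:ℝ)^k / ((m:ℝ)^2 - 4*(k:ℝ)^2)) * c k)
        ((2*(m:ℝ)*s/π)⁻¹ * a m) := by
      have h5 := hR.mul_left (2*(m:ℝ)*s/π)⁻¹
      simp only [hw_def] at h5
      rwa [hfun] at h5
    refine ⟨hu.summable, ?_⟩
    rw [hu.tsum_eq, ← mul_assoc, mul_inv_cancel₀ hP, one_mul]
end

section
/- For every integer m ≥ 1, A_m = (4 sin(mπ/2)/(mπ)) · a_m − 2(a_m² + b_m²). -/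
open Real MeasureTheory Set

/-- If `F` vanishes outside `Icc a b`, its interval integral equals its integral over `ℝ`. -/
lemma shrink_aux (F : ℝ → ℝ) (a b : ℝ) (hab : a ≤ b)
    (h0 : ∀ x, x ∉ Set.Icc a b → F x = 0) :
    ∫ x in a..b, F x = ∫ x, F x := by
  rw [intervalIntegral.integral_of_le hab, ← MeasureTheory.integral_Icc_eq_integral_Ioc]
  exact MeasureTheory.setIntegral_eq_integral_of_forall_compl_eq_zero h0

theorem cosine_coeff_of_M (f g M : ℝ → ℝ)
    (hf_meas : Measurable f)
    (hf01 : ∀ x ∈ Icc (-1:ℝ) 1, 0 ≤ f x ∧ f x ≤ 1)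
    (hf_supp : ∀ x, x ∉ Icc (-1:ℝ) 1 → f x = 0)
    (hf_int : ∫ x in (-1:ℝ)..1, f x = 1)
    (hg : ∀ x, g x = if x ∈ Icc (-1:ℝ) 1 then 1 - f x else 0)
    (hM : ∀ x, M x = ∫ t in (-1:ℝ)..1, f t * g (x + t))
    (a b A : ℕ → ℝ)
    (ha : ∀ m : ℕ, 1 ≤ m → a m = (1/2) * ∫ x in (-2:ℝ)..2, Real.cos (π * m * x / 2) * f x)
    (hb : ∀ m : ℕ, 1 ≤ m → b m = (1/2) * ∫ x in (-2:ℝ)..2, Real.sin (π * m * x / 2) * f x)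
    (hA : ∀ m : ℕ, 1 ≤ m → A m = (1/2) * ∫ x in (-2:ℝ)..2, Real.cos (π * m * x / 2) * M x) :
    ∀ m : ℕ, 1 ≤ m →
      A m = (4 * Real.sin ((m:ℝ) * π / 2) / ((m:ℝ) * π)) * a m - 2 * ((a m)^2 + (b m)^2) := by
  intro m hm
  have hm' : (1:ℝ) ≤ (m:ℝ) := by exact_mod_cast hm
  have hmpos : (0:ℝ) < (m:ℝ) := lt_of_lt_of_le one_pos hm'
  set ω : ℝ := π * m / 2 with hω_def
  have hωpos : 0 < ω := by
    have := Real.pi_pos; positivity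
  have hωne : ω ≠ 0 := ne_of_gt hωpos
  have harg : ∀ x : ℝ, π * (m:ℝ) * x / 2 = ω * x := fun x => by rw [hω_def]; ring
  -- basic facts about g
  have hg_meas : Measurable g := by
    have : g = fun x => if x ∈ Icc (-1:ℝ) 1 then 1 - f x else 0 := funext hg
    rw [this]
    exact Measurable.ite measurableSet_Icc (measurable_const.sub hf_meas) measurable_const
  have hg0 : ∀ x, x ∉ Icc (-1:ℝ) 1 → g x = 0 := by
    intro x hx; rw [hg]; simp [hx]
  have hfabs : ∀ x, |f x| ≤ Set.indicator (Icc (-1:ℝ) 1) (fun _ => (1:ℝ)) x := by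
    intro x
    by_cases hx : x ∈ Icc (-1:ℝ) 1
    · rw [Set.indicator_of_mem hx]
      rcases hf01 x hx with ⟨h1, h2⟩
      rw [abs_of_nonneg h1]; exact h2
    · rw [Set.indicator_of_notMem hx, hf_supp x hx]; simp
  have hgabs : ∀ x, |g x| ≤ Set.indicator (Icc (-1:ℝ) 1) (fun _ => (1:ℝ)) x := by
    intro x
    by_cases hx : x ∈ Icc (-1:ℝ) 1
    · rw [Set.indicator_of_mem hx, hg, if_pos hx]
      rcases hf01 x hx with ⟨h1, h2⟩
      rw [abs_of_nonneg (by linarith)]; linarith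
    · rw [Set.indicator_of_notMem hx, hg0 x hx]; simp
  have hind : Integrable (Set.indicator (Icc (-1:ℝ) 1) (fun _ => (1:ℝ))) := by
    rw [integrable_indicator_iff measurableSet_Icc]
    exact integrableOn_const (by simp [Real.volume_Icc])
  have hfi : Integrable f :=
    hind.mono' hf_meas.aestronglyMeasurable (ae_of_all _ fun x => by
      simpa [Real.norm_eq_abs] using hfabs x)
  have hgi : Integrable g :=
    hind.mono' hg_meas.aestronglyMeasurable (ae_of_all _ fun x => by
      simpa [Real.norm_eq_abs] using hgabs x)
  -- weighted integrabilities
  have hcos_m : ∀ c : ℝ, AEStronglyMeasurable (fun x : ℝ => Real.cos (c * x)) volume :=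
    fun c => (Real.continuous_cos.comp (continuous_const.mul continuous_id)).aestronglyMeasurable
  have hsin_m : ∀ c : ℝ, AEStronglyMeasurable (fun x : ℝ => Real.sin (c * x)) volume :=
    fun c => (Real.continuous_sin.comp (continuous_const.mul continuous_id)).aestronglyMeasurable
  have hcf : Integrable (fun x => Real.cos (ω * x) * f x) :=
    hfi.bdd_mul (hcos_m ω) (c := 1) (ae_of_all _ fun x => by simpa [Real.norm_eq_abs] using Real.abs_cos_le_one _)
  have hsf : Integrable (fun x => Real.sin (ω * x) * f x) :=
    hfi.bdd_mul (hsin_m ω) (c := 1) (ae_of_all _ fun x => by simpa [Real.norm_eq_abs] using Real.abs_sin_le_one _)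
  have hcg : Integrable (fun x => Real.cos (ω * x) * g x) :=
    hgi.bdd_mul (hcos_m ω) (c := 1) (ae_of_all _ fun x => by simpa [Real.norm_eq_abs] using Real.abs_cos_le_one _)
  have hsg : Integrable (fun x => Real.sin (ω * x) * g x) :=
    hgi.bdd_mul (hsin_m ω) (c := 1) (ae_of_all _ fun x => by simpa [Real.norm_eq_abs] using Real.abs_sin_le_one _)
  -- the global Fourier-type integrals
  set Ca : ℝ := ∫ x, Real.cos (ω * x) * f x with hCa_def
  set Sb : ℝ := ∫ x, Real.sin (ω * x) * f x with hSb_def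
  set Cg : ℝ := ∫ x, Real.cos (ω * x) * g x with hCg_def
  set Sg : ℝ := ∫ x, Real.sin (ω * x) * g x with hSg_def
  -- relate a m, b m to Ca, Sb
  have haC : Ca = 2 * a m := by
    rw [ha m hm]
    have h1 : (∫ x in (-2:ℝ)..2, Real.cos (π * m * x / 2) * f x)
        = ∫ x, Real.cos (ω * x) * f x := by
      rw [show (fun x => Real.cos (π * (m:ℝ) * x / 2) * f x)
            = fun x => Real.cos (ω * x) * f x from funext fun x => by rw [harg x]]
      exact shrink_aux _ (-2) 2 (by norm_num) (fun x hx => by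
        rw [hf_supp x (fun hx' => hx ⟨by linarith [hx'.1], by linarith [hx'.2]⟩), mul_zero])
    rw [h1]; ring
  have hbS : Sb = 2 * b m := by
    rw [hb m hm]
    have h1 : (∫ x in (-2:ℝ)..2, Real.sin (π * m * x / 2) * f x)
        = ∫ x, Real.sin (ω * x) * f x := by
      rw [show (fun x => Real.sin (π * (m:ℝ) * x / 2) * f x)
            = fun x => Real.sin (ω * x) * f x from funext fun x => by rw [harg x]]
      exact shrink_aux _ (-2) 2 (by norm_num) (fun x hx => by
        rw [hf_supp x (fun hx' => hx ⟨by linarith [hx'.1], by linarith [hx'.2]⟩), mul_zero])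
    rw [h1]; ring
  -- elementary interval integrals
  have hIcos : (∫ u in (-1:ℝ)..1, Real.cos (ω * u)) = 2 * Real.sin ω / ω := by
    rw [intervalIntegral.integral_comp_mul_left (fun x => Real.cos x) hωne]
    rw [integral_cos]
    simp [Real.sin_neg, smul_eq_mul]
    ring
  have hIsin : (∫ u in (-1:ℝ)..1, Real.sin (ω * u)) = 0 := by
    rw [intervalIntegral.integral_comp_mul_left (fun x => Real.sin x) hωne]
    rw [integral_sin]
    simp [Real.cos_neg]
  -- compute Cg and Sg
  have hCgval : Cg = 2 * Real.sin ω / ω - Ca := by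
    have h1 : Cg = ∫ u in (-1:ℝ)..1, Real.cos (ω * u) * g u := by
      rw [hCg_def]
      exact (shrink_aux _ (-1) 1 (by norm_num) (fun x hx => by
        rw [hg0 x hx, mul_zero])).symm
    have h2 : (∫ u in (-1:ℝ)..1, Real.cos (ω * u) * g u)
        = ∫ u in (-1:ℝ)..1, (Real.cos (ω * u) - Real.cos (ω * u) * f u) := by
      apply intervalIntegral.integral_congr
      intro u hu
      have hu' : u ∈ Icc (-1:ℝ) 1 := by
        rwa [Set.uIcc_of_le (by norm_num : (-1:ℝ) ≤ 1)] at hu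
      simp only [hg u]; rw [if_pos hu']; ring
    have h3 : (∫ u in (-1:ℝ)..1, (Real.cos (ω * u) - Real.cos (ω * u) * f u))
        = (∫ u in (-1:ℝ)..1, Real.cos (ω * u)) - ∫ u in (-1:ℝ)..1, Real.cos (ω * u) * f u := by
      apply intervalIntegral.integral_sub
      · exact ((Real.continuous_cos.comp (continuous_const.mul continuous_id)).intervalIntegrable _ _)
      · exact hcf.intervalIntegrable
    have h4 : (∫ u in (-1:ℝ)..1, Real.cos (ω * u) * f u) = Ca := by
      rw [hCa_def]
      exact shrink_aux _ (-1) 1 (by norm_num) (fun x hx => by rw [hf_supp x hx, mul_zero])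
    rw [h1, h2, h3, h4, hIcos]
  have hSgval : Sg = -Sb := by
    have h1 : Sg = ∫ u in (-1:ℝ)..1, Real.sin (ω * u) * g u := by
      rw [hSg_def]
      exact (shrink_aux _ (-1) 1 (by norm_num) (fun x hx => by
        rw [hg0 x hx, mul_zero])).symm
    have h2 : (∫ u in (-1:ℝ)..1, Real.sin (ω * u) * g u)
        = ∫ u in (-1:ℝ)..1, (Real.sin (ω * u) - Real.sin (ω * u) * f u) := by
      apply intervalIntegral.integral_congr
      intro u hu
      have hu' : u ∈ Icc (-1:ℝ) 1 := by
        rwa [Set.uIcc_of_le (by norm_num : (-1:ℝ) ≤ 1)] at hu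
      simp only [hg u]; rw [if_pos hu']; ring
    have h3 : (∫ u in (-1:ℝ)..1, (Real.sin (ω * u) - Real.sin (ω * u) * f u))
        = (∫ u in (-1:ℝ)..1, Real.sin (ω * u)) - ∫ u in (-1:ℝ)..1, Real.sin (ω * u) * f u := by
      apply intervalIntegral.integral_sub
      · exact ((Real.continuous_sin.comp (continuous_const.mul continuous_id)).intervalIntegrable _ _)
      · exact hsf.intervalIntegrable
    have h4 : (∫ u in (-1:ℝ)..1, Real.sin (ω * u) * f u) = Sb := by
      rw [hSb_def]
      exact shrink_aux _ (-1) 1 (by norm_num) (fun x hx => by rw [hf_supp x hx, mul_zero])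
    rw [h1, h2, h3, h4, hIsin]; ring
  -- M as a global integral
  have hM' : ∀ x, M x = ∫ t, f t * g (x + t) := by
    intro x
    rw [hM x]
    exact shrink_aux _ (-1) 1 (by norm_num) (fun t ht => by rw [hf_supp t ht, zero_mul])
  have hM0 : ∀ x, x ∉ Icc (-2:ℝ) 2 → M x = 0 := by
    intro x hx
    rw [hM' x]
    have : ∀ t, f t * g (x + t) = 0 := by
      intro t
      by_cases ht : t ∈ Icc (-1:ℝ) 1
      · have : x + t ∉ Icc (-1:ℝ) 1 := by
          intro hxt
          exact hx ⟨by linarith [hxt.1, ht.2], by linarith [hxt.2, ht.1]⟩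
        rw [hg0 _ this, mul_zero]
      · rw [hf_supp t ht, zero_mul]
    simp [this]
  -- product integrability
  have hP : Integrable (Function.uncurry fun x t =>
      Real.cos (ω * x) * (f t * g (x + t))) (volume.prod volume) := by
    have hmeas : AEStronglyMeasurable (Function.uncurry fun x t =>
        Real.cos (ω * x) * (f t * g (x + t))) (volume.prod volume) := by
      apply Measurable.aestronglyMeasurable
      exact ((Real.measurable_cos.comp (measurable_const.mul measurable_fst))).mul
        ((hf_meas.comp measurable_snd).mul
          (hg_meas.comp (measurable_fst.add measurable_snd)))
    have hdom : Integrable (fun p : ℝ × ℝ =>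
        Set.indicator (Icc (-2:ℝ) 2) (fun _ => (1:ℝ)) p.1 *
        Set.indicator (Icc (-1:ℝ) 1) (fun _ => (1:ℝ)) p.2) (volume.prod volume) := by
      apply Integrable.mul_prod _ hind
      rw [integrable_indicator_iff measurableSet_Icc]
      exact integrableOn_const (by simp [Real.volume_Icc])
    apply hdom.mono' hmeas
    apply ae_of_all
    rintro ⟨x, t⟩
    simp only [Function.uncurry, Real.norm_eq_abs]
    by_cases ht : t ∈ Icc (-1:ℝ) 1
    · by_cases hx : x ∈ Icc (-2:ℝ) 2
      · rw [Set.indicator_of_mem hx, Set.indicator_of_mem ht]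
        have h1 : |Real.cos (ω * x)| ≤ 1 := Real.abs_cos_le_one _
        have h2 : |f t| ≤ 1 := by
          rcases hf01 t ht with ⟨p, q⟩; rw [abs_of_nonneg p]; exact q
        have h3 : |g (x + t)| ≤ 1 := by
          by_cases hxt : x + t ∈ Icc (-1:ℝ) 1
          · rw [hg, if_pos hxt]
            rcases hf01 _ hxt with ⟨p, q⟩; rw [abs_of_nonneg (by linarith)]; linarith
          · rw [hg0 _ hxt]; simp
        calc |Real.cos (ω * x) * (f t * g (x + t))|
            = |Real.cos (ω * x)| * (|f t| * |g (x + t)|) := by rw [abs_mul, abs_mul]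
          _ ≤ 1 * (1 * 1) := by
              apply mul_le_mul h1 _ (by positivity) (by norm_num)
              apply mul_le_mul h2 h3 (abs_nonneg _) (by norm_num)
          _ = 1 * 1 := by norm_num
      · have hxt : x + t ∉ Icc (-1:ℝ) 1 := by
          intro h
          exact hx ⟨by linarith [h.1, ht.2], by linarith [h.2, ht.1]⟩
        rw [hg0 _ hxt]
        simp [Set.indicator_nonneg, Set.indicator_apply]
        positivity
    · rw [hf_supp t ht]
      simp [Set.indicator_apply]
      positivity
  -- the main computation
  have key : (∫ x, Real.cos (ω * x) * M x) = Cg * Ca + Sg * Sb := by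
    have step1 : (∫ x, Real.cos (ω * x) * M x)
        = ∫ x, ∫ t, Real.cos (ω * x) * (f t * g (x + t)) := by
      congr 1; funext x
      rw [hM' x, ← integral_const_mul]
    have step2 : (∫ x, ∫ t, Real.cos (ω * x) * (f t * g (x + t)))
        = ∫ t, ∫ x, Real.cos (ω * x) * (f t * g (x + t)) :=
      integral_integral_swap hP
    have inner_eq : ∀ t, (∫ x, Real.cos (ω * x) * (f t * g (x + t)))
        = f t * (Real.cos (ω * t) * Cg + Real.sin (ω * t) * Sg) := by
      intro t
      have e1 : (fun x => Real.cos (ω * x) * (f t * g (x + t)))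
          = fun x => f t * (Real.cos (ω * x) * g (x + t)) := funext fun x => by ring
      rw [e1, integral_const_mul]
      congr 1
      have e2 : (∫ x, Real.cos (ω * x) * g (x + t))
          = ∫ u, Real.cos (ω * (u - t)) * g u := by
        have := MeasureTheory.integral_add_right_eq_self (μ := volume)
          (fun u => Real.cos (ω * (u - t)) * g u) t
        rw [← this]
        congr 1; funext x
        simp
      rw [e2]
      have e3 : (fun u => Real.cos (ω * (u - t)) * g u)
          = fun u => Real.cos (ω * t) * (Real.cos (ω * u) * g u)
              + Real.sin (ω * t) * (Real.sin (ω * u) * g u) := by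
        funext u
        rw [mul_sub, Real.cos_sub]; ring
      rw [e3, integral_add (hcg.const_mul _) (hsg.const_mul _),
        integral_const_mul, integral_const_mul]
    have outer : (∫ t, f t * (Real.cos (ω * t) * Cg + Real.sin (ω * t) * Sg))
        = Cg * Ca + Sg * Sb := by
      have e4 : (fun t => f t * (Real.cos (ω * t) * Cg + Real.sin (ω * t) * Sg))
          = fun t => Cg * (Real.cos (ω * t) * f t) + Sg * (Real.sin (ω * t) * f t) :=
        funext fun t => by ring
      rw [e4, integral_add (hcf.const_mul _) (hsf.const_mul _),
        integral_const_mul, integral_const_mul]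
    rw [step1, step2]
    rw [show (fun t => ∫ x, Real.cos (ω * x) * (f t * g (x + t)))
          = fun t => f t * (Real.cos (ω * t) * Cg + Real.sin (ω * t) * Sg)
        from funext inner_eq]
    exact outer
  -- assemble
  have hAval : A m = (1/2) * (Cg * Ca + Sg * Sb) := by
    rw [hA m hm]
    congr 1
    rw [show (fun x => Real.cos (π * (m:ℝ) * x / 2) * M x)
          = fun x => Real.cos (ω * x) * M x from funext fun x => by rw [harg x]]
    rw [shrink_aux _ (-2) 2 (by norm_num) (fun x hx => by rw [hM0 x hx, mul_zero])]
    exact key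
  have hsin_eq : Real.sin ((m:ℝ) * π / 2) = Real.sin ω := by
    rw [hω_def]; ring_nf
  rw [hAval, hCgval, hSgval, haC, hbS, hsin_eq]
  have hmπ : (m:ℝ) * π ≠ 0 := by
    have := Real.pi_pos; positivity
  rw [hω_def]
  field_simp
  ring
end

section
/- All even cosine Fourier coefficients of M are nonpositive: for every integer k ≥ 1, ∫_{-2}^{2} cos(πkx) M(x) dx ≤ 0. -/
open Real MeasureTheory Set

theorem even_cosine_coeffs_nonpos (f g M : ℝ → ℝ)
    (hf_meas : Measurable f)
    (hf01 : ∀ x ∈ Icc (-1:ℝ) 1, 0 ≤ f x ∧ f x ≤ 1)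
    (hf_supp : ∀ x, x ∉ Icc (-1:ℝ) 1 → f x = 0)
    (hf_int : ∫ x in (-1:ℝ)..1, f x = 1)
    (hg : ∀ x, g x = if x ∈ Icc (-1:ℝ) 1 then 1 - f x else 0)
    (hM : ∀ x, M x = ∫ t in (-1:ℝ)..1, f t * g (x + t)) :
    ∀ k : ℕ, 1 ≤ k → ∫ x in (-2:ℝ)..2, Real.cos (π * k * x) * M x ≤ 0 := by
  intro k hk
  set c : ℝ := π * k with hc_def
  have hkpos : (0:ℝ) < k := by exact_mod_cast hk
  have hc : c ≠ 0 := by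
    have : (0:ℝ) < π * k := mul_pos Real.pi_pos hkpos
    exact ne_of_gt this
  have hI1 : MeasurableSet (Icc (-1:ℝ) 1) := measurableSet_Icc
  have hg_meas : Measurable g := by
    have : g = fun x => if x ∈ Icc (-1:ℝ) 1 then 1 - f x else 0 := funext hg
    rw [this]
    exact Measurable.ite hI1 (measurable_const.sub hf_meas) measurable_const
  have hg_supp : ∀ x, x ∉ Icc (-1:ℝ) 1 → g x = 0 := by
    intro x hx; rw [hg x, if_neg hx]
  have hg01 : ∀ x, 0 ≤ g x ∧ g x ≤ 1 := by
    intro x; rw [hg x]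
    by_cases hx : x ∈ Icc (-1:ℝ) 1
    · rw [if_pos hx]; constructor <;> [linarith [(hf01 x hx).2]; linarith [(hf01 x hx).1]]
    · rw [if_neg hx]; norm_num
  have hf_abs : ∀ x, |f x| ≤ (Icc (-1:ℝ) 1).indicator (fun _ => (1:ℝ)) x := by
    intro x
    by_cases hx : x ∈ Icc (-1:ℝ) 1
    · rw [indicator_of_mem hx]
      exact abs_le.mpr ⟨by linarith [(hf01 x hx).1], (hf01 x hx).2⟩
    · rw [indicator_of_notMem hx, hf_supp x hx]; simp
  have hg_abs : ∀ x, |g x| ≤ (Icc (-1:ℝ) 1).indicator (fun _ => (1:ℝ)) x := by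
    intro x
    by_cases hx : x ∈ Icc (-1:ℝ) 1
    · rw [indicator_of_mem hx]
      exact abs_le.mpr ⟨by linarith [(hg01 x).1], (hg01 x).2⟩
    · rw [indicator_of_notMem hx, hg_supp x hx]; simp
  have hind : Integrable ((Icc (-1:ℝ) 1).indicator (fun _ => (1:ℝ))) := by
    rw [integrable_indicator_iff hI1]
    exact integrableOn_const measure_Icc_lt_top.ne
  -- generic integrability
  have key : ∀ h : ℝ → ℝ, Measurable h →
      (∀ x, |h x| ≤ (Icc (-1:ℝ) 1).indicator (fun _ => (1:ℝ)) x) → Integrable h := by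
    intro h hm hb
    exact hind.mono' hm.aestronglyMeasurable (Filter.Eventually.of_forall hb)
  have mcos : Measurable (fun t : ℝ => Real.cos (c * t)) :=
    Real.measurable_cos.comp (measurable_id.const_mul c)
  have msin : Measurable (fun t : ℝ => Real.sin (c * t)) :=
    Real.measurable_sin.comp (measurable_id.const_mul c)
  have int_f : Integrable f := key f hf_meas hf_abs
  have int_cf : Integrable (fun t => Real.cos (c * t) * f t) := by
    refine key _ (mcos.mul hf_meas) (fun x => ?_)
    calc |Real.cos (c * x) * f x| = |Real.cos (c * x)| * |f x| := abs_mul _ _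
      _ ≤ 1 * |f x| := by
          exact mul_le_mul_of_nonneg_right (Real.abs_cos_le_one _) (abs_nonneg _)
      _ = |f x| := one_mul _
      _ ≤ _ := hf_abs x
  have int_sf : Integrable (fun t => Real.sin (c * t) * f t) := by
    refine key _ (msin.mul hf_meas) (fun x => ?_)
    calc |Real.sin (c * x) * f x| = |Real.sin (c * x)| * |f x| := abs_mul _ _
      _ ≤ 1 * |f x| := mul_le_mul_of_nonneg_right (Real.abs_sin_le_one _) (abs_nonneg _)
      _ = |f x| := one_mul _
      _ ≤ _ := hf_abs x
  have int_cg : Integrable (fun t => Real.cos (c * t) * g t) := by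
    refine key _ (mcos.mul hg_meas) (fun x => ?_)
    calc |Real.cos (c * x) * g x| = |Real.cos (c * x)| * |g x| := abs_mul _ _
      _ ≤ 1 * |g x| := mul_le_mul_of_nonneg_right (Real.abs_cos_le_one _) (abs_nonneg _)
      _ = |g x| := one_mul _
      _ ≤ _ := hg_abs x
  have int_sg : Integrable (fun t => Real.sin (c * t) * g t) := by
    refine key _ (msin.mul hg_meas) (fun x => ?_)
    calc |Real.sin (c * x) * g x| = |Real.sin (c * x)| * |g x| := abs_mul _ _
      _ ≤ 1 * |g x| := mul_le_mul_of_nonneg_right (Real.abs_sin_le_one _) (abs_nonneg _)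
      _ = |g x| := one_mul _
      _ ≤ _ := hg_abs x
  set A : ℝ := ∫ t, Real.cos (c * t) * f t with hA
  set B : ℝ := ∫ t, Real.sin (c * t) * f t with hB
  set Ag : ℝ := ∫ t, Real.cos (c * t) * g t with hAg
  set Bg : ℝ := ∫ t, Real.sin (c * t) * g t with hBg
  -- zero integrals of cos, sin over Icc
  have hcos0 : ∫ s in Icc (-1:ℝ) 1, Real.cos (c * s) = 0 := by
    rw [integral_Icc_eq_integral_Ioc, ← intervalIntegral.integral_of_le (by norm_num : (-1:ℝ) ≤ 1)]
    rw [intervalIntegral.integral_comp_mul_left Real.cos hc, integral_cos]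
    have : Real.sin c = 0 := by
      rw [hc_def, mul_comm]; exact Real.sin_nat_mul_pi k
    simp [Real.sin_neg, this]
  have hsin0 : ∫ s in Icc (-1:ℝ) 1, Real.sin (c * s) = 0 := by
    rw [integral_Icc_eq_integral_Ioc, ← intervalIntegral.integral_of_le (by norm_num : (-1:ℝ) ≤ 1)]
    rw [intervalIntegral.integral_comp_mul_left Real.sin hc, integral_sin]
    simp [Real.cos_neg]
  -- Ag = -A, Bg = -B
  have hAgA : Ag = -A := by
    have h1 : Ag = ∫ t in Icc (-1:ℝ) 1, Real.cos (c * t) * g t := by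
      rw [hAg]
      exact (setIntegral_eq_integral_of_forall_compl_eq_zero
        (fun x hx => by rw [hg_supp x hx, mul_zero])).symm
    have h2 : A = ∫ t in Icc (-1:ℝ) 1, Real.cos (c * t) * f t := by
      rw [hA]
      exact (setIntegral_eq_integral_of_forall_compl_eq_zero
        (fun x hx => by rw [hf_supp x hx, mul_zero])).symm
    rw [h1, h2]
    have h3 : ∀ t ∈ Icc (-1:ℝ) 1, Real.cos (c * t) * g t
        = Real.cos (c * t) - Real.cos (c * t) * f t := by
      intro t ht; rw [hg t, if_pos ht]; ring
    rw [setIntegral_congr_fun hI1 h3, integral_sub]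
    · rw [hcos0]; ring
    · exact (Real.continuous_cos.comp (continuous_const.mul continuous_id)).integrableOn_Icc
    · exact int_cf.integrableOn
  have hBgB : Bg = -B := by
    have h1 : Bg = ∫ t in Icc (-1:ℝ) 1, Real.sin (c * t) * g t := by
      rw [hBg]
      exact (setIntegral_eq_integral_of_forall_compl_eq_zero
        (fun x hx => by rw [hg_supp x hx, mul_zero])).symm
    have h2 : B = ∫ t in Icc (-1:ℝ) 1, Real.sin (c * t) * f t := by
      rw [hB]
      exact (setIntegral_eq_integral_of_forall_compl_eq_zero
        (fun x hx => by rw [hf_supp x hx, mul_zero])).symm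
    rw [h1, h2]
    have h3 : ∀ t ∈ Icc (-1:ℝ) 1, Real.sin (c * t) * g t
        = Real.sin (c * t) - Real.sin (c * t) * f t := by
      intro t ht; rw [hg t, if_pos ht]; ring
    rw [setIntegral_congr_fun hI1 h3, integral_sub]
    · rw [hsin0]; ring
    · exact (Real.continuous_sin.comp (continuous_const.mul continuous_id)).integrableOn_Icc
    · exact int_sf.integrableOn
  -- M as integral over ℝ
  have hM' : ∀ x, M x = ∫ t, f t * g (x + t) := by
    intro x
    rw [hM x, intervalIntegral.integral_of_le (by norm_num : (-1:ℝ) ≤ 1),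
      ← integral_Icc_eq_integral_Ioc]
    exact setIntegral_eq_integral_of_forall_compl_eq_zero
      (fun t ht => by rw [hf_supp t ht, zero_mul])
  -- M vanishes outside Icc (-2) 2
  have hM0 : ∀ x, x ∉ Icc (-2:ℝ) 2 → M x = 0 := by
    intro x hx
    rw [hM' x]
    have : ∀ t, f t * g (x + t) = 0 := by
      intro t
      by_cases ht : t ∈ Icc (-1:ℝ) 1
      · have : x + t ∉ Icc (-1:ℝ) 1 := by
          simp only [mem_Icc, not_and_or, not_le] at hx ⊢
          rcases hx with h | h
          · left; linarith [ht.2]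
          · right; linarith [ht.1]
        rw [hg_supp _ this, mul_zero]
      · rw [hf_supp t ht, zero_mul]
    simp [this]
  -- bound for M-related product
  have int_prod : Integrable (fun p : ℝ × ℝ =>
      Real.cos (c * p.1) * (f p.2 * g (p.1 + p.2))) (volume.prod volume) := by
    have hmeas : Measurable (fun p : ℝ × ℝ => Real.cos (c * p.1) * (f p.2 * g (p.1 + p.2))) :=
      (Real.measurable_cos.comp (measurable_fst.const_mul c)).mul
        ((hf_meas.comp measurable_snd).mul
          (hg_meas.comp (measurable_fst.add measurable_snd)))
    have hS : MeasurableSet (Icc (-2:ℝ) 2 ×ˢ Icc (-1:ℝ) 1) := measurableSet_Icc.prod hI1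
    have hfin : (volume.prod volume) (Icc (-2:ℝ) 2 ×ˢ Icc (-1:ℝ) 1) < ⊤ := by
      rw [Measure.prod_prod]
      exact ENNReal.mul_lt_top measure_Icc_lt_top measure_Icc_lt_top
    have hbint : Integrable ((Icc (-2:ℝ) 2 ×ˢ Icc (-1:ℝ) 1).indicator (fun _ => (1:ℝ)))
        (volume.prod volume) := by
      rw [integrable_indicator_iff hS]
      exact integrableOn_const hfin.ne
    refine hbint.mono' hmeas.aestronglyMeasurable (Filter.Eventually.of_forall fun p => ?_)
    by_cases h2 : p.2 ∈ Icc (-1:ℝ) 1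
    · by_cases h1 : p.1 ∈ Icc (-2:ℝ) 2
      · rw [indicator_of_mem (mk_mem_prod h1 h2)]
        have := abs_mul (f p.2) (g (p.1 + p.2))
        calc |Real.cos (c * p.1) * (f p.2 * g (p.1 + p.2))|
            = |Real.cos (c * p.1)| * (|f p.2| * |g (p.1 + p.2)|) := by
              rw [abs_mul, abs_mul]
          _ ≤ 1 * (1 * 1) := by
              gcongr
              · exact Real.abs_cos_le_one _
              · exact abs_le.mpr ⟨by linarith [(hf01 _ h2).1], (hf01 _ h2).2⟩
              · exact abs_le.mpr ⟨by linarith [(hg01 (p.1 + p.2)).1], (hg01 (p.1 + p.2)).2⟩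
          _ = 1 := by norm_num
      · have : p.1 + p.2 ∉ Icc (-1:ℝ) 1 := by
          simp only [mem_Icc, not_and_or, not_le] at h1 ⊢
          rcases h1 with h | h
          · left; linarith [h2.2]
          · right; linarith [h2.1]
        rw [hg_supp _ this]
        simp [indicator_nonneg (fun _ _ => zero_le_one)]
    · rw [hf_supp _ h2]
      simp [indicator_nonneg (fun _ _ => zero_le_one)]
  -- main computation
  have main : ∫ x in (-2:ℝ)..2, Real.cos (c * x) * M x = Ag * A + Bg * B := by
    have step1 : ∫ x in (-2:ℝ)..2, Real.cos (c * x) * M x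
        = ∫ x, Real.cos (c * x) * M x := by
      rw [intervalIntegral.integral_of_le (by norm_num : (-2:ℝ) ≤ 2),
        ← integral_Icc_eq_integral_Ioc]
      exact setIntegral_eq_integral_of_forall_compl_eq_zero
        (fun x hx => by rw [hM0 x hx, mul_zero])
    rw [step1]
    have step2 : ∫ x, Real.cos (c * x) * M x
        = ∫ x, ∫ t, Real.cos (c * x) * (f t * g (x + t)) := by
      congr 1; funext x
      rw [hM' x, ← integral_const_mul]
    rw [step2, integral_integral_swap int_prod]
    have step3 : ∀ t, (∫ x, Real.cos (c * x) * (f t * g (x + t)))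
        = f t * (Real.cos (c * t) * Ag + Real.sin (c * t) * Bg) := by
      intro t
      have e1 : (fun x => Real.cos (c * x) * (f t * g (x + t)))
          = fun x => f t * ((fun s => Real.cos (c * (s - t)) * g s) (x + t)) := by
        funext x
        simp only []
        have : c * (x + t - t) = c * x := by ring
        rw [this]; ring
      rw [e1, integral_const_mul, integral_add_right_eq_self (fun s => Real.cos (c * (s - t)) * g s) t]
      congr 1
      have e2 : (fun s => Real.cos (c * (s - t)) * g s)
          = fun s => Real.cos (c * t) * (Real.cos (c * s) * g s)
            + Real.sin (c * t) * (Real.sin (c * s) * g s) := by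
        funext s
        have : c * (s - t) = c * s - c * t := by ring
        rw [this, Real.cos_sub]; ring
      rw [e2, integral_add (int_cg.const_mul _) (int_sg.const_mul _),
        integral_const_mul, integral_const_mul]
    have step4 : (fun t => ∫ x, Real.cos (c * x) * (f t * g (x + t)))
        = fun t => Ag * (Real.cos (c * t) * f t) + Bg * (Real.sin (c * t) * f t) := by
      funext t; rw [step3 t]; ring
    rw [step4, integral_add (int_cf.const_mul _) (int_sf.const_mul _),
      integral_const_mul, integral_const_mul]
  rw [main, hAgA, hBgB]
  nlinarith [sq_nonneg A, sq_nonneg B]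
end

section
/- For every integer m ≥ 1, B_m = −(4/(mπ)) sin(mπ/2) · b_m; in particular B_{2m} = 0 for all m ≥ 1. -/
open Real MeasureTheory Set

/-- A measurable function bounded by 1 and vanishing outside `Icc (-1) 1` is integrable. -/
lemma aux_integrable {h : ℝ → ℝ} (hm : Measurable h) (hb : ∀ x, |h x| ≤ 1)
    (hs : ∀ x, x ∉ Icc (-1:ℝ) 1 → h x = 0) : Integrable h := by
  have hind : Integrable ((Icc (-1:ℝ) 1).indicator fun _ => (1:ℝ)) := by
    rw [integrable_indicator_iff measurableSet_Icc]
    exact integrableOn_const (by simp [Real.volume_Icc])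
  refine hind.mono' hm.aestronglyMeasurable ?_
  filter_upwards with x
  by_cases hx : x ∈ Icc (-1:ℝ) 1
  · simp [indicator_of_mem hx, Real.norm_eq_abs, hb x]
  · simp [indicator_of_notMem hx, Real.norm_eq_abs, hs x hx]

/-- Integrals of functions vanishing outside `Icc (-1) 1` can be truncated. -/
lemma aux_trunc {h : ℝ → ℝ} (hi : Integrable h)
    (hs : ∀ x, x ∉ Icc (-1:ℝ) 1 → h x = 0) {a b : ℝ} (ha : a ≤ -1) (hb : 1 ≤ b) :
    ∫ x in a..b, h x = ∫ x in (-1:ℝ)..1, h x := by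
  have hzero : ∀ (u v : ℝ), (∀ x ∈ Set.uIoc u v, h x ≠ 0 → x = u ∨ x = v) →
      ∫ x in u..v, h x = 0 := by
    intro u v hbad
    have hae : ∀ᵐ x ∂(volume : Measure ℝ), x ∈ Set.uIoc u v → h x = (fun _ => (0:ℝ)) x := by
      rw [ae_iff]
      refine measure_mono_null ?_ (Set.Finite.measure_zero (by exact (Set.finite_singleton v).insert u) volume)
      intro x hx
      push_neg at hx
      rcases hbad x hx.1 hx.2 with h | h <;> simp [h]
    rw [intervalIntegral.integral_congr_ae hae]
    simp
  have hmem_ne : ∀ x, h x ≠ 0 → x ∈ Icc (-1:ℝ) 1 := by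
    intro x hx
    by_contra hc
    exact hx (hs x hc)
  have hzero1 : ∫ x in a..(-1:ℝ), h x = 0 := by
    apply hzero
    intro x hx hne
    rw [Set.uIoc_of_le ha] at hx
    right
    have := hmem_ne x hne
    linarith [hx.2, this.1]
  have hzero2 : ∫ x in (1:ℝ)..b, h x = 0 := by
    apply hzero
    intro x hx hne
    rw [Set.uIoc_of_le hb] at hx
    have := hmem_ne x hne
    linarith [hx.1, this.2]
  have i1 : IntervalIntegrable h volume a (-1) := hi.intervalIntegrable
  have i2 : IntervalIntegrable h volume (-1) 1 := hi.intervalIntegrable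
  have i3 : IntervalIntegrable h volume 1 b := hi.intervalIntegrable
  have e1 := intervalIntegral.integral_add_adjacent_intervals i1 (i2.trans i3)
  have e2 := intervalIntegral.integral_add_adjacent_intervals i2 i3
  rw [← e1, ← e2, hzero1, hzero2]
  ring

theorem sine_coeff_of_M (f g M : ℝ → ℝ)
    (hf_meas : Measurable f)
    (hf01 : ∀ x ∈ Icc (-1:ℝ) 1, 0 ≤ f x ∧ f x ≤ 1)
    (hf_supp : ∀ x, x ∉ Icc (-1:ℝ) 1 → f x = 0)
    (hf_int : ∫ x in (-1:ℝ)..1, f x = 1)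
    (hg : ∀ x, g x = if x ∈ Icc (-1:ℝ) 1 then 1 - f x else 0)
    (hM : ∀ x, M x = ∫ t in (-1:ℝ)..1, f t * g (x + t))
    (b B : ℕ → ℝ)
    (hb : ∀ m : ℕ, 1 ≤ m → b m = (1/2) * ∫ x in (-2:ℝ)..2, Real.sin (π * m * x / 2) * f x)
    (hB : ∀ m : ℕ, 1 ≤ m → B m = (1/2) * ∫ x in (-2:ℝ)..2, Real.sin (π * m * x / 2) * M x) :
    (∀ m : ℕ, 1 ≤ m → B m = -(4 / ((m:ℝ) * π)) * Real.sin ((m:ℝ) * π / 2) * b m) ∧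
    (∀ m : ℕ, 1 ≤ m → B (2 * m) = 0) := by
  have hfb : ∀ x, |f x| ≤ 1 := by
    intro x
    by_cases hx : x ∈ Icc (-1:ℝ) 1
    · rcases hf01 x hx with ⟨h0, h1⟩; rw [abs_of_nonneg h0]; exact h1
    · simp [hf_supp x hx]
  have hg_meas : Measurable g := by
    have hge : g = fun x => (Icc (-1:ℝ) 1).indicator (fun x => 1 - f x) x := by
      funext x; rw [hg x]
      by_cases hx : x ∈ Icc (-1:ℝ) 1 <;> simp [indicator, hx]
    rw [hge]
    exact (measurable_const.sub hf_meas).indicator measurableSet_Icc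
  have hg0 : ∀ x, x ∉ Icc (-1:ℝ) 1 → g x = 0 := fun x hx => by rw [hg x, if_neg hx]
  have hgb : ∀ x, |g x| ≤ 1 := by
    intro x; rw [hg x]
    by_cases hx : x ∈ Icc (-1:ℝ) 1
    · rcases hf01 x hx with ⟨h0, h1⟩
      rw [if_pos hx, abs_of_nonneg (by linarith)]; linarith
    · simp [hx]
  have hf_int' : Integrable f := aux_integrable hf_meas hfb hf_supp
  have hg_int' : Integrable g := aux_integrable hg_meas hgb hg0
  have key : ∀ m : ℕ, 1 ≤ m → B m = -(4 / ((m:ℝ) * π)) * Real.sin ((m:ℝ) * π / 2) * b m := by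
    intro m hm1
    have hmpos : (0:ℝ) < m := by exact_mod_cast hm1
    set c : ℝ := π * m / 2 with hc_def
    have hc : 0 < c := by rw [hc_def]; positivity
    have harg : ∀ x : ℝ, π * (m:ℝ) * x / 2 = c * x := fun x => by rw [hc_def]; ring
    have hsin_cont : Continuous fun u : ℝ => Real.sin (c * u) :=
      Real.continuous_sin.comp (continuous_const.mul continuous_id)
    have hcos_cont : Continuous fun u : ℝ => Real.cos (c * u) :=
      Real.continuous_cos.comp (continuous_const.mul continuous_id)
    have int_sf : Integrable (fun u => Real.sin (c * u) * f u) :=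
      hf_int'.bdd_mul hsin_cont.aestronglyMeasurable
        (c := 1) (ae_of_all _ fun x => by rw [Real.norm_eq_abs]; exact Real.abs_sin_le_one _)
    have int_cf : Integrable (fun u => Real.cos (c * u) * f u) :=
      hf_int'.bdd_mul hcos_cont.aestronglyMeasurable
        (c := 1) (ae_of_all _ fun x => by rw [Real.norm_eq_abs]; exact Real.abs_cos_le_one _)
    have int_sg : Integrable (fun u => Real.sin (c * u) * g u) :=
      hg_int'.bdd_mul hsin_cont.aestronglyMeasurable
        (c := 1) (ae_of_all _ fun x => by rw [Real.norm_eq_abs]; exact Real.abs_sin_le_one _)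
    have int_cg : Integrable (fun u => Real.cos (c * u) * g u) :=
      hg_int'.bdd_mul hcos_cont.aestronglyMeasurable
        (c := 1) (ae_of_all _ fun x => by rw [Real.norm_eq_abs]; exact Real.abs_cos_le_one _)
    set Sf := ∫ u in (-1:ℝ)..1, Real.sin (c * u) * f u with hSf
    set Cf := ∫ u in (-1:ℝ)..1, Real.cos (c * u) * f u with hCf
    set Sg := ∫ u in (-1:ℝ)..1, Real.sin (c * u) * g u with hSg
    set Cg := ∫ u in (-1:ℝ)..1, Real.cos (c * u) * g u with hCg
    -- b m in terms of Sf
    have hbm : b m = (1/2) * Sf := by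
      rw [hb m hm1, hSf]
      congr 1
      have e1 : (∫ x in (-2:ℝ)..2, Real.sin (π * m * x / 2) * f x)
          = ∫ x in (-2:ℝ)..2, Real.sin (c * x) * f x :=
        intervalIntegral.integral_congr (fun x _ => by rw [harg x])
      rw [e1]
      exact aux_trunc int_sf (fun x hx => by rw [hf_supp x hx, mul_zero])
        (by norm_num) (by norm_num)
    -- B m as a double integral
    have hBm : B m = (1/2) * ∫ x in (-2:ℝ)..2, ∫ t in (-1:ℝ)..1,
        Real.sin (c * x) * (f t * g (x + t)) := by
      rw [hB m hm1]
      congr 1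
      apply intervalIntegral.integral_congr
      intro x _
      dsimp only
      rw [harg x, hM x, ← intervalIntegral.integral_const_mul]
    -- Fubini
    haveI fin1 : IsFiniteMeasure ((volume : Measure ℝ).restrict (Ioc (-2:ℝ) 2)) := by
      constructor; rw [Measure.restrict_apply_univ]; simp [Real.volume_Ioc]
    haveI fin2 : IsFiniteMeasure ((volume : Measure ℝ).restrict (Ioc (-1:ℝ) 1)) := by
      constructor; rw [Measure.restrict_apply_univ]; simp [Real.volume_Ioc]
    have hswap : (∫ x in (-2:ℝ)..2, ∫ t in (-1:ℝ)..1, Real.sin (c * x) * (f t * g (x + t)))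
        = ∫ t in Ioc (-1:ℝ) 1, ∫ x in Ioc (-2:ℝ) 2, Real.sin (c * x) * (f t * g (x + t)) := by
      have h1 : ∀ x : ℝ, (∫ t in (-1:ℝ)..1, Real.sin (c * x) * (f t * g (x + t)))
          = ∫ t in Ioc (-1:ℝ) 1, Real.sin (c * x) * (f t * g (x + t)) :=
        fun x => intervalIntegral.integral_of_le (by norm_num)
      simp only [h1]
      rw [intervalIntegral.integral_of_le (by norm_num : (-2:ℝ) ≤ 2)]
      apply MeasureTheory.integral_integral_swap
      have hmeas : Measurable (Function.uncurry fun x t =>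
          Real.sin (c * x) * (f t * g (x + t))) := by
        apply Measurable.mul
        · exact Real.measurable_sin.comp (measurable_const.mul measurable_fst)
        · exact (hf_meas.comp measurable_snd).mul
            (hg_meas.comp (measurable_fst.add measurable_snd))
      apply Integrable.mono' (integrable_const (1:ℝ)) hmeas.aestronglyMeasurable
      filter_upwards with p
      simp only [Function.uncurry]
      rw [Real.norm_eq_abs, abs_mul, abs_mul]
      have h2 := Real.abs_sin_le_one (c * p.1)
      have h3 := hfb p.2
      have h4 := hgb (p.1 + p.2)
      have h5 := abs_nonneg (f p.2)
      have h6 := abs_nonneg (g (p.1 + p.2))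
      have h7 := abs_nonneg (Real.sin (c * p.1))
      calc |Real.sin (c * p.1)| * (|f p.2| * |g (p.1 + p.2)|)
          ≤ 1 * (1 * 1) := by
            apply mul_le_mul h2 (mul_le_mul h3 h4 h6 (by norm_num)) (mul_nonneg h5 h6) (by norm_num)
        _ = 1 := by norm_num
    -- inner integral
    have hinner : ∀ t ∈ Icc (-1:ℝ) 1,
        (∫ x in Ioc (-2:ℝ) 2, Real.sin (c * x) * (f t * g (x + t)))
        = f t * (Real.cos (c * t) * Sg - Real.sin (c * t) * Cg) := by
      intro t ht
      rw [← intervalIntegral.integral_of_le (by norm_num : (-2:ℝ) ≤ 2)]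
      have step1 : (∫ x in (-2:ℝ)..2, Real.sin (c * x) * (f t * g (x + t)))
          = f t * ∫ x in (-2:ℝ)..2, Real.sin (c * x) * g (x + t) := by
        rw [← intervalIntegral.integral_const_mul]
        exact intervalIntegral.integral_congr (fun x _ => by ring)
      rw [step1]
      congr 1
      have hcomp : (∫ x in (-2:ℝ)..2, Real.sin (c * x) * g (x + t))
          = ∫ u in (-2+t:ℝ)..(2+t), Real.sin (c * (u - t)) * g u := by
        rw [← intervalIntegral.integral_comp_add_right
          (fun u => Real.sin (c * (u - t)) * g u) t]
        apply intervalIntegral.integral_congr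
        intro x _
        have hx : c * (x + t - t) = c * x := by ring
        simp only [hx]
      have hint_h : Integrable (fun u => Real.sin (c * (u - t)) * g u) :=
        hg_int'.bdd_mul ((Real.continuous_sin.comp
          (continuous_const.mul (continuous_id.sub continuous_const))).aestronglyMeasurable)
          (c := 1) (ae_of_all _ fun x => by rw [Real.norm_eq_abs]; exact Real.abs_sin_le_one _)
      have htrunc := aux_trunc hint_h (fun u hu => by rw [hg0 u hu, mul_zero])
        (by linarith [ht.2] : (-2:ℝ) + t ≤ -1) (by linarith [ht.1] : (1:ℝ) ≤ 2 + t)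
      rw [hcomp, htrunc]
      have hexp : (∫ u in (-1:ℝ)..1, Real.sin (c * (u - t)) * g u)
          = ∫ u in (-1:ℝ)..1, (Real.cos (c * t) * (Real.sin (c * u) * g u)
            - Real.sin (c * t) * (Real.cos (c * u) * g u)) := by
        apply intervalIntegral.integral_congr
        intro u _
        dsimp only
        have h1 : c * (u - t) = c * u - c * t := by ring
        rw [h1, Real.sin_sub]; ring
      rw [hexp, intervalIntegral.integral_sub
          ((int_sg.intervalIntegrable).const_mul _) ((int_cg.intervalIntegrable).const_mul _),
        intervalIntegral.integral_const_mul, intervalIntegral.integral_const_mul,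
        ← hSg, ← hCg]
    -- values of Sg and Cg
    have hsin_int : (∫ u in (-1:ℝ)..1, Real.sin (c * u)) = 0 := by
      rw [intervalIntegral.integral_comp_mul_left Real.sin (ne_of_gt hc),
        integral_sin]
      have h1 : c * (-1) = -(c * 1) := by ring
      rw [h1, Real.cos_neg]
      simp
    have hcos_int : (∫ u in (-1:ℝ)..1, Real.cos (c * u)) = 2 * Real.sin c / c := by
      rw [intervalIntegral.integral_comp_mul_left Real.cos (ne_of_gt hc),
        integral_cos]
      have h1 : c * (-1) = -(c * 1) := by ring
      rw [h1, Real.sin_neg, smul_eq_mul]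
      field_simp
      ring
    have hgf : ∀ (k : ℝ → ℝ), (∫ u in (-1:ℝ)..1, k u * g u)
        = ∫ u in (-1:ℝ)..1, (k u - k u * f u) := by
      intro k
      apply intervalIntegral.integral_congr
      intro u hu
      rw [Set.uIcc_of_le (by norm_num : (-1:ℝ) ≤ 1)] at hu
      dsimp only
      rw [hg u, if_pos hu]; ring
    have hSg_eq : Sg = -Sf := by
      rw [hSg, hgf, intervalIntegral.integral_sub
        (hsin_cont.intervalIntegrable _ _) (int_sf.intervalIntegrable),
        hsin_int, ← hSf, zero_sub]
    have hCg_eq : Cg = 2 * Real.sin c / c - Cf := by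
      rw [hCg, hgf, intervalIntegral.integral_sub
        (hcos_cont.intervalIntegrable _ _) (int_cf.intervalIntegrable),
        hcos_int, ← hCf]
    -- outer integral
    have houter : (∫ t in Ioc (-1:ℝ) 1,
        f t * (Real.cos (c * t) * Sg - Real.sin (c * t) * Cg)) = Sg * Cf - Cg * Sf := by
      rw [← intervalIntegral.integral_of_le (by norm_num : (-1:ℝ) ≤ 1)]
      have h1 : ∀ t : ℝ, f t * (Real.cos (c * t) * Sg - Real.sin (c * t) * Cg)
          = Sg * (Real.cos (c * t) * f t) - Cg * (Real.sin (c * t) * f t) := fun t => by ring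
      simp only [h1]
      rw [intervalIntegral.integral_sub
          ((int_cf.intervalIntegrable).const_mul _) ((int_sf.intervalIntegrable).const_mul _),
        intervalIntegral.integral_const_mul, intervalIntegral.integral_const_mul,
        ← hCf, ← hSf]
    have hBfinal : B m = (1/2) * (Sg * Cf - Cg * Sf) := by
      rw [hBm, hswap, ← houter]
      congr 1
      exact setIntegral_congr_fun measurableSet_Ioc
        (fun t ht => hinner t (Ioc_subset_Icc_self ht))
    rw [hBfinal, hSg_eq, hCg_eq, hbm]
    have hπ : π ≠ 0 := Real.pi_ne_zero
    have hm0 : (m:ℝ) ≠ 0 := ne_of_gt hmpos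
    rw [hc_def]
    have hsa : Real.sin (π * m / 2) = Real.sin ((m:ℝ) * π / 2) := by ring_nf
    rw [hsa]
    field_simp
    ring
  refine ⟨key, fun m hm => ?_⟩
  rw [key (2 * m) (by omega)]
  have h0 : Real.sin (((2 * m : ℕ):ℝ) * π / 2) = 0 := by
    push_cast
    have h1 : (2:ℝ) * m * π / 2 = m * π := by ring
    rw [h1]
    exact Real.sin_nat_mul_pi m
  rw [h0]
  ring
end

section
/- Let T be a positive integer. For every integer m with 1 ≤ m < 2T, |(2m/π) Σ_{k=T+1}^{∞} ((-1)^k sin(πm/2)/(m² − 4k²)) c_k| ≤ (1/(4 − m²/T²)) · (2m/(π√(6T³))). -/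
set_option maxHeartbeats 1000000

open Real MeasureTheory Set

private lemma intInt_of_bdd {h : ℝ → ℝ} (hm : Measurable h) {C : ℝ}
    (hb : ∀ x, |h x| ≤ C) : IntervalIntegrable h volume (-1) 1 := by
  rw [intervalIntegrable_iff]
  have he : Set.uIoc (-1:ℝ) 1 = Ioc (-1:ℝ) 1 := uIoc_of_le (by norm_num)
  rw [he]
  exact Measure.integrableOn_of_bounded measure_Ioc_lt_top.ne hm.aestronglyMeasurable
    (ae_of_all _ fun x => by simpa [Real.norm_eq_abs] using hb x)

private lemma integral_cos_pi_int (n : ℤ) :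
    ∫ x in (-1:ℝ)..1, Real.cos (π * n * x) = if n = 0 then 2 else 0 := by
  split_ifs with h
  · norm_num [h]
  · have hc : (π * (n:ℝ)) ≠ 0 := mul_ne_zero Real.pi_ne_zero (Int.cast_ne_zero.mpr h)
    have hs : Real.sin (π * n) = 0 := by rw [mul_comm]; exact Real.sin_int_mul_pi n
    have : (∫ x in (-1:ℝ)..1, Real.cos (π * n * x))
        = (π * (n:ℝ))⁻¹ • ∫ x in (π * (n:ℝ)) * (-1)..(π * (n:ℝ)) * 1, Real.cos x := by
      rw [← intervalIntegral.integral_comp_mul_left Real.cos hc]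
    rw [this, integral_cos, mul_one, mul_neg_one, Real.sin_neg, hs]
    simp

private lemma integral_cos_pi_nat (n : ℕ) :
    ∫ x in (-1:ℝ)..1, Real.cos (π * n * x) = if n = 0 then 2 else 0 := by
  have := integral_cos_pi_int (n : ℤ)
  simp only [Int.cast_natCast] at this
  rw [this]
  simp

private lemma integral_cos_mul_cos (a b : ℕ) (ha : 1 ≤ a) (hb : 1 ≤ b) :
    ∫ x in (-1:ℝ)..1, Real.cos (π * a * x) * Real.cos (π * b * x)
      = if a = b then 1 else 0 := by
  have key : ∀ x ∈ uIcc (-1:ℝ) 1, Real.cos (π * a * x) * Real.cos (π * b * x)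
      = (fun x => (Real.cos (π * (((a:ℤ) - b : ℤ):ℝ) * x)
          + Real.cos (π * (((a:ℤ) + b : ℤ):ℝ) * x)) / 2) x := by
    intro x _
    have e1 : π * (((a:ℤ) - b : ℤ):ℝ) * x = π * a * x - π * b * x := by push_cast; ring
    have e2 : π * (((a:ℤ) + b : ℤ):ℝ) * x = π * a * x + π * b * x := by push_cast; ring
    simp only [e1, e2, Real.cos_sub, Real.cos_add]
    ring
  rw [intervalIntegral.integral_congr key]
  have hI1 : IntervalIntegrable (fun x => Real.cos (π * (((a:ℤ) - b : ℤ):ℝ) * x)) volume (-1) 1 :=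
    (Real.continuous_cos.comp (continuous_const.mul continuous_id)).intervalIntegrable _ _
  have hI2 : IntervalIntegrable (fun x => Real.cos (π * (((a:ℤ) + b : ℤ):ℝ) * x)) volume (-1) 1 :=
    (Real.continuous_cos.comp (continuous_const.mul continuous_id)).intervalIntegrable _ _
  rw [intervalIntegral.integral_div, intervalIntegral.integral_add hI1 hI2,
    integral_cos_pi_int, integral_cos_pi_int]
  by_cases h : a = b
  · subst h
    have h2 : ((a:ℤ) + a) ≠ 0 := by omega
    simp [h2]
  · have h1 : ((a:ℤ) - b) ≠ 0 := by omega
    have h2 : ((a:ℤ) + b) ≠ 0 := by omega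
    simp [h1, h2, h]

private lemma quart_tail (T : ℕ) (hT : 1 ≤ T) (N : ℕ) :
    ∑ k ∈ Finset.range N, 1/((T:ℝ)+1+k)^4 ≤ 1/(3*(T:ℝ)^3) := by
  have hT1 : (1:ℝ) ≤ T := by exact_mod_cast hT
  have main : ∀ N : ℕ, ∑ k ∈ Finset.range N, 1/((T:ℝ)+1+k)^4
      ≤ 1/(3*(T:ℝ)^3) - 1/(3*((T:ℝ)+N)^3) := by
    intro N
    induction N with
    | zero => simp
    | succ N ih =>
      rw [Finset.sum_range_succ]
      set n : ℝ := (T:ℝ) + N with hn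
      have hn1 : (1:ℝ) ≤ n := by
        have : (0:ℝ) ≤ N := Nat.cast_nonneg N
        simp only [hn]; linarith
      have h0 : (0:ℝ) < n := by linarith
      have h01 : (0:ℝ) < n + 1 := by linarith
      have e : 1/(3*n^3) - 1/(3*(n+1)^3) = (3*n^2+3*n+1)/(3*n^3*(n+1)^3) := by
        field_simp
        ring
      have step : 1/(n+1)^4 ≤ 1/(3*n^3) - 1/(3*(n+1)^3) := by
        rw [e, div_le_div_iff₀ (by positivity) (by positivity)]
        nlinarith [mul_le_mul_of_nonneg_left
          (show 3*n^3 ≤ (3*n^2+3*n+1)*(n+1) by nlinarith)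
          (show (0:ℝ) ≤ (n+1)^3 by positivity)]
      have e2 : (T:ℝ)+1+(N:ℝ) = n + 1 := by simp only [hn]; ring
      have e3 : (T:ℝ)+((N:ℕ)+1 : ℕ) = n + 1 := by push_cast; simp only [hn]; ring
      rw [e2, e3]
      linarith
  refine (main N).trans ?_
  have : 0 ≤ 1/(3*((T:ℝ)+N)^3) := by positivity
  linarith

private lemma bessel (f : ℝ → ℝ)
    (hf_meas : Measurable f)
    (hf01 : ∀ x ∈ Icc (-1:ℝ) 1, 0 ≤ f x ∧ f x ≤ 1)
    (hf_supp : ∀ x, x ∉ Icc (-1:ℝ) 1 → f x = 0)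
    (hf_int : ∫ x in (-1:ℝ)..1, f x = 1)
    (c : ℕ → ℝ)
    (hc : ∀ k : ℕ, 1 ≤ k → c k = ∫ x in (-1:ℝ)..1, Real.cos (π * k * x) * f x)
    (N : ℕ) :
    ∑ k ∈ Finset.range N, (c (k+1))^2 ≤ 1/2 := by
  have hf0 : ∀ x, 0 ≤ f x := by
    intro x
    by_cases hx : x ∈ Icc (-1:ℝ) 1
    · exact (hf01 x hx).1
    · rw [hf_supp x hx]
  have hf1 : ∀ x, f x ≤ 1 := by
    intro x
    by_cases hx : x ∈ Icc (-1:ℝ) 1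
    · exact (hf01 x hx).2
    · rw [hf_supp x hx]; norm_num
  have habs : ∀ x, |f x| ≤ 1 := fun x => abs_le.2 ⟨by linarith [hf0 x], hf1 x⟩
  have hfI : IntervalIntegrable f volume (-1) 1 := intInt_of_bdd hf_meas habs
  have hf2I : IntervalIntegrable (fun x => f x ^ 2) volume (-1) 1 := by
    refine intInt_of_bdd (hf_meas.pow_const 2) (C := 1) fun x => ?_
    rw [abs_pow]
    exact pow_le_one₀ (abs_nonneg _) (habs x)
  have hcos : ∀ a : ℕ, Continuous fun x : ℝ => Real.cos (π * (a:ℝ) * x) :=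
    fun a => Real.continuous_cos.comp (continuous_const.mul continuous_id)
  obtain ⟨Q, hQ⟩ : ∃ Q : ℝ → ℝ,
      Q = fun x => ∑ k ∈ Finset.range N, c (k+1) * Real.cos (π * ((k+1:ℕ):ℝ) * x) := ⟨_, rfl⟩
  have hQcont : Continuous Q := by
    rw [hQ]; exact continuous_finset_sum _ fun k _ => continuous_const.mul (hcos _)
  obtain ⟨CQ, hCQ⟩ : ∃ CQ : ℝ, CQ = ∑ k ∈ Finset.range N, |c (k+1)| := ⟨_, rfl⟩
  have hQbd : ∀ x, |Q x| ≤ CQ := by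
    intro x
    rw [hQ, hCQ]
    refine (Finset.abs_sum_le_sum_abs _ _).trans (Finset.sum_le_sum fun k _ => ?_)
    rw [abs_mul]
    calc |c (k+1)| * |Real.cos (π * ((k+1:ℕ):ℝ) * x)| ≤ |c (k+1)| * 1 :=
          mul_le_mul_of_nonneg_left (Real.abs_cos_le_one _) (abs_nonneg _)
      _ = |c (k+1)| := mul_one _
  have hQI : IntervalIntegrable Q volume (-1) 1 := hQcont.intervalIntegrable _ _
  have hQQI : IntervalIntegrable (fun x => Q x * Q x) volume (-1) 1 :=
    (hQcont.mul hQcont).intervalIntegrable _ _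
  have hfQI : IntervalIntegrable (fun x => f x * Q x) volume (-1) 1 := by
    refine intInt_of_bdd (hf_meas.mul hQcont.measurable) (C := CQ) fun x => ?_
    rw [abs_mul]
    calc |f x| * |Q x| ≤ 1 * |Q x| :=
          mul_le_mul_of_nonneg_right (habs x) (abs_nonneg _)
      _ = |Q x| := one_mul _
      _ ≤ CQ := hQbd x
  -- ∫ Q = 0
  have hIQ : ∫ x in (-1:ℝ)..1, Q x = 0 := by
    rw [hQ]
    rw [intervalIntegral.integral_finset_sum
      (f := fun k x => c (k+1) * Real.cos (π * ((k+1:ℕ):ℝ) * x))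
      (fun k (_ : k ∈ Finset.range N) =>
        (continuous_const.mul (hcos (k+1))).intervalIntegrable (-1) 1)]
    refine Finset.sum_eq_zero fun k _ => ?_
    rw [intervalIntegral.integral_const_mul, integral_cos_pi_nat]
    simp
  -- ∫ f Q = S
  have hfQ : ∫ x in (-1:ℝ)..1, f x * Q x = ∑ k ∈ Finset.range N, (c (k+1))^2 := by
    have key : EqOn (fun x => f x * Q x)
        (fun x => ∑ k ∈ Finset.range N,
          c (k+1) * (Real.cos (π * ((k+1:ℕ):ℝ) * x) * f x)) (uIcc (-1:ℝ) 1) := by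
      intro x _
      simp only [hQ, Finset.mul_sum]
      refine Finset.sum_congr rfl fun k _ => by ring
    rw [intervalIntegral.integral_congr key]
    have hint : ∀ k ∈ Finset.range N, IntervalIntegrable
        (fun x => c (k+1) * (Real.cos (π * ((k+1:ℕ):ℝ) * x) * f x)) volume (-1) 1 := by
      intro k _
      have hbase : IntervalIntegrable
          (fun x => Real.cos (π * ((k+1:ℕ):ℝ) * x) * f x) volume (-1) 1 := by
        refine intInt_of_bdd ((hcos (k+1)).measurable.mul hf_meas) (C := 1) fun x => ?_
        rw [abs_mul]
        calc |Real.cos (π * ((k+1:ℕ):ℝ) * x)| * |f x| ≤ 1 * 1 :=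
              mul_le_mul (Real.abs_cos_le_one _) (habs x) (abs_nonneg _) zero_le_one
          _ = 1 := one_mul 1
      exact hbase.const_mul _
    rw [intervalIntegral.integral_finset_sum hint]
    refine Finset.sum_congr rfl fun k _ => ?_
    rw [intervalIntegral.integral_const_mul, ← hc (k+1) (Nat.le_add_left 1 k), sq]
  -- orthogonality of the cosines
  have orth : ∀ j k : ℕ, (∫ x in (-1:ℝ)..1,
      Real.cos (π * ((j+1:ℕ):ℝ) * x) * Real.cos (π * ((k+1:ℕ):ℝ) * x))
        = if j = k then 1 else 0 := by
    intro j k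
    rw [integral_cos_mul_cos (j+1) (k+1) (Nat.le_add_left 1 j) (Nat.le_add_left 1 k)]
    simp
  -- ∫ Q² = S
  have hQQ : ∫ x in (-1:ℝ)..1, Q x * Q x = ∑ k ∈ Finset.range N, (c (k+1))^2 := by
    have key : EqOn (fun x => Q x * Q x)
        (fun x => ∑ j ∈ Finset.range N, ∑ k ∈ Finset.range N,
          (c (j+1) * c (k+1)) * (Real.cos (π * ((j+1:ℕ):ℝ) * x)
            * Real.cos (π * ((k+1:ℕ):ℝ) * x))) (uIcc (-1:ℝ) 1) := by
      intro x _
      simp only [hQ, Finset.sum_mul_sum]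
      refine Finset.sum_congr rfl fun j _ => Finset.sum_congr rfl fun k _ => by ring
    rw [intervalIntegral.integral_congr key]
    rw [intervalIntegral.integral_finset_sum
      (f := fun j x => ∑ k ∈ Finset.range N, (c (j+1) * c (k+1)) * (Real.cos (π * ((j+1:ℕ):ℝ) * x)
        * Real.cos (π * ((k+1:ℕ):ℝ) * x))) (fun j (_ : j ∈ Finset.range N) =>
      (continuous_finset_sum _ fun k (_ : k ∈ Finset.range N) =>
        continuous_const.mul ((hcos (j+1)).mul (hcos (k+1)))).intervalIntegrable (-1) 1)]
    refine Finset.sum_congr rfl fun j hj => ?_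
    rw [intervalIntegral.integral_finset_sum
        (f := fun k x => (c (j+1) * c (k+1)) * (Real.cos (π * ((j+1:ℕ):ℝ) * x)
          * Real.cos (π * ((k+1:ℕ):ℝ) * x))) (fun k (_ : k ∈ Finset.range N) =>
        (continuous_const.mul ((hcos (j+1)).mul (hcos (k+1)))).intervalIntegrable (-1) 1)]
    have inner : ∀ k ∈ Finset.range N,
        (∫ x in (-1:ℝ)..1, (c (j+1) * c (k+1)) * (Real.cos (π * ((j+1:ℕ):ℝ) * x)
            * Real.cos (π * ((k+1:ℕ):ℝ) * x)))
          = if j = k then c (j+1) * c (k+1) else 0 := by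
      intro k _
      rw [intervalIntegral.integral_const_mul, orth j k]
      split_ifs with h
      · rw [mul_one]
      · rw [mul_zero]
    rw [Finset.sum_congr rfl inner, Finset.sum_ite_eq (Finset.range N) j
      (fun k => c (j+1) * c (k+1))]
    simp only [hj, if_true, sq]
  -- expansion of the square
  have hnn : (0:ℝ) ≤ ∫ x in (-1:ℝ)..1, (f x - 1/2 - Q x)^2 :=
    intervalIntegral.integral_nonneg (by norm_num) (fun x _ => sq_nonneg _)
  have expand : ∫ x in (-1:ℝ)..1, (f x - 1/2 - Q x)^2
      = (∫ x in (-1:ℝ)..1, f x ^ 2) - (∫ x in (-1:ℝ)..1, f x)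
        - 2 * (∫ x in (-1:ℝ)..1, f x * Q x) + (∫ x in (-1:ℝ)..1, Q x * Q x)
        + (∫ x in (-1:ℝ)..1, Q x) + 1/2 := by
    have key : EqOn (fun x => (f x - 1/2 - Q x)^2)
        (fun x => (f x ^ 2 - f x - 2 * (f x * Q x)) + (Q x * Q x + Q x + 1/4))
        (uIcc (-1:ℝ) 1) := fun x _ => by ring
    rw [intervalIntegral.integral_congr key]
    rw [intervalIntegral.integral_add ((hf2I.sub hfI).sub (hfQI.const_mul 2))
      ((hQQI.add hQI).add (intervalIntegrable_const))]
    rw [intervalIntegral.integral_sub (hf2I.sub hfI) (hfQI.const_mul 2)]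
    rw [intervalIntegral.integral_sub hf2I hfI]
    rw [intervalIntegral.integral_add (hQQI.add hQI) (intervalIntegrable_const)]
    rw [intervalIntegral.integral_add hQQI hQI]
    rw [intervalIntegral.integral_const_mul, intervalIntegral.integral_const]
    norm_num
    ring
  have hf2le : ∫ x in (-1:ℝ)..1, f x ^ 2 ≤ 1 := by
    calc ∫ x in (-1:ℝ)..1, f x ^ 2 ≤ ∫ x in (-1:ℝ)..1, f x := by
          refine intervalIntegral.integral_mono_on (by norm_num) hf2I hfI fun x hx => ?_
          nlinarith [(hf01 x hx).1, (hf01 x hx).2]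
      _ = 1 := hf_int
  rw [expand, hfQ, hQQ, hIQ, hf_int] at hnn
  linarith

theorem cosine_tail_bound (f : ℝ → ℝ)
    (hf_meas : Measurable f)
    (hf01 : ∀ x ∈ Icc (-1:ℝ) 1, 0 ≤ f x ∧ f x ≤ 1)
    (hf_supp : ∀ x, x ∉ Icc (-1:ℝ) 1 → f x = 0)
    (hf_int : ∫ x in (-1:ℝ)..1, f x = 1)
    (c : ℕ → ℝ)
    (hc : ∀ k : ℕ, 1 ≤ k → c k = ∫ x in (-1:ℝ)..1, Real.cos (π * k * x) * f x)
    (T : ℕ) (hT : 0 < T) (m : ℕ) (hm1 : 1 ≤ m) (hm2 : m < 2 * T) :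
    |(2 * (m:ℝ) / π) * ∑' k : ℕ,
        ((-1 : ℝ)^(T + 1 + k) * Real.sin (π * m / 2) /
          ((m:ℝ)^2 - 4 * ((T + 1 + k : ℕ) : ℝ)^2)) * c (T + 1 + k)|
      ≤ (1 / (4 - (m:ℝ)^2 / (T:ℝ)^2)) * (2 * (m:ℝ) / (π * Real.sqrt (6 * (T:ℝ)^3))) := by
  have hπ : (0:ℝ) < π := Real.pi_pos
  have hT1 : (1:ℝ) ≤ (T:ℝ) := by exact_mod_cast hT
  have hT0 : (0:ℝ) < (T:ℝ) := by linarith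
  have hmR : (m:ℝ) < 2 * (T:ℝ) := by exact_mod_cast hm2
  have hm0 : (0:ℝ) ≤ (m:ℝ) := Nat.cast_nonneg m
  have hr : (m:ℝ)^2/(T:ℝ)^2 < 4 := by
    rw [div_lt_iff₀ (by positivity)]
    nlinarith
  have hD0 : (0:ℝ) < 4 - (m:ℝ)^2/(T:ℝ)^2 := by linarith
  set D : ℝ := 1/(4 - (m:ℝ)^2/(T:ℝ)^2) with hD
  have hDpos : 0 < D := by rw [hD]; positivity
  set s : ℝ := Real.sqrt (6*(T:ℝ)^3) with hs
  have hspos : 0 < s := Real.sqrt_pos.mpr (by positivity)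
  set B : ℝ := D * (1/s) with hB
  have hB0 : 0 ≤ B := by positivity
  -- bounds on f
  have hf0 : ∀ x, 0 ≤ f x := by
    intro x
    by_cases hx : x ∈ Icc (-1:ℝ) 1
    · exact (hf01 x hx).1
    · rw [hf_supp x hx]
  have hf1 : ∀ x, f x ≤ 1 := by
    intro x
    by_cases hx : x ∈ Icc (-1:ℝ) 1
    · exact (hf01 x hx).2
    · rw [hf_supp x hx]; norm_num
  have habs : ∀ x, |f x| ≤ 1 := fun x => abs_le.2 ⟨by linarith [hf0 x], hf1 x⟩
  have hfI : IntervalIntegrable f volume (-1) 1 := intInt_of_bdd hf_meas habs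
  -- |c k| ≤ 1 (not strictly needed, but harmless)
  -- denominators
  have hnk : ∀ k : ℕ, (T:ℝ) ≤ ((T+1+k:ℕ):ℝ) := by
    intro k
    push_cast
    have : (0:ℝ) ≤ (k:ℝ) := Nat.cast_nonneg k
    linarith
  have hden : ∀ k : ℕ, 0 < 4*((T+1+k:ℕ):ℝ)^2 - (m:ℝ)^2 := by
    intro k
    have h1 := hnk k
    nlinarith
  -- u-bound
  have hu : ∀ k : ℕ, 1/(4*((T+1+k:ℕ):ℝ)^2 - (m:ℝ)^2)
      ≤ D * (1/((T+1+k:ℕ):ℝ)^2) := by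
    intro k
    have h1 := hnk k
    have hn0 : (0:ℝ) < ((T+1+k:ℕ):ℝ) := by linarith
    have key : (4 - (m:ℝ)^2/(T:ℝ)^2) * ((T+1+k:ℕ):ℝ)^2 ≤ 4*((T+1+k:ℕ):ℝ)^2 - (m:ℝ)^2 := by
      have h2 : (m:ℝ)^2 ≤ (m:ℝ)^2/(T:ℝ)^2 * ((T+1+k:ℕ):ℝ)^2 := by
        rw [div_mul_eq_mul_div, le_div_iff₀ (by positivity)]
        exact mul_le_mul_of_nonneg_left (by nlinarith) (sq_nonneg (m:ℝ))
      nlinarith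
    have hpos : (0:ℝ) < (4 - (m:ℝ)^2/(T:ℝ)^2) * ((T+1+k:ℕ):ℝ)^2 := by positivity
    calc 1/(4*((T+1+k:ℕ):ℝ)^2 - (m:ℝ)^2)
        ≤ 1/((4 - (m:ℝ)^2/(T:ℝ)^2) * ((T+1+k:ℕ):ℝ)^2) :=
          one_div_le_one_div_of_le hpos key
      _ = D * (1/((T+1+k:ℕ):ℝ)^2) := by
          rw [hD, one_div_mul_one_div]
  -- Bessel for the tail
  have htail : ∀ N : ℕ, ∑ k ∈ Finset.range N, (c (T+1+k))^2 ≤ 1/2 := by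
    intro N
    have h1 : ∑ k ∈ Finset.range N, (c (T+1+k))^2
        = ∑ j ∈ Finset.Ico T (T+N), (c (j+1))^2 := by
      rw [Finset.sum_Ico_eq_sum_range]
      simp only [Nat.add_sub_cancel_left]
      refine Finset.sum_congr rfl fun k _ => ?_
      have : T+1+k = T+k+1 := by omega
      rw [this]
    rw [h1]
    refine le_trans (Finset.sum_le_sum_of_subset_of_nonneg ?_
      (fun j _ _ => sq_nonneg _)) (bessel f hf_meas hf01 hf_supp hf_int c hc (T+N))
    intro j hj
    simp only [Finset.mem_Ico] at hj
    simp only [Finset.mem_range]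
    omega
  -- the summand
  set t : ℕ → ℝ := fun k => ((-1 : ℝ)^(T + 1 + k) * Real.sin (π * m / 2) /
      ((m:ℝ)^2 - 4 * ((T + 1 + k : ℕ) : ℝ)^2)) * c (T + 1 + k) with ht
  have habs_t : ∀ k, |t k| ≤ (1/(4*((T+1+k:ℕ):ℝ)^2 - (m:ℝ)^2)) * |c (T+1+k)| := by
    intro k
    rw [ht]
    rw [abs_mul, abs_div, abs_mul, abs_pow, abs_neg, abs_one, one_pow, one_mul]
    have hd : |(m:ℝ)^2 - 4*((T+1+k:ℕ):ℝ)^2| = 4*((T+1+k:ℕ):ℝ)^2 - (m:ℝ)^2 := by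
      rw [abs_of_neg (by linarith [hden k])]
      ring
    rw [hd]
    have h1 : |Real.sin (π * m / 2)| ≤ 1 := Real.abs_sin_le_one _
    have h2 : 0 < 4*((T+1+k:ℕ):ℝ)^2 - (m:ℝ)^2 := hden k
    gcongr
  -- range sums of |t| are ≤ B
  have hN : ∀ N : ℕ, ∑ k ∈ Finset.range N, |t k| ≤ B := by
    intro N
    set u : ℕ → ℝ := fun k => 1/(4*((T+1+k:ℕ):ℝ)^2 - (m:ℝ)^2) with hudef
    set v : ℕ → ℝ := fun k => |c (T+1+k)| with hvdef
    have hu0 : ∀ k, 0 ≤ u k := fun k => le_of_lt (div_pos one_pos (hden k))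
    have step1 : ∑ k ∈ Finset.range N, |t k| ≤ ∑ k ∈ Finset.range N, u k * v k :=
      Finset.sum_le_sum fun k _ => habs_t k
    have CS := Finset.sum_mul_sq_le_sq_mul_sq (Finset.range N) u v
    have hu2 : ∑ k ∈ Finset.range N, (u k)^2 ≤ D^2 * (1/(3*(T:ℝ)^3)) := by
      have e1 : ∑ k ∈ Finset.range N, (u k)^2
          ≤ ∑ k ∈ Finset.range N, D^2 * (1/((T:ℝ)+1+(k:ℝ))^4) := by
        refine Finset.sum_le_sum fun k _ => ?_
        have hcast : ((T+1+k:ℕ):ℝ) = (T:ℝ)+1+(k:ℝ) := by push_cast; ring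
        have h2 : (u k)^2 ≤ (D * (1/((T+1+k:ℕ):ℝ)^2))^2 := by
          apply pow_le_pow_left₀ (hu0 k) (hu k)
        refine h2.trans (le_of_eq ?_)
        rw [mul_pow, hcast]
        congr 1
        rw [div_pow, one_pow, ← pow_mul]
      refine e1.trans ?_
      rw [← Finset.mul_sum]
      exact mul_le_mul_of_nonneg_left (quart_tail T hT N) (sq_nonneg D)
    have hv2 : ∑ k ∈ Finset.range N, (v k)^2 ≤ 1/2 := by
      have : ∀ k, (v k)^2 = (c (T+1+k))^2 := fun k => by rw [hvdef]; exact sq_abs _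
      calc ∑ k ∈ Finset.range N, (v k)^2 = ∑ k ∈ Finset.range N, (c (T+1+k))^2 :=
            Finset.sum_congr rfl fun k _ => this k
        _ ≤ 1/2 := htail N
    have hsq : (∑ k ∈ Finset.range N, u k * v k)^2 ≤ B^2 := by
      have hvnn : 0 ≤ ∑ k ∈ Finset.range N, (v k)^2 :=
        Finset.sum_nonneg fun k _ => sq_nonneg _
      have h3 : (∑ k ∈ Finset.range N, u k * v k)^2
          ≤ (D^2 * (1/(3*(T:ℝ)^3))) * (1/2) :=
        CS.trans (mul_le_mul hu2 hv2 hvnn (by positivity))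
      refine h3.trans (le_of_eq ?_)
      have hB2 : B^2 = D^2 * (1/(6*(T:ℝ)^3)) := by
        calc B^2 = D^2 * (1/s)^2 := by rw [hB, mul_pow]
          _ = D^2 * (1/s^2) := by congr 1; rw [div_pow, one_pow]
          _ = D^2 * (1/(6*(T:ℝ)^3)) := by
              rw [hs, Real.sq_sqrt (by positivity : (0:ℝ) ≤ 6*(T:ℝ)^3)]
      rw [hB2, mul_assoc]
      congr 1
      rw [one_div_mul_one_div]
      congr 1
      ring
    have hnn : 0 ≤ ∑ k ∈ Finset.range N, u k * v k :=
      Finset.sum_nonneg fun k _ => mul_nonneg (hu0 k) (abs_nonneg _)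
    nlinarith [step1]
  have hsummable_abs : Summable (fun k => |t k|) :=
    summable_of_sum_range_le (fun k => abs_nonneg _) hN
  have hts : |∑' k, t k| ≤ B := by
    have h1 : |∑' k, t k| ≤ ∑' k, |t k| := by
      simpa [Real.norm_eq_abs] using
        norm_tsum_le_tsum_norm (f := t) (by simpa [Real.norm_eq_abs] using hsummable_abs)
    exact h1.trans (tsum_le_of_sum_range_le (fun k => abs_nonneg _) hN)
  rw [abs_mul, abs_of_nonneg (show (0:ℝ) ≤ 2*(m:ℝ)/π by positivity)]
  calc 2*(m:ℝ)/π * |∑' k, t k| ≤ 2*(m:ℝ)/π * B :=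
        mul_le_mul_of_nonneg_left hts (by positivity)
    _ = D * (2*(m:ℝ)/(π*s)) := by
        rw [hB]
        field_simp
end

section
/- Let T be a positive integer. For every integer m with 1 ≤ m < 2T, |(4/π) Σ_{k=T+1}^{∞} (k(-1)^k sin(πm/2)/(m² − 4k²)) d_k| ≤ (1/(4 − m²/T²)) · (4/(π√(2T))). -/
open Real MeasureTheory Set intervalIntegral

lemma int_cos (c : ℝ) (hc : c ≠ 0) : ∫ x in (-1:ℝ)..1, Real.cos (c*x) = 2 * Real.sin c / c := by
  rw [intervalIntegral.integral_comp_mul_left (fun x => Real.cos x) hc]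
  simp [Real.sin_neg]
  ring

lemma int_cos_int (n : ℤ) (hn : n ≠ 0) : ∫ x in (-1:ℝ)..1, Real.cos ((n:ℝ)*π*x) = 0 := by
  rw [int_cos _ (by simp [Real.pi_ne_zero, hn])]
  simp [Real.sin_int_mul_pi]

lemma int_sin_nat (k : ℕ) (hk : (k:ℝ) ≠ 0) : ∫ x in (-1:ℝ)..1, Real.sin (π*k*x) = 0 := by
  rw [intervalIntegral.integral_comp_mul_left (fun x => Real.sin x) (by positivity : π*(k:ℝ) ≠ 0)]
  simp [Real.cos_neg]

lemma int_sin_sin (j k : ℕ) (hj : 1 ≤ j) (hk : 1 ≤ k) :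
    ∫ x in (-1:ℝ)..1, Real.sin (π*j*x) * Real.sin (π*k*x) = if j = k then 1 else 0 := by
  set n1 : ℤ := (j:ℤ) - (k:ℤ) with hn1
  set n2 : ℤ := (j:ℤ) + (k:ℤ) with hn2
  have key : ∀ x : ℝ, Real.sin (π*j*x) * Real.sin (π*k*x)
      = (Real.cos ((n1:ℝ)*π*x) - Real.cos ((n2:ℝ)*π*x)) / 2 := by
    intro x
    have h1 : (n1:ℝ)*π*x = π*j*x - π*k*x := by rw [hn1]; push_cast; ring
    have h2 : (n2:ℝ)*π*x = π*j*x + π*k*x := by rw [hn2]; push_cast; ring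
    rw [h1, h2, Real.cos_sub, Real.cos_add]
    ring
  simp_rw [key]
  rw [intervalIntegral.integral_div, intervalIntegral.integral_sub
      (Continuous.intervalIntegrable (by continuity) _ _)
      (Continuous.intervalIntegrable (by continuity) _ _)]
  rcases eq_or_ne j k with h | h
  · subst h
    rw [int_cos_int n2 (by omega)]
    have : (n1:ℝ) = 0 := by rw [hn1]; push_cast; ring
    simp [this]
  · rw [int_cos_int n1 (by omega), int_cos_int n2 (by omega)]
    simp [h]

noncomputable def mymu : Measure ℝ := volume.restrict (Ioc (-1:ℝ) 1)

instance : IsFiniteMeasure mymu := by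
  constructor
  rw [mymu, Measure.restrict_apply_univ]
  exact measure_Ioc_lt_top

noncomputable def gfun : ℕ → ℝ → ℝ := fun n x => if n = 0 then (Real.sqrt 2)⁻¹ else Real.sin (π*n*x)

lemma gfun_zero : gfun 0 = fun _ => (Real.sqrt 2)⁻¹ := by unfold gfun; simp

lemma gfun_pos (n : ℕ) (hn : n ≠ 0) : gfun n = fun x => Real.sin (π*n*x) := by
  unfold gfun; simp [hn]

lemma gfun_memLp (n : ℕ) : MemLp (gfun n) 2 mymu := by
  apply MemLp.of_bound (C := 1)
  · have : Continuous (gfun n) := by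
      rcases eq_or_ne n 0 with h | h
      · rw [h, gfun_zero]; fun_prop
      · rw [gfun_pos n h]; fun_prop
    exact this.aestronglyMeasurable
  · apply ae_of_all
    intro x
    rcases eq_or_ne n 0 with h | h
    · rw [h, gfun_zero]
      simp only [Real.norm_eq_abs]
      rw [abs_of_nonneg (by positivity), inv_le_one_iff₀]
      right
      nlinarith [Real.sq_sqrt (by norm_num : (2:ℝ) ≥ 0), Real.sqrt_nonneg 2]
    · rw [gfun_pos n h]
      exact Real.abs_sin_le_one _

lemma setint_eq (h : ℝ → ℝ) : ∫ x, h x ∂mymu = ∫ x in (-1:ℝ)..1, h x := by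
  rw [mymu, intervalIntegral.integral_of_le (by norm_num : (-1:ℝ) ≤ 1)]

lemma inner_toLp (h1 h2 : ℝ → ℝ) (m1 : MemLp h1 2 mymu) (m2 : MemLp h2 2 mymu) :
    (inner ℝ (m1.toLp h1) (m2.toLp h2) : ℝ) = ∫ x in (-1:ℝ)..1, h1 x * h2 x := by
  rw [MeasureTheory.L2.inner_def, ← setint_eq]
  apply MeasureTheory.integral_congr_ae
  filter_upwards [m1.coeFn_toLp, m2.coeFn_toLp] with x e1 e2
  rw [e1, e2, RCLike.inner_apply]
  simp [mul_comm]

noncomputable def vb : ℕ → (Lp ℝ 2 mymu) := fun n => (gfun_memLp n).toLp (gfun n)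

lemma sqrt2_inv_mul : (Real.sqrt 2)⁻¹ * (Real.sqrt 2)⁻¹ = 1/2 := by
  rw [← mul_inv]
  rw [Real.mul_self_sqrt (by norm_num : (0:ℝ) ≤ 2)]
  norm_num

lemma vb_orthonormal : Orthonormal ℝ vb := by
  rw [orthonormal_iff_ite]
  intro i j
  rw [vb, vb, inner_toLp]
  rcases eq_or_ne i 0 with hi | hi
  · rcases eq_or_ne j 0 with hj | hj
    · subst hi; subst hj
      rw [gfun_zero]
      rw [intervalIntegral.integral_const, sqrt2_inv_mul]
      norm_num
    · subst hi
      rw [gfun_zero, gfun_pos j hj, if_neg (by omega)]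
      rw [intervalIntegral.integral_const_mul, int_sin_nat j (by exact_mod_cast hj)]
      simp
  · rcases eq_or_ne j 0 with hj | hj
    · subst hj
      rw [gfun_zero, gfun_pos i hi, if_neg hi]
      rw [intervalIntegral.integral_mul_const, int_sin_nat i (by exact_mod_cast hi)]
      simp
    · rw [gfun_pos i hi, gfun_pos j hj]
      exact int_sin_sin i j (by omega) (by omega)

lemma tail_inv_sq_sum (T : ℕ) (hT : 0 < T) (t : Finset ℕ) :
    ∑ k ∈ t, (1:ℝ)/(((T+1+k:ℕ):ℝ))^2 ≤ 1/(T:ℝ) := by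
  obtain ⟨N, hN⟩ := t.exists_nat_subset_range
  have h1 : ∑ k ∈ t, (1:ℝ)/(((T+1+k:ℕ):ℝ))^2 ≤ ∑ k ∈ Finset.range N, (1:ℝ)/(((T+1+k:ℕ):ℝ))^2 :=
    Finset.sum_le_sum_of_subset_of_nonneg hN (fun i _ _ => by positivity)
  have h2 : ∑ k ∈ Finset.range N, (1:ℝ)/(((T+1+k:ℕ):ℝ))^2
      ≤ ∑ k ∈ Finset.range N, ((1:ℝ)/((T+k:ℕ):ℝ) - 1/((T+(k+1):ℕ):ℝ)) := by
    apply Finset.sum_le_sum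
    intro k _
    have hTk : (0:ℝ) < ((T+k:ℕ):ℝ) := by
      have : 0 < T + k := by omega
      exact_mod_cast this
    have hTk1 : (0:ℝ) < ((T+(k+1):ℕ):ℝ) := by
      have : 0 < T + (k+1) := by omega
      exact_mod_cast this
    have he : ((T+1+k:ℕ):ℝ) = ((T+k:ℕ):ℝ) + 1 := by push_cast; ring
    have he2 : ((T+(k+1):ℕ):ℝ) = ((T+k:ℕ):ℝ) + 1 := by push_cast; ring
    rw [he, he2, div_sub_div _ _ (ne_of_gt hTk) (by linarith), one_mul, mul_one]
    rw [div_le_div_iff₀ (by positivity) (by positivity)]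
    ring_nf
    nlinarith [hTk]
  have h3 : ∑ k ∈ Finset.range N, ((1:ℝ)/((T+k:ℕ):ℝ) - 1/((T+(k+1):ℕ):ℝ))
      = 1/((T+0:ℕ):ℝ) - 1/((T+N:ℕ):ℝ) :=
    Finset.sum_range_sub' (fun k => (1:ℝ)/((T+k:ℕ):ℝ)) N
  have h4 : (0:ℝ) ≤ 1/((T+N:ℕ):ℝ) := by positivity
  have h5 : ((T+0:ℕ):ℝ) = (T:ℝ) := by norm_num
  rw [h3, h5] at h2
  linarith

set_option maxHeartbeats 1000000 in
theorem sine_tail_bound (f : ℝ → ℝ)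
    (hf_meas : Measurable f)
    (hf01 : ∀ x ∈ Icc (-1:ℝ) 1, 0 ≤ f x ∧ f x ≤ 1)
    (hf_supp : ∀ x, x ∉ Icc (-1:ℝ) 1 → f x = 0)
    (hf_int : ∫ x in (-1:ℝ)..1, f x = 1)
    (d : ℕ → ℝ)
    (hd : ∀ k : ℕ, 1 ≤ k → d k = ∫ x in (-1:ℝ)..1, Real.sin (π * k * x) * f x)
    (T : ℕ) (hT : 0 < T) (m : ℕ) (hm1 : 1 ≤ m) (hm2 : m < 2 * T) :
    |(4 / π) * ∑' k : ℕ,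
        (((T + 1 + k : ℕ) : ℝ) * (-1 : ℝ)^(T + 1 + k) * Real.sin (π * m / 2) /
          ((m:ℝ)^2 - 4 * ((T + 1 + k : ℕ) : ℝ)^2)) * d (T + 1 + k)|
      ≤ (1 / (4 - (m:ℝ)^2 / (T:ℝ)^2)) * (4 / (π * Real.sqrt (2 * (T:ℝ)))) := by
  have hπ : (0:ℝ) < π := Real.pi_pos
  have hT0 : (0:ℝ) < (T:ℝ) := by exact_mod_cast hT
  have hmR : (m:ℝ) < 2*(T:ℝ) := by exact_mod_cast hm2
  have hm0 : (0:ℝ) ≤ (m:ℝ) := Nat.cast_nonneg m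
  have hq : (m:ℝ)^2/(T:ℝ)^2 < 4 := by
    rw [div_lt_iff₀ (by positivity)]
    nlinarith
  have h4q : (0:ℝ) < 4 - (m:ℝ)^2/(T:ℝ)^2 := by linarith
  set C : ℝ := 1/(4 - (m:ℝ)^2/(T:ℝ)^2) with hC
  have hCpos : 0 < C := by rw [hC]; positivity
  have hsT : (0:ℝ) < Real.sqrt (2*(T:ℝ)) := Real.sqrt_pos.mpr (by linarith)
  -- f is in L2
  have hfb : ∀ x, ‖f x‖ ≤ 1 := by
    intro x
    rw [Real.norm_eq_abs]
    by_cases hx : x ∈ Icc (-1:ℝ) 1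
    · obtain ⟨h1, h2⟩ := hf01 x hx
      rw [abs_of_nonneg h1]; exact h2
    · rw [hf_supp x hx]; norm_num
  have hfmem : MemLp f 2 mymu :=
    MemLp.of_bound (hf_meas.aestronglyMeasurable) 1 (ae_of_all _ hfb)
  have hfmem1 : Integrable f mymu := memLp_one_iff_integrable.mp
    (MemLp.of_bound (hf_meas.aestronglyMeasurable) 1 (ae_of_all _ hfb))
  have hffmem1 : Integrable (fun x => f x * f x) mymu := memLp_one_iff_integrable.mp
    (MemLp.of_bound ((hf_meas.mul hf_meas).aestronglyMeasurable) 1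
      (ae_of_all _ (fun x => by
        rw [norm_mul]
        calc ‖f x‖ * ‖f x‖ ≤ 1 * 1 := by
              apply mul_le_mul (hfb x) (hfb x) (norm_nonneg _) (by norm_num)
          _ = 1 := by norm_num)))
  set F : Lp ℝ 2 mymu := hfmem.toLp f with hF
  -- inner products
  have hinner : ∀ n : ℕ, 1 ≤ n → (inner ℝ (vb n) F : ℝ) = d n := by
    intro n hn
    rw [hF, vb, inner_toLp, gfun_pos n (by omega)]
    exact (hd n hn).symm
  have hinner0 : (inner ℝ (vb 0) F : ℝ) = (Real.sqrt 2)⁻¹ := by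
    rw [hF, vb, inner_toLp, gfun_zero]
    rw [intervalIntegral.integral_const_mul, hf_int, mul_one]
  have hnormF : ‖F‖^2 ≤ 1 := by
    rw [← real_inner_self_eq_norm_sq, hF, inner_toLp, ← setint_eq]
    have hle : ∫ x, f x * f x ∂mymu ≤ ∫ x, f x ∂mymu := by
      apply integral_mono_ae hffmem1 hfmem1
      rw [mymu]
      filter_upwards [ae_restrict_mem measurableSet_Ioc] with x hx
      obtain ⟨h1, h2⟩ := hf01 x (Ioc_subset_Icc_self hx)
      nlinarith
    have h2 : ∫ x, f x ∂mymu = 1 := by rw [setint_eq]; exact hf_int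
    linarith
  -- Bessel
  have bessel : ∀ t : Finset ℕ, ∑ k ∈ t, (d (T+1+k))^2 ≤ 1/2 := by
    intro t
    classical
    have h0 : (0:ℕ) ∉ t.image (fun k => T+1+k) := by
      simp only [Finset.mem_image, not_exists]
      intro k
      omega
    have h1 := vb_orthonormal.sum_inner_products_le
      (s := insert 0 (t.image (fun k => T+1+k))) F
    rw [Finset.sum_insert h0, Finset.sum_image (by intros a _ b _ h; dsimp only at h; omega)] at h1
    simp only [Real.norm_eq_abs, sq_abs] at h1
    rw [hinner0] at h1
    have hv : ((Real.sqrt 2)⁻¹)^2 = 1/2 := by rw [sq]; exact sqrt2_inv_mul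
    rw [hv] at h1
    have h2 : ∑ k ∈ t, ((inner ℝ (vb (T+1+k)) F : ℝ))^2 = ∑ k ∈ t, (d (T+1+k))^2 := by
      apply Finset.sum_congr rfl
      intro k _
      rw [hinner (T+1+k) (by omega)]
    rw [h2] at h1
    linarith
  -- the generic estimate
  have main : ∀ A D : ℕ → ℝ, (∀ k, |A k| ≤ C/((T+1+k:ℕ):ℝ)) →
      (∀ t : Finset ℕ, ∑ k ∈ t, (D k)^2 ≤ 1/2) →
      |∑' k : ℕ, A k * D k| ≤ C / Real.sqrt (2*(T:ℝ)) := by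
    intro A D hA hD
    have key : ∀ t : Finset ℕ, ∑ k ∈ t, |A k * D k| ≤ C / Real.sqrt (2*(T:ℝ)) := by
      intro t
      have cs := Finset.sum_mul_sq_le_sq_mul_sq t (fun k => |A k|) (fun k => |D k|)
      simp only [sq_abs, ← abs_mul] at cs
      have hAsum : ∑ k ∈ t, (A k)^2 ≤ C^2/(T:ℝ) := by
        have : ∀ k ∈ t, (A k)^2 ≤ C^2 * ((1:ℝ)/(((T+1+k:ℕ):ℝ))^2) := by
          intro k _
          have h1 := hA k
          have hn : (0:ℝ) < ((T+1+k:ℕ):ℝ) := by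
            have : 0 < T+1+k := by omega
            exact_mod_cast this
          have hsq : (A k)^2 ≤ (C/((T+1+k:ℕ):ℝ))^2 := by
            rw [← sq_abs]
            exact pow_le_pow_left₀ (abs_nonneg _) h1 2
          calc (A k)^2 ≤ (C/((T+1+k:ℕ):ℝ))^2 := hsq
            _ = C^2 * ((1:ℝ)/(((T+1+k:ℕ):ℝ))^2) := by rw [div_pow]; ring
        calc ∑ k ∈ t, (A k)^2 ≤ ∑ k ∈ t, C^2 * ((1:ℝ)/(((T+1+k:ℕ):ℝ))^2) :=
              Finset.sum_le_sum this
          _ = C^2 * ∑ k ∈ t, ((1:ℝ)/(((T+1+k:ℕ):ℝ))^2) := by rw [Finset.mul_sum]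
          _ ≤ C^2 * (1/(T:ℝ)) := by
              apply mul_le_mul_of_nonneg_left (tail_inv_sq_sum T hT t) (by positivity)
          _ = C^2/(T:ℝ) := by ring
      have hprod : (∑ k ∈ t, |A k * D k|)^2 ≤ C^2/(2*(T:ℝ)) := by
        calc (∑ k ∈ t, |A k * D k|)^2 ≤ (∑ k ∈ t, (A k)^2) * ∑ k ∈ t, (D k)^2 := cs
          _ ≤ (C^2/(T:ℝ)) * (1/2) := by
              apply mul_le_mul hAsum (hD t) (Finset.sum_nonneg (fun i _ => sq_nonneg _))
                (by positivity)
          _ = C^2/(2*(T:ℝ)) := by ring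
      have hnn : (0:ℝ) ≤ ∑ k ∈ t, |A k * D k| := Finset.sum_nonneg (fun i _ => abs_nonneg _)
      have := (Real.le_sqrt hnn (by positivity)).mpr hprod
      calc ∑ k ∈ t, |A k * D k| ≤ Real.sqrt (C^2/(2*(T:ℝ))) := this
        _ = C / Real.sqrt (2*(T:ℝ)) := by
            rw [Real.sqrt_div (by positivity) _, Real.sqrt_sq hCpos.le]
    have hsummable : Summable (fun k => |A k * D k|) :=
      summable_of_sum_le (fun k => abs_nonneg _) key
    calc |∑' k : ℕ, A k * D k| ≤ ∑' k : ℕ, |A k * D k| := by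
          have h1 : Summable (fun k => ‖A k * D k‖) := by
            simpa only [Real.norm_eq_abs] using hsummable
          have h2 := norm_tsum_le_tsum_norm h1
          simpa only [Real.norm_eq_abs] using h2
      _ ≤ C / Real.sqrt (2*(T:ℝ)) := Summable.tsum_le_of_sum_le hsummable key
  -- apply it
  have hA : ∀ k : ℕ, |((T + 1 + k : ℕ) : ℝ) * (-1 : ℝ)^(T + 1 + k) * Real.sin (π * m / 2) /
      ((m:ℝ)^2 - 4 * ((T + 1 + k : ℕ) : ℝ)^2)| ≤ C/((T+1+k:ℕ):ℝ) := by
    intro k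
    set N : ℝ := ((T+1+k:ℕ):ℝ) with hNdef
    clear_value N
    have hTn : (T:ℝ) + 1 ≤ N := by
      rw [hNdef]; push_cast; linarith [Nat.cast_nonneg (α := ℝ) k]
    have hNpos : (0:ℝ) < N := by linarith
    have hden : (m:ℝ)^2 - 4*N^2 < 0 := by nlinarith
    have hdpos : (0:ℝ) < 4*N^2 - (m:ℝ)^2 := by linarith
    rw [abs_div]
    have hnum : |N * (-1:ℝ)^(T+1+k) * Real.sin (π * m / 2)| ≤ N := by
      rw [abs_mul, abs_mul]
      have hone : |(-1:ℝ)^(T+1+k)| = 1 := by rw [abs_pow, abs_neg, abs_one, one_pow]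
      rw [hone, mul_one, abs_of_nonneg hNpos.le]
      calc N * |Real.sin (π * m / 2)| ≤ N * 1 :=
            mul_le_mul_of_nonneg_left (Real.abs_sin_le_one _) hNpos.le
        _ = N := mul_one N
    have hdabs : |(m:ℝ)^2 - 4*N^2| = 4*N^2 - (m:ℝ)^2 := by rw [abs_of_neg hden]; ring
    rw [hdabs]
    have step1 : |N * (-1:ℝ)^(T+1+k) * Real.sin (π * m / 2)| / (4*N^2 - (m:ℝ)^2)
        ≤ N / (4*N^2 - (m:ℝ)^2) := by gcongr
    refine step1.trans ?_
    rw [div_le_div_iff₀ hdpos hNpos, hC]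
    have hu : (0:ℝ) ≤ (m:ℝ)^2/(T:ℝ)^2 := by positivity
    have hqT : (m:ℝ)^2/(T:ℝ)^2 * (T:ℝ)^2 = (m:ℝ)^2 := div_mul_cancel₀ _ (by positivity)
    have hTN : (T:ℝ)^2 ≤ N^2 := by nlinarith
    have hmN : (m:ℝ)^2 ≤ (m:ℝ)^2/(T:ℝ)^2 * N^2 := by
      calc (m:ℝ)^2 = (m:ℝ)^2/(T:ℝ)^2 * (T:ℝ)^2 := hqT.symm
        _ ≤ (m:ℝ)^2/(T:ℝ)^2 * N^2 := mul_le_mul_of_nonneg_left hTN hu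
    rw [one_div, inv_mul_eq_div, le_div_iff₀ h4q]
    have hexp : N * N * (4 - (m:ℝ)^2/(T:ℝ)^2) = 4*N^2 - ((m:ℝ)^2/(T:ℝ)^2) * N^2 := by ring
    linarith [hmN]
  have hmain := main (fun k => ((T + 1 + k : ℕ) : ℝ) * (-1 : ℝ)^(T + 1 + k) * Real.sin (π * m / 2) /
      ((m:ℝ)^2 - 4 * ((T + 1 + k : ℕ) : ℝ)^2)) (fun k => d (T+1+k)) hA bessel
  rw [abs_mul, abs_of_nonneg (by positivity : (0:ℝ) ≤ 4/π)]
  have hre : C * (4 / (π * Real.sqrt (2 * (T:ℝ)))) = (4/π) * (C / Real.sqrt (2*(T:ℝ))) := by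
    field_simp
  rw [hre]
  exact mul_le_mul_of_nonneg_left hmain (by positivity : (0:ℝ) ≤ 4/π)
end

section
/- For all 1 ≤ m ≤ R: (L/2) Σ_{j=1}^{N} α_{j,m}⁻ (w_j + v_j) ≤ A_m ≤ (L/2) Σ_{j=1}^{N} α_{j,m}⁺ (w_j + v_j). -/
open Real MeasureTheory Set

theorem interval_cosine_estimate (f g M : ℝ → ℝ)
    (hf_meas : Measurable f)
    (hf01 : ∀ x ∈ Icc (-1:ℝ) 1, 0 ≤ f x ∧ f x ≤ 1)
    (hf_supp : ∀ x, x ∉ Icc (-1:ℝ) 1 → f x = 0)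
    (hf_int : ∫ x in (-1:ℝ)..1, f x = 1)
    (hg : ∀ x, g x = if x ∈ Icc (-1:ℝ) 1 then 1 - f x else 0)
    (hM : ∀ x, M x = ∫ t in (-1:ℝ)..1, f t * g (x + t))
    (N R : ℕ) (hN : 0 < N) (hR : 0 < R)
    (L : ℝ) (hL : L = 2 / (N : ℝ))
    (w v : ℕ → ℝ)
    (hw : ∀ j : ℕ, 1 ≤ j → j ≤ N →
      w j = (1/L) * ∫ x in (((j:ℝ) - 1) * L)..((j:ℝ) * L), M x)
    (hv : ∀ j : ℕ, 1 ≤ j → j ≤ N →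
      v j = (1/L) * ∫ x in (-(j:ℝ) * L)..(-((j:ℝ) - 1) * L), M x)
    (A : ℕ → ℝ)
    (hA : ∀ m : ℕ, 1 ≤ m → m ≤ R →
      A m = (1/2) * ∫ x in (-2:ℝ)..2, Real.cos (π * m * x / 2) * M x)
    (αp αm : ℕ → ℕ → ℝ)
    (hαp : ∀ j : ℕ, 1 ≤ j → j ≤ N → ∀ m : ℕ, 1 ≤ m → m ≤ R →
      ∀ x ∈ Icc (((j:ℝ) - 1) * L) ((j:ℝ) * L), Real.cos (π * m * x / 2) ≤ αp j m)
    (hαm : ∀ j : ℕ, 1 ≤ j → j ≤ N → ∀ m : ℕ, 1 ≤ m → m ≤ R →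
      ∀ x ∈ Icc (((j:ℝ) - 1) * L) ((j:ℝ) * L), αm j m ≤ Real.cos (π * m * x / 2)) :
    ∀ m : ℕ, 1 ≤ m → m ≤ R →
      (L/2) * ∑ j ∈ Finset.Icc 1 N, αm j m * (w j + v j) ≤ A m ∧
      A m ≤ (L/2) * ∑ j ∈ Finset.Icc 1 N, αp j m * (w j + v j) := by
  have hNpos : (0:ℝ) < N := by exact_mod_cast hN
  have hLpos : 0 < L := by rw [hL]; positivity
  have hNL : (N:ℝ) * L = 2 := by rw [hL]; field_simp
  -- measurability of g
  have hg_meas : Measurable g := by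
    have hgi : g = (Icc (-1:ℝ) 1).indicator (fun x => 1 - f x) := by
      funext x; rw [hg]; simp [Set.indicator_apply]
    rw [hgi]
    exact (measurable_const.sub hf_meas).indicator measurableSet_Icc
  -- measurability of M
  have hM_meas : Measurable M := by
    have h1 : StronglyMeasurable fun p : ℝ × ℝ => f p.2 * g (p.1 + p.2) :=
      ((hf_meas.comp measurable_snd).mul
        (hg_meas.comp (measurable_fst.add measurable_snd))).stronglyMeasurable
    have h2 := h1.integral_prod_right' (ν := volume.restrict (Set.Ioc (-1:ℝ) 1))
    have hMe : M = fun x => ∫ t in Set.Ioc (-1:ℝ) 1, f t * g (x + t) := by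
      funext x
      rw [hM x, intervalIntegral.integral_of_le (by norm_num : (-1:ℝ) ≤ 1)]
    rw [hMe]
    exact h2.measurable
  -- pointwise bounds
  have hf_nonneg : ∀ t, 0 ≤ f t := by
    intro t
    by_cases h : t ∈ Icc (-1:ℝ) 1
    · exact (hf01 t h).1
    · rw [hf_supp t h]
  have hf_le : ∀ t, f t ≤ 1 := by
    intro t
    by_cases h : t ∈ Icc (-1:ℝ) 1
    · exact (hf01 t h).2
    · rw [hf_supp t h]; norm_num
  have hg_nonneg : ∀ x, 0 ≤ g x := by
    intro x; rw [hg]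
    split
    · linarith [hf_le x]
    · exact le_refl 0
  have hg_le : ∀ x, g x ≤ 1 := by
    intro x; rw [hg]
    split
    · linarith [hf_nonneg x]
    · norm_num
  have hM_nonneg : ∀ x, 0 ≤ M x := by
    intro x; rw [hM x]
    apply intervalIntegral.integral_nonneg (by norm_num : (-1:ℝ) ≤ 1)
    intro u _
    exact mul_nonneg (hf_nonneg u) (hg_nonneg _)
  have hM_bd : ∀ x, |M x| ≤ 2 := by
    intro x; rw [hM x]
    have h := intervalIntegral.norm_integral_le_of_norm_le_const
      (a := (-1:ℝ)) (b := 1) (C := 1) (f := fun t => f t * g (x + t)) ?_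
    · have e : (1:ℝ) * |(1:ℝ) - (-1)| = 2 := by norm_num
      rw [Real.norm_eq_abs, e] at h
      exact h
    · intro t _
      rw [Real.norm_eq_abs, abs_mul]
      calc |f t| * |g (x + t)| ≤ 1 * 1 := by
            apply mul_le_mul
            · rw [abs_of_nonneg (hf_nonneg t)]; exact hf_le t
            · rw [abs_of_nonneg (hg_nonneg _)]; exact hg_le _
            · positivity
            · norm_num
        _ = 1 := by norm_num
  -- integrability helper
  have II : ∀ (F : ℝ → ℝ), Measurable F → (∀ x, |F x| ≤ 2) → ∀ a b : ℝ,
      IntervalIntegrable F volume a b := by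
    intro F hF hC a b
    constructor <;>
    · apply Measure.integrableOn_of_bounded (M := 2) measure_Ioc_lt_top.ne
        hF.aestronglyMeasurable
      filter_upwards with x using by simpa [Real.norm_eq_abs] using hC x
  have hM_int : ∀ a b : ℝ, IntervalIntegrable M volume a b := II M hM_meas hM_bd
  have hc_meas : ∀ m : ℕ, Measurable fun x : ℝ => Real.cos (π * m * x / 2) := by
    intro m; fun_prop
  have hcM_int : ∀ (m : ℕ) (a b : ℝ),
      IntervalIntegrable (fun x => Real.cos (π * m * x / 2) * M x) volume a b := by
    intro m a b
    apply II _ ((hc_meas m).mul hM_meas)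
    intro x
    simp only [Pi.mul_apply]
    rw [abs_mul]
    calc |Real.cos (π * m * x / 2)| * |M x| ≤ 1 * 2 :=
          mul_le_mul (Real.abs_cos_le_one _) (hM_bd x) (abs_nonneg _) (by norm_num)
      _ = 2 := by norm_num
  -- key comparison lemma
  have key : ∀ (m : ℕ) (a b α : ℝ), a ≤ b →
      (∀ x ∈ Icc a b, Real.cos (π * m * x / 2) ≤ α) →
      (∫ x in a..b, Real.cos (π * m * x / 2) * M x) ≤ α * ∫ x in a..b, M x := by
    intro m a b α hab hle
    have h2 : IntervalIntegrable (fun x => α * M x) volume a b := (hM_int a b).const_mul α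
    calc (∫ x in a..b, Real.cos (π * m * x / 2) * M x) ≤ ∫ x in a..b, α * M x := by
          apply intervalIntegral.integral_mono_on hab (hcM_int m a b) h2
          intro x hx
          exact mul_le_mul_of_nonneg_right (hle x hx) (hM_nonneg x)
      _ = α * ∫ x in a..b, M x := intervalIntegral.integral_const_mul α M
  have keyl : ∀ (m : ℕ) (a b α : ℝ), a ≤ b →
      (∀ x ∈ Icc a b, α ≤ Real.cos (π * m * x / 2)) →
      α * (∫ x in a..b, M x) ≤ ∫ x in a..b, Real.cos (π * m * x / 2) * M x := by
    intro m a b α hab hle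
    have h2 : IntervalIntegrable (fun x => α * M x) volume a b := (hM_int a b).const_mul α
    calc α * ∫ x in a..b, M x = ∫ x in a..b, α * M x :=
          (intervalIntegral.integral_const_mul α M).symm
      _ ≤ ∫ x in a..b, Real.cos (π * m * x / 2) * M x := by
          apply intervalIntegral.integral_mono_on hab h2 (hcM_int m a b)
          intro x hx
          exact mul_le_mul_of_nonneg_right (hle x hx) (hM_nonneg x)
  -- evenness of cos
  have hceven : ∀ (m : ℕ) (x : ℝ), Real.cos (π * m * (-x) / 2) = Real.cos (π * m * x / 2) := by
    intro m x
    rw [show π * m * (-x) / 2 = -(π * m * x / 2) by ring, Real.cos_neg]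
  intro m hm1 hm2
  -- decomposition of the full integral
  have hre : ∀ F : ℕ → ℝ, ∑ j ∈ Finset.Icc 1 N, F j = ∑ i ∈ Finset.range N, F (1 + i) := by
    intro F
    rw [← Finset.Ico_add_one_right_eq_Icc, Finset.sum_Ico_eq_sum_range]
    simp
  have hsum_pos : ∑ j ∈ Finset.Icc 1 N,
      (∫ x in (((j:ℝ) - 1) * L)..((j:ℝ) * L), Real.cos (π * m * x / 2) * M x)
      = ∫ x in (0:ℝ)..2, Real.cos (π * m * x / 2) * M x := by
    have ht := intervalIntegral.sum_integral_adjacent_intervals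
      (f := fun x => Real.cos (π * m * x / 2) * M x) (μ := volume)
      (a := fun i => (i:ℝ) * L) (n := N) (fun k _ => hcM_int m _ _)
    rw [show ((0:ℕ):ℝ) * L = 0 by norm_num, show ((N:ℕ):ℝ) * L = 2 from hNL] at ht
    rw [hre, ← ht]
    apply Finset.sum_congr rfl
    intro i _
    congr 1 <;> push_cast <;> ring
  have hsum_neg : ∑ j ∈ Finset.Icc 1 N,
      (∫ x in (-(j:ℝ) * L)..(-((j:ℝ) - 1) * L), Real.cos (π * m * x / 2) * M x)
      = ∫ x in (-2:ℝ)..0, Real.cos (π * m * x / 2) * M x := by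
    have ht := intervalIntegral.sum_integral_adjacent_intervals
      (f := fun x => Real.cos (π * m * x / 2) * M x) (μ := volume)
      (a := fun i => -((i:ℝ) * L)) (n := N) (fun k _ => hcM_int m _ _)
    rw [show -(((0:ℕ):ℝ) * L) = 0 by norm_num,
      show -(((N:ℕ):ℝ) * L) = -2 by rw [hNL]] at ht
    rw [intervalIntegral.integral_symm, ← ht, ← Finset.sum_neg_distrib, hre]
    apply Finset.sum_congr rfl
    intro i _
    rw [← intervalIntegral.integral_symm]
    congr 2 <;> push_cast <;> ring
  have decomp : (∫ x in (-2:ℝ)..2, Real.cos (π * m * x / 2) * M x)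
      = ∑ j ∈ Finset.Icc 1 N,
        ((∫ x in (((j:ℝ) - 1) * L)..((j:ℝ) * L), Real.cos (π * m * x / 2) * M x)
        + ∫ x in (-(j:ℝ) * L)..(-((j:ℝ) - 1) * L), Real.cos (π * m * x / 2) * M x) := by
    rw [Finset.sum_add_distrib, hsum_pos, hsum_neg, add_comm,
      intervalIntegral.integral_add_adjacent_intervals (hcM_int m (-2) 0) (hcM_int m 0 2)]
  -- per-interval facts
  have hjfacts : ∀ j ∈ Finset.Icc 1 N,
      ((j:ℝ) - 1) * L ≤ (j:ℝ) * L ∧ -(j:ℝ) * L ≤ -((j:ℝ) - 1) * L ∧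
      (∫ x in (((j:ℝ) - 1) * L)..((j:ℝ) * L), M x) = L * w j ∧
      (∫ x in (-(j:ℝ) * L)..(-((j:ℝ) - 1) * L), M x) = L * v j := by
    intro j hj
    rw [Finset.mem_Icc] at hj
    refine ⟨by nlinarith, by nlinarith, ?_, ?_⟩
    · rw [hw j hj.1 hj.2]; field_simp
    · rw [hv j hj.1 hj.2]; field_simp
  constructor
  · -- lower bound
    rw [hA m hm1 hm2, decomp]
    have hstep : ∀ j ∈ Finset.Icc 1 N, L * (αm j m * (w j + v j)) ≤
        (∫ x in (((j:ℝ) - 1) * L)..((j:ℝ) * L), Real.cos (π * m * x / 2) * M x)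
        + ∫ x in (-(j:ℝ) * L)..(-((j:ℝ) - 1) * L), Real.cos (π * m * x / 2) * M x := by
      intro j hj
      obtain ⟨hab, hab', hwj, hvj⟩ := hjfacts j hj
      rw [Finset.mem_Icc] at hj
      have h1 := keyl m _ _ _ hab (hαm j hj.1 hj.2 m hm1 hm2)
      have h2 : αm j m * (∫ x in (-(j:ℝ) * L)..(-((j:ℝ) - 1) * L), M x) ≤
          ∫ x in (-(j:ℝ) * L)..(-((j:ℝ) - 1) * L), Real.cos (π * m * x / 2) * M x := by
        apply keyl m _ _ _ hab'
        intro x hx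
        have hmem : -x ∈ Icc (((j:ℝ) - 1) * L) ((j:ℝ) * L) :=
          ⟨by linarith [hx.2], by linarith [hx.1]⟩
        have := hαm j hj.1 hj.2 m hm1 hm2 (-x) hmem
        rwa [hceven m x] at this
      rw [hwj] at h1
      rw [hvj] at h2
      nlinarith [h1, h2]
    calc (L/2) * ∑ j ∈ Finset.Icc 1 N, αm j m * (w j + v j)
        = (1/2) * ∑ j ∈ Finset.Icc 1 N, L * (αm j m * (w j + v j)) := by
          rw [Finset.mul_sum, Finset.mul_sum]
          apply Finset.sum_congr rfl
          intro j _; ring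
      _ ≤ (1/2) * ∑ j ∈ Finset.Icc 1 N,
          ((∫ x in (((j:ℝ) - 1) * L)..((j:ℝ) * L), Real.cos (π * m * x / 2) * M x)
          + ∫ x in (-(j:ℝ) * L)..(-((j:ℝ) - 1) * L), Real.cos (π * m * x / 2) * M x) := by
          apply mul_le_mul_of_nonneg_left (Finset.sum_le_sum hstep) (by norm_num)
  · -- upper bound
    rw [hA m hm1 hm2, decomp]
    have hstep : ∀ j ∈ Finset.Icc 1 N,
        (∫ x in (((j:ℝ) - 1) * L)..((j:ℝ) * L), Real.cos (π * m * x / 2) * M x)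
        + (∫ x in (-(j:ℝ) * L)..(-((j:ℝ) - 1) * L), Real.cos (π * m * x / 2) * M x)
        ≤ L * (αp j m * (w j + v j)) := by
      intro j hj
      obtain ⟨hab, hab', hwj, hvj⟩ := hjfacts j hj
      rw [Finset.mem_Icc] at hj
      have h1 := key m _ _ _ hab (hαp j hj.1 hj.2 m hm1 hm2)
      have h2 : (∫ x in (-(j:ℝ) * L)..(-((j:ℝ) - 1) * L), Real.cos (π * m * x / 2) * M x)
          ≤ αp j m * ∫ x in (-(j:ℝ) * L)..(-((j:ℝ) - 1) * L), M x := by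
        apply key m _ _ _ hab'
        intro x hx
        have hmem : -x ∈ Icc (((j:ℝ) - 1) * L) ((j:ℝ) * L) :=
          ⟨by linarith [hx.2], by linarith [hx.1]⟩
        have := hαp j hj.1 hj.2 m hm1 hm2 (-x) hmem
        rwa [hceven m x] at this
      rw [hwj] at h1
      rw [hvj] at h2
      nlinarith [h1, h2]
    calc (1/2) * ∑ j ∈ Finset.Icc 1 N,
        ((∫ x in (((j:ℝ) - 1) * L)..((j:ℝ) * L), Real.cos (π * m * x / 2) * M x)
        + ∫ x in (-(j:ℝ) * L)..(-((j:ℝ) - 1) * L), Real.cos (π * m * x / 2) * M x)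
        ≤ (1/2) * ∑ j ∈ Finset.Icc 1 N, L * (αp j m * (w j + v j)) := by
          apply mul_le_mul_of_nonneg_left (Finset.sum_le_sum hstep) (by norm_num)
      _ = (L/2) * ∑ j ∈ Finset.Icc 1 N, αp j m * (w j + v j) := by
          rw [Finset.mul_sum, Finset.mul_sum]
          apply Finset.sum_congr rfl
          intro j _; ring
end
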